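/- arXiv:2302.13630 — 5 statements merged into one kernel-verified Lean document; each statement's English description precedes it below -/
import Mathlib

section
/- Let s : E → M be a locally trivial continuous Banach bundle over a locally compact Hausdorff space M, and let F ⊂ E be a subset such that F ∩ E_m is a linear subspace of E_m for every m ∈ M. Then the restriction s|_F : F → M is a locally trivial vector bundle if and only if F is closed in E and s|_F is an open map. -/
set_option linter.unusedSectionVars false


open Topology

universe u v

variable {M : Type u} [TopologicalSpace M]

/-- A continuous Banach bundle over `M` (total space `Σ m, F m` with a given topology). -/
structure IsContinuousBanachBundle (F : M → Type v) [∀ m, NormedAddCommGroup (F m)]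
    [∀ m, NormedSpace ℂ (F m)] [∀ m, CompleteSpace (F m)]
    [TopologicalSpace (Σ m, F m)] : Prop where
  continuous_proj : Continuous (Sigma.fst : (Σ m, F m) → M)
  isOpenMap_proj : IsOpenMap (Sigma.fst : (Σ m, F m) → M)
  continuous_add : @Continuous (Σ m, F m × F m) (Σ m, F m)
    (TopologicalSpace.induced
      (fun vw : Σ m, F m × F m =>
        ((⟨vw.1, vw.2.1⟩ : Σ m, F m), (⟨vw.1, vw.2.2⟩ : Σ m, F m)))
      inferInstance)
    inferInstance
    (fun vw => ⟨vw.1, vw.2.1 + vw.2.2⟩)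
  continuous_smul : Continuous
    (fun cv : ℂ × (Σ m, F m) => (⟨cv.2.1, cv.1 • cv.2.2⟩ : Σ m, F m))
  continuous_norm : Continuous (fun v : Σ m, F m => ‖v.2‖)
  nhds_basis_zero : ∀ (m : M) (V : Set (Σ m', F m')),
    V ∈ 𝓝 (⟨m, 0⟩ : Σ m', F m') →
      ∃ O ∈ 𝓝 m, ∃ ε > (0 : ℝ), {v : Σ m', F m' | v.1 ∈ O ∧ ‖v.2‖ < ε} ⊆ V

/-- Local triviality of a continuous Banach bundle (with norm equivalence). -/
def IsLocallyTrivialBanachBundle (F : M → Type v) [∀ m, NormedAddCommGroup (F m)]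
    [∀ m, NormedSpace ℂ (F m)] [TopologicalSpace (Σ m, F m)] : Prop :=
  ∀ m₀ : M, ∃ C : Set M, IsCompact C ∧ C ∈ 𝓝 m₀ ∧ ∃ (d : ℕ)
    (Φ : {v : Σ m, F m // v.1 ∈ C} ≃ₜ C × EuclideanSpace ℂ (Fin d)),
      (∀ v, ((Φ v).1 : M) = v.1.1) ∧
      (∀ (m : M) (hm : m ∈ C) (x y : F m),
        (Φ ⟨⟨m, x + y⟩, hm⟩).2 = (Φ ⟨⟨m, x⟩, hm⟩).2 + (Φ ⟨⟨m, y⟩, hm⟩).2) ∧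
      (∀ (m : M) (hm : m ∈ C) (c : ℂ) (x : F m),
        (Φ ⟨⟨m, c • x⟩, hm⟩).2 = c • (Φ ⟨⟨m, x⟩, hm⟩).2) ∧
      ∃ c₁ c₂ : ℝ, 0 < c₁ ∧ 0 < c₂ ∧
        ∀ v : {v : Σ m, F m // v.1 ∈ C},
          c₁ * ‖v.1.2‖ ≤ ‖(Φ v).2‖ ∧ ‖(Φ v).2‖ ≤ c₂ * ‖v.1.2‖

/-- Local triviality of a vector bundle in the usual sense (no norm condition). -/
def IsLocallyTrivialVectorBundle (F : M → Type v) [∀ m, AddCommGroup (F m)]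
    [∀ m, Module ℂ (F m)] [TopologicalSpace (Σ m, F m)] : Prop :=
  ∀ m₀ : M, ∃ C : Set M, IsCompact C ∧ C ∈ 𝓝 m₀ ∧ ∃ (d : ℕ)
    (Φ : {v : Σ m, F m // v.1 ∈ C} ≃ₜ C × EuclideanSpace ℂ (Fin d)),
      (∀ v, ((Φ v).1 : M) = v.1.1) ∧
      (∀ (m : M) (hm : m ∈ C) (x y : F m),
        (Φ ⟨⟨m, x + y⟩, hm⟩).2 = (Φ ⟨⟨m, x⟩, hm⟩).2 + (Φ ⟨⟨m, y⟩, hm⟩).2) ∧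
      (∀ (m : M) (hm : m ∈ C) (c : ℂ) (x : F m),
        (Φ ⟨⟨m, c • x⟩, hm⟩).2 = c • (Φ ⟨⟨m, x⟩, hm⟩).2)

section Triv
variable {M : Type u} [TopologicalSpace M] {C : Set M}
variable {A : M → Type v} [∀ m, AddCommGroup (A m)] [∀ m, Module ℂ (A m)]
  [TopologicalSpace (Σ m, A m)] {G : Type*} [AddCommGroup G] [Module ℂ G]
  [TopologicalSpace G]

variable (Φ : {v : Σ m, A m // v.1 ∈ C} ≃ₜ C × G)
  (h1 : ∀ v, ((Φ v).1 : M) = v.1.1)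
  (hadd : ∀ (m : M) (hm : m ∈ C) (x y : A m),
    (Φ ⟨⟨m, x + y⟩, hm⟩).2 = (Φ ⟨⟨m, x⟩, hm⟩).2 + (Φ ⟨⟨m, y⟩, hm⟩).2)
  (hsmul : ∀ (m : M) (hm : m ∈ C) (c : ℂ) (x : A m),
    (Φ ⟨⟨m, c • x⟩, hm⟩).2 = c • (Φ ⟨⟨m, x⟩, hm⟩).2)

/-- The fiberwise linear map of a fiberwise-linear trivialization. -/
noncomputable def trivLin (m : M) (hm : m ∈ C) : A m →ₗ[ℂ] G where
  toFun := fun x => (Φ ⟨⟨m, x⟩, hm⟩).2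
  map_add' := hadd m hm
  map_smul' := hsmul m hm

lemma trivLin_apply (m : M) (hm : m ∈ C) (x : A m) :
    trivLin Φ hadd hsmul m hm x = (Φ ⟨⟨m, x⟩, hm⟩).2 := rfl

include h1 in
lemma trivFst (v : {v : Σ m, A m // v.1 ∈ C}) (h : v.1.1 ∈ C) :
    (Φ v).1 = ⟨v.1.1, h⟩ := Subtype.ext (h1 v)

include h1 in
lemma trivLin_injective (m : M) (hm : m ∈ C) :
    Function.Injective (trivLin Φ hadd hsmul m hm) := by
  intro x y hxy
  have hfst : (Φ ⟨⟨m, x⟩, hm⟩).1 = (Φ ⟨⟨m, y⟩, hm⟩).1 := by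
    rw [trivFst Φ h1 _ hm, trivFst Φ h1 _ hm]
  have := Φ.injective (Prod.ext hfst hxy)
  simpa using this

include h1 in
lemma trivLin_surjective (m : M) (hm : m ∈ C) :
    Function.Surjective (trivLin Φ hadd hsmul m hm) := by
  intro ξ
  obtain ⟨⟨⟨m', x⟩, hm'⟩, hv⟩ : ∃ v, Φ.symm ((⟨m, hm⟩ : C), ξ) = v := ⟨_, rfl⟩
  have key : Φ ⟨⟨m', x⟩, hm'⟩ = ((⟨m, hm⟩ : C), ξ) := by
    rw [← hv, Φ.apply_symm_apply]
  have hb : m' = m := by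
    have := h1 ⟨⟨m', x⟩, hm'⟩
    rw [key] at this
    exact this.symm
  subst hb
  exact ⟨x, congrArg Prod.snd key⟩

/-- The fiberwise linear equivalence of a fiberwise-linear trivialization. -/
noncomputable def trivEquiv (m : M) (hm : m ∈ C) : A m ≃ₗ[ℂ] G :=
  LinearEquiv.ofBijective (trivLin Φ hadd hsmul m hm)
    ⟨trivLin_injective Φ h1 hadd hsmul m hm, trivLin_surjective Φ h1 hadd hsmul m hm⟩

end Triv

section LinAlg
variable {d : ℕ} (V₀ : Submodule ℂ (EuclideanSpace ℂ (Fin d)))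

lemma projA {ξ : EuclideanSpace ℂ (Fin d)} (h : ∃ η ∈ V₀, ‖ξ - η‖ ≤ ‖ξ‖ / 4) :
    ‖ξ‖ ≤ 2 * ‖(Submodule.orthogonalProjectionOnto V₀ ξ : EuclideanSpace ℂ (Fin d))‖ := by
  obtain ⟨η, hη, hd⟩ := h
  have hP : ∀ z, ‖(Submodule.orthogonalProjectionOnto V₀ z : EuclideanSpace ℂ (Fin d))‖ ≤ ‖z‖ := by
    intro z
    calc ‖(Submodule.orthogonalProjectionOnto V₀ z : EuclideanSpace ℂ (Fin d))‖
        = ‖Submodule.orthogonalProjectionOnto V₀ z‖ := rfl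
      _ ≤ ‖Submodule.orthogonalProjectionOnto V₀‖ * ‖z‖ := (Submodule.orthogonalProjectionOnto V₀).le_opNorm z
      _ ≤ 1 * ‖z‖ := by
          gcongr
          exact Submodule.orthogonalProjectionOnto_norm_le V₀
      _ = ‖z‖ := one_mul _
  have hPη : (Submodule.orthogonalProjectionOnto V₀ η : EuclideanSpace ℂ (Fin d)) = η := by
    rw [Submodule.coe_orthogonalProjectionOnto_apply, Submodule.starProjection_eq_self_iff]; exact hη
  have h1 : ‖(Submodule.orthogonalProjectionOnto V₀ ξ : EuclideanSpace ℂ (Fin d))‖ ≥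
      ‖η‖ - ‖ξ - η‖ := by
    have : (Submodule.orthogonalProjectionOnto V₀ η : EuclideanSpace ℂ (Fin d))
        = (Submodule.orthogonalProjectionOnto V₀ ξ : EuclideanSpace ℂ (Fin d))
          - (Submodule.orthogonalProjectionOnto V₀ (ξ - η) : EuclideanSpace ℂ (Fin d)) := by
      rw [map_sub]; push_cast; abel
    have h2 := hP (ξ - η)
    have h3 : ‖η‖ ≤ ‖(Submodule.orthogonalProjectionOnto V₀ ξ : EuclideanSpace ℂ (Fin d))‖
        + ‖(Submodule.orthogonalProjectionOnto V₀ (ξ - η) : EuclideanSpace ℂ (Fin d))‖ :=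
      calc ‖η‖ = ‖((Submodule.orthogonalProjectionOnto V₀ ξ : EuclideanSpace ℂ (Fin d))
            - (Submodule.orthogonalProjectionOnto V₀ (ξ - η) : EuclideanSpace ℂ (Fin d)))‖ := by
              rw [← this, hPη]
        _ ≤ _ := norm_sub_le _ _
    linarith
  have h4 : ‖η‖ ≥ ‖ξ‖ - ‖ξ - η‖ := by
    have := norm_sub_norm_le ξ η
    linarith
  linarith

lemma projB : ∃ δ > (0:ℝ), ∃ bvec : Fin (Module.finrank ℂ V₀) → EuclideanSpace ℂ (Fin d),
    (∀ i, bvec i ∈ V₀) ∧ ∀ (T : Submodule ℂ (EuclideanSpace ℂ (Fin d))),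
      (∀ i, ∃ ξ ∈ T, ‖ξ - bvec i‖ < δ) → ∀ η ∈ V₀, ∃ ξ ∈ T,
        (Submodule.orthogonalProjectionOnto V₀ ξ : EuclideanSpace ℂ (Fin d)) = η := by
  classical
  set k := Module.finrank ℂ V₀ with hk
  let b : Module.Basis (Fin k) ℂ V₀ := Module.finBasis ℂ V₀
  let f₀ : Fin k → EuclideanSpace ℂ (Fin d) := fun i => (b i : EuclideanSpace ℂ (Fin d))
  have hf₀ : LinearIndependent ℂ f₀ :=
    b.linearIndependent.map' V₀.subtype (Submodule.ker_subtype V₀)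
  have hopen : IsOpen {f : Fin k → EuclideanSpace ℂ (Fin d) | LinearIndependent ℂ f} :=
    isOpen_setOf_linearIndependent
  obtain ⟨δ, hδ, hball⟩ := Metric.isOpen_iff.mp hopen f₀ hf₀
  refine ⟨δ, hδ, f₀, fun i => (b i).2, ?_⟩
  intro T hT η hη
  choose ξ hξT hξd using hT
  set g : Fin k → V₀ := fun i => Submodule.orthogonalProjectionOnto V₀ (ξ i) with hg
  have hgf : LinearIndependent ℂ g := by
    have hmem : (fun i => (g i : EuclideanSpace ℂ (Fin d))) ∈
        Metric.ball f₀ δ := by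
      rw [Metric.mem_ball, dist_pi_lt_iff hδ]
      intro i
      have : (g i : EuclideanSpace ℂ (Fin d)) - f₀ i
          = (Submodule.orthogonalProjectionOnto V₀ (ξ i - f₀ i) : EuclideanSpace ℂ (Fin d)) := by
        have hPf : (Submodule.orthogonalProjectionOnto V₀ (f₀ i) : EuclideanSpace ℂ (Fin d)) = f₀ i := by
          rw [Submodule.coe_orthogonalProjectionOnto_apply, Submodule.starProjection_eq_self_iff]; exact (b i).2
        rw [map_sub, Submodule.coe_sub, hPf]
      rw [dist_eq_norm, this]
      calc ‖(Submodule.orthogonalProjectionOnto V₀ (ξ i - f₀ i) : EuclideanSpace ℂ (Fin d))‖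
          ≤ ‖Submodule.orthogonalProjectionOnto V₀‖ * ‖ξ i - f₀ i‖ :=
            (Submodule.orthogonalProjectionOnto V₀).le_opNorm _
        _ ≤ 1 * ‖ξ i - f₀ i‖ := by
            gcongr
            exact Submodule.orthogonalProjectionOnto_norm_le V₀
        _ < δ := by rw [one_mul]; exact hξd i
    have := hball hmem
    exact LinearIndependent.of_comp V₀.subtype this
  have hspan : Submodule.span ℂ (Set.range g) = ⊤ :=
    hgf.span_eq_top_of_card_eq_finrank' (by simp [hk])
  have hη' : (⟨η, hη⟩ : V₀) ∈ Submodule.span ℂ (Set.range g) := by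
    rw [hspan]; trivial
  rw [Finsupp.mem_span_range_iff_exists_finsupp] at hη'
  obtain ⟨c, hc⟩ := hη'
  refine ⟨c.sum fun i ci => ci • ξ i, ?_, ?_⟩
  · exact Submodule.sum_smul_mem T c (fun i _ => hξT i)
  · have : Submodule.orthogonalProjectionOnto V₀ (c.sum fun i ci => ci • ξ i)
        = (⟨η, hη⟩ : V₀) := by
      rw [← hc, map_finsuppSum]
      exact Finsupp.sum_congr (fun i _ => map_smul _ _ _)
    rw [this]

end LinAlg

section TopHelpers

lemma mem_closure_inter_nhds {X : Type*} [TopologicalSpace X] {s t : Set X} {x : X}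
    (hx : x ∈ closure s) (ht : t ∈ 𝓝 x) : x ∈ closure (s ∩ t) := by
  rw [mem_closure_iff_nhds] at hx ⊢
  intro u hu
  obtain ⟨y, hy1, hy2⟩ := hx (u ∩ t) (Filter.inter_mem hu ht)
  exact ⟨y, hy1.1, hy2, hy1.2⟩

lemma isClosedMap_of_norm_proper {X Z B : Type*} [TopologicalSpace X]
    [TopologicalSpace Z] [T2Space Z] [NormedAddCommGroup B]
    (f : X → Z × B) (hf : Continuous f)
    (hprop : ∀ R : ℝ, IsCompact {x | ‖(f x).2‖ ≤ R}) : IsClosedMap f := by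
  intro A hA
  apply isClosed_of_closure_subset
  intro p hp
  set R : ℝ := ‖p.2‖ + 1 with hR
  have hNopen : IsOpen {q : Z × B | ‖q.2‖ < R} :=
    isOpen_lt (continuous_snd.norm) continuous_const
  have hNmem : {q : Z × B | ‖q.2‖ < R} ∈ 𝓝 p :=
    hNopen.mem_nhds (by simp [hR])
  have hK : IsCompact (A ∩ {x | ‖(f x).2‖ ≤ R}) := (hprop R).inter_left hA
  have himg : IsClosed (f '' (A ∩ {x | ‖(f x).2‖ ≤ R})) := (hK.image hf).isClosed
  have hsub : f '' A ∩ {q : Z × B | ‖q.2‖ < R} ⊆ f '' (A ∩ {x | ‖(f x).2‖ ≤ R}) := by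
    rintro q ⟨⟨x, hx, rfl⟩, hq⟩
    exact ⟨x, ⟨hx, show ‖(f x).2‖ ≤ R from le_of_lt hq⟩, rfl⟩
  have := mem_closure_inter_nhds hp hNmem
  have := (closure_mono hsub) this
  rw [himg.closure_eq] at this
  exact Set.image_mono Set.inter_subset_left this

lemma t2_of_local {X : Type*} [TopologicalSpace X] {M' : Type*} [TopologicalSpace M']
    [T2Space M'] (π : X → M') (hπ : Continuous π)
    (h : ∀ m : M', ∃ C : Set M', C ∈ 𝓝 m ∧ T2Space {x : X // π x ∈ C}) : T2Space X := by
  constructor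
  intro v w hvw
  by_cases hb : π v = π w
  · obtain ⟨C, hC, hT2⟩ := h (π v)
    have hvC : π v ∈ C := mem_of_mem_nhds hC
    have hwC : π w ∈ C := hb ▸ hvC
    have hne : (⟨v, hvC⟩ : {x : X // π x ∈ C}) ≠ ⟨w, hwC⟩ := by
      simp only [ne_eq, Subtype.mk.injEq]; exact hvw
    obtain ⟨U, V', hU, hV', hvU, hwV', hUV⟩ := hT2.t2 hne
    obtain ⟨U₀, hU₀, hU₀eq⟩ := isOpen_induced_iff.mp hU
    obtain ⟨V₀, hV₀, hV₀eq⟩ := isOpen_induced_iff.mp hV'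
    have hPopen : IsOpen (π ⁻¹' interior C) := (isOpen_interior).preimage hπ
    refine ⟨U₀ ∩ π ⁻¹' interior C, V₀ ∩ π ⁻¹' interior C,
      hU₀.inter hPopen, hV₀.inter hPopen, ?_, ?_, ?_⟩
    · constructor
      · have : (⟨v, hvC⟩ : {x : X // π x ∈ C}) ∈ U := hvU
        rw [← hU₀eq] at this; exact this
      · exact mem_interior_iff_mem_nhds.mpr hC
    · constructor
      · have : (⟨w, hwC⟩ : {x : X // π x ∈ C}) ∈ V' := hwV'
        rw [← hV₀eq] at this; exact this
      · exact mem_interior_iff_mem_nhds.mpr (hb ▸ hC)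
    · rw [Set.disjoint_iff_inter_eq_empty]
      ext x
      simp only [Set.mem_inter_iff, Set.mem_empty_iff_false, iff_false]
      rintro ⟨⟨hx1, hx2⟩, hx3, _⟩
      have hxC : π x ∈ C := interior_subset hx2
      have : (⟨x, hxC⟩ : {x : X // π x ∈ C}) ∈ U ∩ V' := by
        constructor
        · rw [← hU₀eq]; exact hx1
        · rw [← hV₀eq]; exact hx3
      rw [Set.disjoint_iff_inter_eq_empty] at hUV
      rw [hUV] at this
      exact this
  · obtain ⟨U, V', hU, hV', hvU, hwV', hUV⟩ := t2_separation hb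
    exact ⟨π ⁻¹' U, π ⁻¹' V', hU.preimage hπ, hV'.preimage hπ, hvU, hwV',
      hUV.preimage π⟩

end TopHelpers


set_option maxHeartbeats 1000000 in
/-- Let `s : E → M` be a locally trivial continuous Banach bundle over a locally
compact Hausdorff space `M` and `F ⊆ E` a subset meeting every fiber in a linear
subspace (given here as a family of submodules `W m ≤ E_m`). Then the restriction
`s|_F : F → M` (with the subspace topology on `F = Σ m, W m`) is a locally trivial
vector bundle if and only if `F` is closed in `E` and `s|_F` is an open map. -/
theorem subbundle_locallyTrivial_iff_closed_and_open
    [LocallyCompactSpace M] [T2Space M]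
    {F : M → Type v} [∀ m, NormedAddCommGroup (F m)] [∀ m, NormedSpace ℂ (F m)]
    [∀ m, CompleteSpace (F m)] [TopologicalSpace (Σ m, F m)]
    (hB : IsContinuousBanachBundle F) (hLT : IsLocallyTrivialBanachBundle F)
    (W : ∀ m, Submodule ℂ (F m)) :
    @IsLocallyTrivialVectorBundle M _ (fun m => ↥(W m)) _ _
        (TopologicalSpace.induced
          (fun v : Σ m, ↥(W m) => (⟨v.1, (v.2 : F v.1)⟩ : Σ m, F m))
          inferInstance) ↔
      IsClosed {v : Σ m, F m | v.2 ∈ W v.1} ∧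
        @IsOpenMap (Σ m, ↥(W m)) M
          (TopologicalSpace.induced
            (fun v : Σ m, ↥(W m) => (⟨v.1, (v.2 : F v.1)⟩ : Σ m, F m))
            inferInstance) _
          Sigma.fst := by
  letI tW : TopologicalSpace (Σ m, ↥(W m)) :=
    TopologicalSpace.induced
      (fun v : Σ m, ↥(W m) => (⟨v.1, (v.2 : F v.1)⟩ : Σ m, F m)) inferInstance
  have hι_cont : Continuous
      (fun v : Σ m, ↥(W m) => (⟨v.1, (v.2 : F v.1)⟩ : Σ m, F m)) :=
    continuous_induced_dom
  haveI hT2 : T2Space (Σ m, F m) := by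
    refine t2_of_local Sigma.fst hB.continuous_proj (fun m => ?_)
    obtain ⟨C, hCcpt, hCn, d, Φ, -⟩ := hLT m
    exact ⟨C, hCn, Φ.isEmbedding.t2Space⟩
  constructor
  · -- forward direction
    intro hV
    constructor
    · -- closedness
      apply isClosed_of_closure_subset
      intro v hv
      obtain ⟨C, hCcpt, hCn, k, Ψ, hΨ1, hΨadd, hΨsmul⟩ := hV v.1
      set nn : {w : Σ m, ↥(W m) // w.1 ∈ C} → ℝ :=
        fun w => ‖(w.1.2 : F w.1.1)‖ with hnn
      have hnn_cont : Continuous nn :=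
        hB.continuous_norm.comp (hι_cont.comp continuous_subtype_val)
      have key_smul : ∀ (w : {w : Σ m, ↥(W m) // w.1 ∈ C}) (c : ℂ),
          Ψ ⟨⟨w.1.1, c • w.1.2⟩, w.2⟩ = ((Ψ w).1, c • (Ψ w).2) := by
        rintro ⟨⟨m, x⟩, hm⟩ c
        refine Prod.ext ?_ (hΨsmul m hm c x)
        rw [trivFst Ψ hΨ1 _ hm, trivFst Ψ hΨ1 _ hm]
      have hscale : ∀ (p : ↥C × EuclideanSpace ℂ (Fin k)) (c : ℂ),
          nn (Ψ.symm (p.1, c • p.2)) = ‖c‖ * nn (Ψ.symm p) := by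
        intro p c
        have hp : ((Ψ (Ψ.symm p)).1, c • (Ψ (Ψ.symm p)).2) = (p.1, c • p.2) := by
          rw [Ψ.apply_symm_apply]
        rw [← hp, ← key_smul (Ψ.symm p) c, Ψ.symm_apply_apply]
        have h1 : nn ⟨⟨(Ψ.symm p).1.1, c • (Ψ.symm p).1.2⟩, (Ψ.symm p).2⟩
            = ‖((c • (Ψ.symm p).1.2 : ↥(W (Ψ.symm p).1.1)) : F (Ψ.symm p).1.1)‖ := rfl
        have h2 : nn (Ψ.symm p) = ‖(((Ψ.symm p).1.2 : ↥(W (Ψ.symm p).1.1))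
            : F (Ψ.symm p).1.1)‖ := rfl
        rw [h1, h2, Submodule.coe_smul, norm_smul]
      have hCne : C.Nonempty := ⟨v.1, mem_of_mem_nhds hCn⟩
      obtain ⟨c₁, hc₁pos, hc₁⟩ : ∃ c₁ > (0:ℝ),
          ∀ q : ↥C × EuclideanSpace ℂ (Fin k), c₁ * ‖q.2‖ ≤ nn (Ψ.symm q) := by
        by_cases hemp : (Metric.sphere (0 : EuclideanSpace ℂ (Fin k)) 1).Nonempty
        · have hKcpt : IsCompact ((Set.univ : Set ↥C) ×ˢ
              Metric.sphere (0 : EuclideanSpace ℂ (Fin k)) 1) :=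
            (isCompact_iff_isCompact_univ.mp hCcpt).prod (isCompact_sphere _ _)
          have hKne : ((Set.univ : Set ↥C) ×ˢ
              Metric.sphere (0 : EuclideanSpace ℂ (Fin k)) 1).Nonempty := by
            obtain ⟨c, hc⟩ := hCne
            obtain ⟨ξ, hξ⟩ := hemp
            exact ⟨(⟨c, hc⟩, ξ), Set.mem_prod.mpr ⟨trivial, hξ⟩⟩
          have hcont : Continuous (fun q : ↥C × EuclideanSpace ℂ (Fin k) =>
              nn (Ψ.symm q)) := hnn_cont.comp Ψ.symm.continuous
          obtain ⟨q₀, hq₀K, hmin⟩ := hKcpt.exists_isMinOn hKne hcont.continuousOn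
          refine ⟨nn (Ψ.symm q₀), ?_, ?_⟩
          · obtain ⟨⟨⟨mq, xq⟩, hmq⟩, hwq⟩ : ∃ w, Ψ.symm q₀ = w := ⟨_, rfl⟩
            have hnnq : nn (Ψ.symm q₀) = ‖(xq : F mq)‖ := by rw [hwq]
            rcases lt_or_eq_of_le (norm_nonneg (xq : F mq)) with h | h
            · rw [hnnq]; exact h
            · exfalso
              have hx0' : xq = 0 := Subtype.ext (norm_eq_zero.mp h.symm)
              have hq₀2 : q₀.2 = 0 := by
                have : q₀ = Ψ ⟨⟨mq, xq⟩, hmq⟩ := by rw [← hwq, Ψ.apply_symm_apply]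
                rw [this, hx0']
                simpa using hΨsmul mq hmq 0 0
              have hsph := hq₀K.2
              rw [Metric.mem_sphere, dist_zero_right, hq₀2, norm_zero] at hsph
              norm_num at hsph
          · intro q
            by_cases hq2 : q.2 = 0
            · rw [hq2, norm_zero, mul_zero]
              exact norm_nonneg _
            · set u := ‖q.2‖⁻¹ • q.2 with hu
              have hunorm : ‖u‖ = 1 := norm_smul_inv_norm hq2
              have huK : (q.1, u) ∈ (Set.univ : Set ↥C) ×ˢ
                  Metric.sphere (0 : EuclideanSpace ℂ (Fin k)) 1 := by
                refine Set.mem_prod.mpr ⟨trivial, ?_⟩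
                rw [Metric.mem_sphere, dist_zero_right, hunorm]
              have hq : q = (q.1, (‖q.2‖ : ℂ) • u) := by
                refine Prod.ext rfl ?_
                rw [hu, Complex.coe_smul, smul_inv_smul₀ (norm_ne_zero_iff.mpr hq2)]
              calc nn (Ψ.symm q₀) * ‖q.2‖ ≤ nn (Ψ.symm (q.1, u)) * ‖q.2‖ := by
                    have := hmin huK
                    have h0 : (0:ℝ) ≤ ‖q.2‖ := norm_nonneg _
                    exact mul_le_mul_of_nonneg_right this h0
                _ = ‖(‖q.2‖ : ℂ)‖ * nn (Ψ.symm (q.1, u)) := by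
                    rw [Complex.norm_real, norm_norm, mul_comm]
                _ = nn (Ψ.symm (q.1, (‖q.2‖ : ℂ) • u)) := (hscale (q.1, u) _).symm
                _ = nn (Ψ.symm q) := by rw [← hq]
        · refine ⟨1, one_pos, fun q => ?_⟩
          have hq2 : q.2 = 0 := by
            by_contra h
            exact hemp ⟨‖q.2‖⁻¹ • q.2, by
              rw [Metric.mem_sphere, dist_zero_right]
              exact norm_smul_inv_norm h⟩
          rw [hq2, norm_zero, mul_zero]
          exact norm_nonneg _
      set R : ℝ := ‖v.2‖ + 1 with hR
      set KK : Set (Σ m, F m) :=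
        (fun w : {w : Σ m, ↥(W m) // w.1 ∈ C} => (⟨w.1.1, (w.1.2 : F w.1.1)⟩ : Σ m, F m)) ''
          (Ψ.symm '' ((Set.univ : Set ↥C) ×ˢ Metric.closedBall 0 (R / c₁))) with hKK
      have hKKcpt : IsCompact KK := by
        refine IsCompact.image (IsCompact.image ?_ Ψ.symm.continuous) ?_
        · exact (isCompact_iff_isCompact_univ.mp hCcpt).prod (isCompact_closedBall _ _)
        · exact hι_cont.comp continuous_subtype_val
      have hKKsub : KK ⊆ {u : Σ m, F m | u.2 ∈ W u.1} := by
        rintro _ ⟨w', _, rfl⟩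
        exact (w'.1.2).2
      have hN : (Sigma.fst ⁻¹' (interior C) ∩ {u : Σ m, F m | ‖u.2‖ < R}) ∈ 𝓝 v := by
        refine IsOpen.mem_nhds ?_ ?_
        · exact (isOpen_interior.preimage hB.continuous_proj).inter
            (isOpen_lt hB.continuous_norm continuous_const)
        · exact ⟨mem_interior_iff_mem_nhds.mpr hCn, by simp [hR]⟩
      have hsub : {u : Σ m, F m | u.2 ∈ W u.1} ∩
          (Sigma.fst ⁻¹' (interior C) ∩ {u | ‖u.2‖ < R}) ⊆ KK := by
        rintro ⟨m, x⟩ ⟨hx, hmi, hnorm⟩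
        have hmC : m ∈ C := interior_subset hmi
        set w : {w : Σ m, ↥(W m) // w.1 ∈ C} := ⟨⟨m, ⟨x, hx⟩⟩, hmC⟩ with hw
        have hq2 : ‖(Ψ w).2‖ ≤ R / c₁ := by
          have := hc₁ (Ψ w)
          rw [Ψ.symm_apply_apply] at this
          have hnnw : nn w = ‖x‖ := rfl
          rw [hnnw] at this
          have hnorm' : ‖x‖ < R := hnorm
          rw [le_div_iff₀ hc₁pos]
          nlinarith [this, hnorm']
        refine ⟨w, ⟨Ψ w, Set.mem_prod.mpr ⟨trivial, ?_⟩, Ψ.symm_apply_apply w⟩, rfl⟩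
        rw [Metric.mem_closedBall, dist_zero_right]
        exact hq2
      have hvmem : v ∈ closure ({u : Σ m, F m | u.2 ∈ W u.1} ∩
          (Sigma.fst ⁻¹' (interior C) ∩ {u | ‖u.2‖ < R})) :=
        mem_closure_inter_nhds hv hN
      have := (closure_mono hsub) hvmem
      rw [hKKcpt.isClosed.closure_eq] at this
      exact hKKsub this
    · -- openness
      intro U hU
      rw [isOpen_iff_mem_nhds]
      rintro _ ⟨⟨m, y⟩, hyU, rfl⟩
      obtain ⟨C, hCcpt, hCn, k, Ψ, hΨ1, hΨadd, hΨsmul⟩ := hV m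
      have hmC : m ∈ C := mem_of_mem_nhds hCn
      have hUopen : IsOpen (Ψ '' {w'' : {w : Σ m, ↥(W m) // w.1 ∈ C} |
          (w'' : Σ m, ↥(W m)) ∈ U ∧ w''.1.1 ∈ interior C}) := by
        apply Ψ.isOpenMap
        refine IsOpen.inter (hU.preimage continuous_subtype_val) ?_
        exact isOpen_interior.preimage
          ((hB.continuous_proj.comp hι_cont).comp continuous_subtype_val)
      have hqmem : Ψ ⟨⟨m, y⟩, hmC⟩ ∈ Ψ '' {w'' : {w : Σ m, ↥(W m) // w.1 ∈ C} |
          (w'' : Σ m, ↥(W m)) ∈ U ∧ w''.1.1 ∈ interior C} :=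
        ⟨⟨⟨m, y⟩, hmC⟩, ⟨hyU, mem_interior_iff_mem_nhds.mpr hCn⟩, rfl⟩
      obtain ⟨u, vset, hu, hv, hq1u, hq2v, huv⟩ :=
        isOpen_prod_iff.mp hUopen (Ψ ⟨⟨m, y⟩, hmC⟩).1 (Ψ ⟨⟨m, y⟩, hmC⟩).2 hqmem
      obtain ⟨u₀, hu₀, hu₀eq⟩ := isOpen_induced_iff.mp hu
      refine mem_nhds_iff.mpr ⟨u₀ ∩ interior C, ?_, hu₀.inter isOpen_interior, ?_, ?_⟩
      · rintro m'' ⟨hm''u₀, hm''i⟩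
        have hm''C : m'' ∈ C := interior_subset hm''i
        have hpmem : ((⟨m'', hm''C⟩ : ↥C), (Ψ ⟨⟨m, y⟩, hmC⟩).2) ∈
            u ×ˢ vset := by
          refine Set.mem_prod.mpr ⟨?_, hq2v⟩
          rw [← hu₀eq]
          exact hm''u₀
        obtain ⟨w'', ⟨hw''U, _⟩, hw''eq⟩ := huv hpmem
        refine ⟨(w'' : Σ m, ↥(W m)), hw''U, ?_⟩
        have h1 := hΨ1 w''
        rw [hw''eq] at h1
        exact h1.symm
      · have h1 := hΨ1 ⟨⟨m, y⟩, hmC⟩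
        have h2 : ((Ψ ⟨⟨m, y⟩, hmC⟩).1 : M) ∈ u₀ := by
          rw [← hu₀eq] at hq1u; exact hq1u
        rw [h1] at h2
        exact h2
      · exact mem_interior_iff_mem_nhds.mpr hCn
  · -- backward direction
    rintro ⟨hcl, hop⟩
    classical
    intro m₀
    obtain ⟨C, hCcpt, hCn, d, Φ, hΦ1, hΦadd, hΦsmul, c₁, c₂, hc₁, hc₂, hbound⟩ := hLT m₀
    have hm₀C : m₀ ∈ C := mem_of_mem_nhds hCn
    set L : ∀ m, m ∈ C → (F m →ₗ[ℂ] EuclideanSpace ℂ (Fin d)) :=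
      fun m hm => trivLin Φ hΦadd hΦsmul m hm with hL
    set V : M → Submodule ℂ (EuclideanSpace ℂ (Fin d)) :=
      fun m => if hm : m ∈ C then (W m).map (L m hm) else ⊥ with hVdef
    have hVC : ∀ (m : M) (hm : m ∈ C), V m = (W m).map (L m hm) := by
      intro m hm
      simp only [hVdef, dif_pos hm]
    set V₀ : Submodule ℂ (EuclideanSpace ℂ (Fin d)) := V m₀ with hV₀def
    set P := Submodule.orthogonalProjectionOnto V₀ with hP
    -- membership of the model set and its closedness
    have hSiff : ∀ p : ↥C × EuclideanSpace ℂ (Fin d),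
        p.2 ∈ V (p.1 : M) ↔
          ((Φ.symm p : {v : Σ m, F m // v.1 ∈ C}) : Σ m, F m).2 ∈
            W (((Φ.symm p : {v : Σ m, F m // v.1 ∈ C}) : Σ m, F m)).1 := by
      intro p
      obtain ⟨⟨⟨m', x⟩, hm'⟩, hw⟩ : ∃ w, Φ.symm p = w := ⟨_, rfl⟩
      have hΦw : Φ ⟨⟨m', x⟩, hm'⟩ = p := by rw [← hw, Φ.apply_symm_apply]
      have hbase : (p.1 : M) = m' := by
        have := hΦ1 ⟨⟨m', x⟩, hm'⟩
        rw [hΦw] at this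
        exact this
      rw [hw]
      show p.2 ∈ V (p.1 : M) ↔ x ∈ W m'
      constructor
      · intro hp
        rw [hVC _ p.1.2] at hp
        obtain ⟨y, hy, hLy⟩ := hp
        have hΦy : Φ ⟨⟨(p.1 : M), y⟩, p.1.2⟩ = p := by
          refine Prod.ext ?_ ?_
          · rw [trivFst Φ hΦ1 _ p.1.2]
          · exact hLy
        have := Φ.injective (hΦy.trans hΦw.symm)
        rcases p with ⟨⟨pm, hpm⟩, ξ⟩
        simp only at hbase
        subst hbase
        have h2 : y = x := by simpa using this
        rw [← h2]
        exact hy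
      · intro hx
        rcases p with ⟨⟨pm, hpm⟩, ξ⟩
        simp only at hbase ⊢
        subst hbase
        rw [hVC _ hpm]
        refine ⟨x, hx, ?_⟩
        rw [hL, trivLin_apply]
        have := congrArg Prod.snd hΦw
        exact this
    have hSclosed : IsClosed {p : ↥C × EuclideanSpace ℂ (Fin d) | p.2 ∈ V (p.1 : M)} := by
      have heq : {p : ↥C × EuclideanSpace ℂ (Fin d) | p.2 ∈ V (p.1 : M)} =
          (fun p : ↥C × EuclideanSpace ℂ (Fin d) =>
            ((Φ.symm p : {v : Σ m, F m // v.1 ∈ C}) : Σ m, F m)) ⁻¹'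
            {v : Σ m, F m | v.2 ∈ W v.1} := Set.ext fun p => hSiff p
      rw [heq]
      exact hcl.preimage (continuous_subtype_val.comp Φ.symm.continuous)
    -- lower semicontinuity of the fibers, from openness of the projection
    have hlsc : ∀ b ∈ V₀, ∀ δ > (0:ℝ), ∃ O ∈ 𝓝 m₀, ∀ m ∈ O,
        ∃ hm : m ∈ C, ∃ ξ ∈ V m, ‖ξ - b‖ < δ := by
      intro b hb δ hδ
      rw [hV₀def, hVC _ hm₀C] at hb
      obtain ⟨x₀, hx₀, hLx₀⟩ := hb
      have hm₀i : m₀ ∈ interior C := mem_interior_iff_mem_nhds.mpr hCn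
      set T₁ : Set (Σ m, F m) := Sigma.fst ⁻¹' interior C with hT₁
      have hT₁open : IsOpen T₁ := isOpen_interior.preimage hB.continuous_proj
      set g : ↥T₁ → ℝ := fun v => ‖(Φ ⟨v.1, interior_subset v.2⟩).2 - b‖ with hg
      have hgcont : Continuous g := by
        apply Continuous.norm
        apply Continuous.sub ?_ continuous_const
        exact continuous_snd.comp (Φ.continuous.comp
          (Continuous.subtype_mk continuous_subtype_val _))
      set G : Set (Σ m, F m) := Subtype.val '' {v : ↥T₁ | g v < δ} with hG
      have hGopen : IsOpen G :=
        hT₁open.isOpenMap_subtype_val _ (isOpen_lt hgcont continuous_const)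
      set U : Set (Σ m, ↥(W m)) :=
        (fun v : Σ m, ↥(W m) => (⟨v.1, (v.2 : F v.1)⟩ : Σ m, F m)) ⁻¹' G with hU
      have hUopen : IsOpen U := hGopen.preimage hι_cont
      have hw₀U : (⟨m₀, ⟨x₀, hx₀⟩⟩ : Σ m, ↥(W m)) ∈ U := by
        refine ⟨⟨⟨m₀, x₀⟩, hm₀i⟩, ?_, rfl⟩
        show ‖(Φ ⟨⟨m₀, x₀⟩, interior_subset hm₀i⟩).2 - b‖ < δ
        have : (Φ ⟨⟨m₀, x₀⟩, interior_subset hm₀i⟩).2 = b := hLx₀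
        rw [this, sub_self, norm_zero]
        exact hδ
      refine ⟨Sigma.fst '' U, (hop U hUopen).mem_nhds ⟨_, hw₀U, rfl⟩, ?_⟩
      rintro m ⟨⟨m', y⟩, hwU, rfl⟩
      obtain ⟨v₁, hgv, hveq⟩ := hwU
      have hmi : (⟨m', (y : F m')⟩ : Σ m, F m).1 ∈ interior C := by
        have h2 : (↑v₁ : Σ m, F m).1 ∈ interior C := v₁.2
        rw [hveq] at h2
        exact h2
      have hmC : m' ∈ C := interior_subset hmi
      refine ⟨hmC, L m' hmC (y : F m'), ?_, ?_⟩
      · rw [hVC _ hmC]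
        exact ⟨(y : F m'), y.2, rfl⟩
      · have hv₁ : v₁ = ⟨⟨m', (y : F m')⟩, hmi⟩ := Subtype.ext hveq
        rw [hv₁] at hgv
        exact hgv
    -- upper semicontinuity of the fibers (unit vectors), from closedness
    have hV₀ne : ((V₀ : Set (EuclideanSpace ℂ (Fin d)))).Nonempty := ⟨0, V₀.zero_mem⟩
    have hunit : ∀ ε > (0:ℝ), ∃ O ∈ 𝓝 m₀, ∀ m ∈ O, m ∈ C → ∀ ξ ∈ V m,
        ‖ξ‖ = 1 → Metric.infDist ξ (V₀ : Set (EuclideanSpace ℂ (Fin d))) < ε := by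
      intro ε hε
      by_contra hcon
      push_neg at hcon
      set Z : {O : Set M // O ∈ 𝓝 m₀} → Set (EuclideanSpace ℂ (Fin d)) :=
        fun O => closure {ξ | ‖ξ‖ = 1 ∧
          ε ≤ Metric.infDist ξ (V₀ : Set (EuclideanSpace ℂ (Fin d))) ∧
          ∃ m ∈ O.1, m ∈ C ∧ ξ ∈ V m} with hZ
      have hZsub : ∀ O, Z O ⊆ {ξ | ε ≤ Metric.infDist ξ
          (V₀ : Set (EuclideanSpace ℂ (Fin d)))} := by
        intro O
        apply closure_minimal
        · exact fun ξ hξ => hξ.2.1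
        · exact isClosed_le continuous_const (Metric.continuous_infDist_pt _)
      have hZball : ∀ O, Z O ⊆ Metric.closedBall 0 1 := by
        intro O
        apply closure_minimal
        · intro ξ hξ
          rw [Metric.mem_closedBall, dist_zero_right, hξ.1]
        · exact Metric.isClosed_closedBall
      have hdir : Directed (· ⊇ ·) Z := by
        intro O O'
        refine ⟨⟨O.1 ∩ O'.1, Filter.inter_mem O.2 O'.2⟩, ?_, ?_⟩
        · apply closure_mono
          rintro ξ ⟨h1, h2, m, hm, h3⟩
          exact ⟨h1, h2, m, hm.1, h3⟩
        · apply closure_mono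
          rintro ξ ⟨h1, h2, m, hm, h3⟩
          exact ⟨h1, h2, m, hm.2, h3⟩
      have hZne : ∀ O, (Z O).Nonempty := by
        rintro ⟨O, hO⟩
        obtain ⟨m, hmO, hmC, ξ, hξV, hξ1, hξd⟩ := hcon O hO
        exact ⟨ξ, subset_closure ⟨hξ1, hξd, m, hmO, hmC, hξV⟩⟩
      have hZcpt : ∀ O, IsCompact (Z O) := fun O =>
        (isCompact_closedBall _ _).of_isClosed_subset isClosed_closure (hZball O)
      obtain ⟨ξs, hξs⟩ :=
        IsCompact.nonempty_iInter_of_directed_nonempty_isCompact_isClosed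
          Z hdir hZne hZcpt (fun O => isClosed_closure)
      rw [Set.mem_iInter] at hξs
      have hεξ : ε ≤ Metric.infDist ξs (V₀ : Set (EuclideanSpace ℂ (Fin d))) :=
        hZsub ⟨Set.univ, Filter.univ_mem⟩ (hξs _)
      have hξV₀ : ξs ∈ V₀ := by
        have hmem : ((⟨m₀, hm₀C⟩ : ↥C), ξs) ∈
            {p : ↥C × EuclideanSpace ℂ (Fin d) | p.2 ∈ V (p.1 : M)} := by
          rw [← hSclosed.closure_eq]
          rw [mem_closure_iff_nhds]
          intro N hN
          rw [mem_nhds_prod_iff] at hN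
          obtain ⟨N₁, hN₁, N₂, hN₂, hNsub⟩ := hN
          rw [mem_nhds_subtype] at hN₁
          obtain ⟨O', hO', hO'sub⟩ := hN₁
          obtain ⟨δ, hδ, hballsub⟩ := Metric.mem_nhds_iff.mp hN₂
          have := hξs ⟨O', hO'⟩
          rw [hZ, Metric.mem_closure_iff] at this
          obtain ⟨ξ, ⟨hξ1, hξd, m, hmO', hmC, hξV⟩, hdist⟩ := this δ hδ
          refine ⟨((⟨m, hmC⟩ : ↥C), ξ), hNsub ?_, hξV⟩
          refine Set.mem_prod.mpr ⟨hO'sub ?_, hballsub ?_⟩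
          · exact hmO'
          · rw [Metric.mem_ball, dist_comm]
            exact hdist
        exact hmem
      rw [Metric.infDist_zero_of_mem hξV₀] at hεξ
      linarith
    -- upper semicontinuity, quantitative form
    have husc : ∀ ε > (0:ℝ), ∃ O ∈ 𝓝 m₀, ∀ m ∈ O, m ∈ C → ∀ ξ ∈ V m,
        ∃ η ∈ V₀, ‖ξ - η‖ ≤ ε * ‖ξ‖ := by
      intro ε hε
      obtain ⟨O, hO, hOp⟩ := hunit ε hε
      refine ⟨O, hO, ?_⟩
      intro m hmO hmC ξ hξ
      by_cases hξ0 : ξ = 0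
      · refine ⟨0, V₀.zero_mem, ?_⟩
        rw [hξ0, sub_zero, norm_zero, mul_zero]
      · set ξu : EuclideanSpace ℂ (Fin d) := ‖ξ‖⁻¹ • ξ with hξu
        have hξu1 : ‖ξu‖ = 1 := by
          rw [hξu]
          exact norm_smul_inv_norm hξ0
        have hξuV : ξu ∈ V m := by
          rw [hξu]
          exact Submodule.smul_of_tower_mem _ _ hξ
        have := hOp m hmO hmC ξu hξuV hξu1
        obtain ⟨η₀, hη₀, hdist⟩ := (Metric.infDist_lt_iff hV₀ne).mp this
        refine ⟨(‖ξ‖ : ℝ) • η₀, Submodule.smul_of_tower_mem _ _ hη₀, ?_⟩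
        have hξeq : ξ = (‖ξ‖ : ℝ) • ξu := by
          rw [hξu, smul_inv_smul₀ (norm_ne_zero_iff.mpr hξ0)]
        calc ‖ξ - (‖ξ‖ : ℝ) • η₀‖ = ‖(‖ξ‖ : ℝ) • (ξu - η₀)‖ := by
              rw [smul_sub, ← hξeq]
          _ = ‖ξ‖ * ‖ξu - η₀‖ := by
              rw [norm_smul, norm_norm]
          _ ≤ ‖ξ‖ * ε := by
              apply mul_le_mul_of_nonneg_left _ (norm_nonneg ξ)
              rw [← dist_eq_norm]
              exact hdist.le
          _ = ε * ‖ξ‖ := mul_comm _ _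
    -- choose a good compact neighborhood C'
    obtain ⟨Ou, hOu, hOup⟩ := husc (1/4) (by norm_num)
    obtain ⟨δB, hδB, bvec, hbvecV₀, hBspan⟩ := projB V₀
    have hObi : ∀ i : Fin (Module.finrank ℂ V₀), ∃ O ∈ 𝓝 m₀, ∀ m ∈ O,
        ∃ hm : m ∈ C, ∃ ξ ∈ V m, ‖ξ - bvec i‖ < δB :=
      fun i => hlsc (bvec i) (hbvecV₀ i) δB hδB
    choose Ob hOb hObp using hObi
    have hNmem : (C ∩ (Ou ∩ ⋂ i, Ob i)) ∈ 𝓝 m₀ :=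
      Filter.inter_mem hCn (Filter.inter_mem hOu (Filter.iInter_mem.mpr hOb))
    obtain ⟨C', hC'n, hC'sub, hC'cpt⟩ := local_compact_nhds hNmem
    have hC'C : ∀ {m}, m ∈ C' → m ∈ C := fun hm => (hC'sub hm).1
    have hC'Ou : ∀ {m}, m ∈ C' → m ∈ Ou := fun hm => (hC'sub hm).2.1
    have hC'Ob : ∀ {m} (i), m ∈ C' → m ∈ Ob i := fun i hm =>
      Set.mem_iInter.mp (hC'sub hm).2.2 i
    -- fiberwise injectivity and surjectivity of the projection P
    have hinj : ∀ m ∈ C', ∀ ξ ∈ V m,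
        ‖ξ‖ ≤ 2 * ‖(P ξ : EuclideanSpace ℂ (Fin d))‖ := by
      intro m hm ξ hξ
      apply projA V₀
      obtain ⟨η, hη, hd⟩ := hOup m (hC'Ou hm) (hC'C hm) ξ hξ
      exact ⟨η, hη, by linarith [hd, norm_nonneg ξ]⟩
    have hsurj : ∀ m ∈ C', ∀ η ∈ V₀, ∃ ξ ∈ V m,
        (P ξ : EuclideanSpace ℂ (Fin d)) = η := by
      intro m hm η hη
      refine hBspan (V m) ?_ η hη
      intro i
      obtain ⟨hmC, ξ, hξV, hξd⟩ := hObp i m (hC'Ob i hm)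
      exact ⟨ξ, hξV, hξd⟩
    -- the model fiber
    set k : ℕ := Module.finrank ℂ V₀ with hk
    set β : ↥V₀ ≃L[ℂ] EuclideanSpace ℂ (Fin k) :=
      (Module.finBasis ℂ ↥V₀).equivFun.toContinuousLinearEquiv.trans
        (EuclideanSpace.equiv (Fin k) ℂ).symm with hβ
    set Ψf : {v : Σ m, ↥(W m) // v.1 ∈ C'} → ↥C' × EuclideanSpace ℂ (Fin k) :=
      fun w => (⟨w.1.1, w.2⟩,
        β (P (L w.1.1 (hC'C w.2) (w.1.2 : F w.1.1)))) with hΨf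
    have hmemV : ∀ w : {v : Σ m, ↥(W m) // v.1 ∈ C'},
        L w.1.1 (hC'C w.2) (w.1.2 : F w.1.1) ∈ V w.1.1 := by
      intro w
      rw [hVC _ (hC'C w.2)]
      exact ⟨_, w.1.2.2, rfl⟩
    have hinjΨ : Function.Injective Ψf := by
      rintro ⟨⟨m, x⟩, hm⟩ ⟨⟨m', x'⟩, hm'⟩ heq
      have h1 : m = m' := congrArg (fun q => (q.1 : M)) heq
      subst h1
      have h2 : β (P (L m (hC'C hm) (x : F m))) = β (P (L m (hC'C hm) (x' : F m))) :=
        congrArg Prod.snd heq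
      have h3 : P (L m (hC'C hm) (x : F m)) = P (L m (hC'C hm) (x' : F m)) :=
        β.injective h2
      have h4 : P (L m (hC'C hm) ((x : F m) - (x' : F m))) = 0 := by
        rw [map_sub, map_sub, h3, sub_self]
      have h5 : L m (hC'C hm) ((x : F m) - (x' : F m)) ∈ V m := by
        rw [hVC _ (hC'C hm)]
        exact ⟨(x : F m) - (x' : F m), sub_mem x.2 x'.2, rfl⟩
      have h6 := hinj m hm _ h5
      rw [h4] at h6
      have h7 : L m (hC'C hm) ((x : F m) - (x' : F m)) = 0 := by
        have : ‖L m (hC'C hm) ((x : F m) - (x' : F m))‖ ≤ 0 := by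
          simpa using h6
        exact norm_le_zero_iff.mp this
      have h8 := (hbound ⟨⟨m, (x : F m) - (x' : F m)⟩, hC'C hm⟩).1
      have h9 : (Φ ⟨⟨m, (x : F m) - (x' : F m)⟩, hC'C hm⟩).2 = 0 := h7
      rw [h9, norm_zero] at h8
      have h10 : (x : F m) - (x' : F m) = 0 := by
        have : ‖(x : F m) - (x' : F m)‖ = 0 := by
          have hn : (0:ℝ) ≤ ‖(x : F m) - (x' : F m)‖ := norm_nonneg _
          nlinarith [h8, hc₁]
        exact norm_eq_zero.mp this
      have h11 : x = x' := Subtype.ext (sub_eq_zero.mp h10)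
      subst h11
      rfl
    have hsurjΨ : Function.Surjective Ψf := by
      rintro ⟨⟨m, hmC'⟩, η⟩
      obtain ⟨ξ, hξV, hPξ⟩ := hsurj m hmC' ↑(β.symm η) (β.symm η).2
      rw [hVC _ (hC'C hmC')] at hξV
      obtain ⟨y, hyW, hLy⟩ := hξV
      refine ⟨⟨⟨m, ⟨y, hyW⟩⟩, hmC'⟩, ?_⟩
      refine Prod.ext rfl ?_
      show β (P (L m (hC'C hmC') y)) = η
      rw [hLy]
      have hPeq : P ξ = β.symm η := Subtype.ext hPξ
      rw [hPeq, β.apply_symm_apply]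
    have hcont1 : Continuous (fun w : {v : Σ m, ↥(W m) // v.1 ∈ C'} =>
        (⟨w.1.1, w.2⟩ : ↥C')) := by
      refine Continuous.subtype_mk ?_ _
      exact hB.continuous_proj.comp (hι_cont.comp continuous_subtype_val)
    have he₀ : Continuous (fun w : {v : Σ m, ↥(W m) // v.1 ∈ C'} =>
        (⟨⟨w.1.1, (w.1.2 : F w.1.1)⟩, hC'C w.2⟩ : {v : Σ m, F m // v.1 ∈ C})) :=
      Continuous.subtype_mk (hι_cont.comp continuous_subtype_val) _
    have hcont2 : Continuous (fun w : {v : Σ m, ↥(W m) // v.1 ∈ C'} =>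
        β (P (L w.1.1 (hC'C w.2) (w.1.2 : F w.1.1)))) :=
      β.continuous.comp (P.continuous.comp (continuous_snd.comp (Φ.continuous.comp he₀)))
    have hΨcont : Continuous Ψf := hcont1.prodMk hcont2
    -- properness
    obtain ⟨cβ, hcβ0, hcβle⟩ : ∃ c : ℝ, 0 ≤ c ∧
        ∀ q : EuclideanSpace ℂ (Fin k), ‖β.symm q‖ ≤ c * ‖q‖ :=
      ⟨‖(β.symm : EuclideanSpace ℂ (Fin k) →L[ℂ] ↥V₀)‖, ContinuousLinearMap.opNorm_nonneg _, fun q => by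
        have := (β.symm : EuclideanSpace ℂ (Fin k) →L[ℂ] ↥V₀).le_opNorm q
        rw [ContinuousLinearEquiv.coe_coe] at this
        exact this⟩
    have hwbound : ∀ w : {v : Σ m, ↥(W m) // v.1 ∈ C'},
        ‖(w.1.2 : F w.1.1)‖ ≤ (2 * cβ / c₁) * ‖(Ψf w).2‖ := by
      intro w
      have h1 : c₁ * ‖(w.1.2 : F w.1.1)‖ ≤ ‖L w.1.1 (hC'C w.2) (w.1.2 : F w.1.1)‖ :=
        (hbound ⟨⟨w.1.1, (w.1.2 : F w.1.1)⟩, hC'C w.2⟩).1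
      have h2 := hinj w.1.1 w.2 _ (hmemV w)
      rw [← Submodule.coe_norm] at h2
      have h4 : ‖P (L w.1.1 (hC'C w.2) (w.1.2 : F w.1.1))‖ ≤
          cβ * ‖β (P (L w.1.1 (hC'C w.2) (w.1.2 : F w.1.1)))‖ := by
        have := hcβle (β (P (L w.1.1 (hC'C w.2) (w.1.2 : F w.1.1))))
        rw [β.symm_apply_apply] at this
        exact this
      have hΨ2 : (Ψf w).2 = β (P (L w.1.1 (hC'C w.2) (w.1.2 : F w.1.1))) := rfl
      rw [hΨ2, div_mul_eq_mul_div, le_div_iff₀ hc₁]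
      linarith [h1, h2, h4]
    have hι_ind : Topology.IsInducing
        (fun v : Σ m, ↥(W m) => (⟨v.1, (v.2 : F v.1)⟩ : Σ m, F m)) := ⟨rfl⟩
    have hcompInd : Topology.IsInducing (fun w : {v : Σ m, ↥(W m) // v.1 ∈ C'} =>
        (⟨⟨w.1.1, (w.1.2 : F w.1.1)⟩, hC'C w.2⟩ : {v : Σ m, F m // v.1 ∈ C})) := by
      refine (Topology.IsInducing.of_comp_iff Topology.IsInducing.subtypeVal).mp ?_
      exact hι_ind.comp Topology.IsInducing.subtypeVal
    have hIndE : Topology.IsInducing (fun w : {v : Σ m, ↥(W m) // v.1 ∈ C'} =>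
        Φ ⟨⟨w.1.1, (w.1.2 : F w.1.1)⟩, hC'C w.2⟩) :=
      Φ.isInducing.comp hcompInd
    have hprop : ∀ R : ℝ, IsCompact {w : {v : Σ m, ↥(W m) // v.1 ∈ C'} |
        ‖(Ψf w).2‖ ≤ R} := by
      intro R
      set RR : ℝ := (2 * cβ / c₁) * R with hRR
      have hBRcpt : IsCompact {w : {v : Σ m, ↥(W m) // v.1 ∈ C'} |
          ‖(w.1.2 : F w.1.1)‖ ≤ RR} := by
        rw [hIndE.isCompact_iff]
        have himg : (fun w : {v : Σ m, ↥(W m) // v.1 ∈ C'} =>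
            Φ ⟨⟨w.1.1, (w.1.2 : F w.1.1)⟩, hC'C w.2⟩) ''
              {w | ‖(w.1.2 : F w.1.1)‖ ≤ RR} =
            {p : ↥C × EuclideanSpace ℂ (Fin d) | (p.1 : M) ∈ C' ∧ p.2 ∈ V (p.1 : M) ∧
              ‖((Φ.symm p : {v : Σ m, F m // v.1 ∈ C}) : Σ m, F m).2‖ ≤ RR} := by
          ext p
          constructor
          · rintro ⟨w, hwBR, rfl⟩
            have hfst : ((Φ ⟨⟨w.1.1, (w.1.2 : F w.1.1)⟩, hC'C w.2⟩).1 : M) = w.1.1 :=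
              hΦ1 _
            refine ⟨?_, ?_, ?_⟩
            · rw [hfst]; exact w.2
            · rw [hfst]; exact hmemV w
            · rw [Φ.symm_apply_apply]
              exact hwBR
          · rintro ⟨hp1, hp2, hp3⟩
            rw [hVC _ p.1.2] at hp2
            obtain ⟨y, hyW, hLy⟩ := hp2
            have hΦy : Φ ⟨⟨(p.1 : M), y⟩, p.1.2⟩ = p :=
              Prod.ext (by rw [trivFst Φ hΦ1 _ p.1.2]) hLy
            refine ⟨⟨⟨(p.1 : M), ⟨y, hyW⟩⟩, hp1⟩, ?_, ?_⟩
            · show ‖y‖ ≤ RR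
              have hsymm : Φ.symm p = ⟨⟨(p.1 : M), y⟩, p.1.2⟩ :=
                Φ.injective (by rw [Φ.apply_symm_apply, hΦy])
              rw [hsymm] at hp3
              exact hp3
            · exact hΦy
        rw [himg]
        refine IsCompact.of_isClosed_subset
          ((isCompact_iff_isCompact_univ.mp hCcpt).prod
            (isCompact_closedBall (0 : EuclideanSpace ℂ (Fin d)) (c₂ * RR))) ?_ ?_
        · have hcl1 : IsClosed {p : ↥C × EuclideanSpace ℂ (Fin d) | (p.1 : M) ∈ C'} :=
            hC'cpt.isClosed.preimage (continuous_subtype_val.comp continuous_fst)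
          have hcl3 : IsClosed {p : ↥C × EuclideanSpace ℂ (Fin d) |
              ‖((Φ.symm p : {v : Σ m, F m // v.1 ∈ C}) : Σ m, F m).2‖ ≤ RR} :=
            isClosed_le (hB.continuous_norm.comp
              (continuous_subtype_val.comp Φ.symm.continuous)) continuous_const
          exact hcl1.inter (hSclosed.inter hcl3)
        · rintro p ⟨hp1, hp2, hp3⟩
          refine Set.mem_prod.mpr ⟨trivial, ?_⟩
          rw [Metric.mem_closedBall, dist_zero_right]
          rw [hVC _ p.1.2] at hp2
          obtain ⟨y, hyW, hLy⟩ := hp2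
          have hΦy : Φ ⟨⟨(p.1 : M), y⟩, p.1.2⟩ = p :=
            Prod.ext (by rw [trivFst Φ hΦ1 _ p.1.2]) hLy
          have hyRR : ‖y‖ ≤ RR := by
            have hsymm : Φ.symm p = ⟨⟨(p.1 : M), y⟩, p.1.2⟩ :=
              Φ.injective (by rw [Φ.apply_symm_apply, hΦy])
            rw [hsymm] at hp3
            exact hp3
          have hb2 := (hbound ⟨⟨(p.1 : M), y⟩, p.1.2⟩).2
          have hp2eq : (Φ ⟨⟨(p.1 : M), y⟩, p.1.2⟩).2 = p.2 := by rw [hΦy]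
          rw [hp2eq] at hb2
          calc ‖p.2‖ ≤ c₂ * ‖y‖ := hb2
            _ ≤ c₂ * RR := mul_le_mul_of_nonneg_left hyRR hc₂.le
      refine hBRcpt.of_isClosed_subset ?_ ?_
      · exact isClosed_le (continuous_snd.comp hΨcont).norm continuous_const
      · intro w hw
        have h1 := hwbound w
        have h2 : ‖(Ψf w).2‖ ≤ R := hw
        have h3 : (0:ℝ) ≤ 2 * cβ / c₁ := by positivity
        calc ‖(w.1.2 : F w.1.1)‖ ≤ (2 * cβ / c₁) * ‖(Ψf w).2‖ := h1
          _ ≤ (2 * cβ / c₁) * R := mul_le_mul_of_nonneg_left h2 h3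
    have hclosedΨ : IsClosedMap Ψf := isClosedMap_of_norm_proper Ψf hΨcont hprop
    refine ⟨C', hC'cpt, hC'n, k,
      Equiv.toHomeomorphOfContinuousClosed
        (Equiv.ofBijective Ψf ⟨hinjΨ, hsurjΨ⟩) hΨcont hclosedΨ, ?_, ?_, ?_⟩
    · intro w
      rfl
    · intro m hm x y
      show β (P (L m (hC'C hm) ((x : F m) + (y : F m)))) =
        β (P (L m (hC'C hm) (x : F m))) + β (P (L m (hC'C hm) (y : F m)))
      rw [map_add, map_add, map_add]
    · intro m hm c x
      show β (P (L m (hC'C hm) (c • (x : F m)))) = c • β (P (L m (hC'C hm) (x : F m)))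
      rw [map_smul, map_smul, map_smul]
end

section
/- Let p : H → M be a compact group bundle over a compact Hausdorff space M. Then p is an open map if and only if the map M → P_p(H), m ↦ λ_{H_m}, assigning to each m the Haar probability measure of the fiber group H_m viewed as a fiber measure on H, is continuous (equivalently, is a relative measure for p). -/
open scoped Classical ENNReal NNReal

open MeasureTheory BoundedContinuousFunction Set Filter Topology

/-- A compact group bundle: a continuous surjection `proj : H → M` between compact
Hausdorff spaces such that each fiber `H_m = proj⁻¹({m})` is a group, with continuous
multiplication (on the fiber product, encoded as a total map `mul` whose axioms are only
imposed on pairs in the same fiber), continuous inversion and a continuous unit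
section. -/
structure CompactGroupBundle (H M : Type*) [TopologicalSpace H] [TopologicalSpace M]
    where
  proj : H → M
  continuous_proj : Continuous proj
  surjective_proj : Function.Surjective proj
  mul : H → H → H
  proj_mul : ∀ x y, proj x = proj y → proj (mul x y) = proj x
  continuousOn_mul :
    ContinuousOn (fun xy : H × H => mul xy.1 xy.2) {xy | proj xy.1 = proj xy.2}
  inv : H → H
  continuous_inv : Continuous inv
  proj_inv : ∀ x, proj (inv x) = proj x
  one : M → H
  continuous_one : Continuous one
  proj_one : ∀ m, proj (one m) = m
  mul_assoc' : ∀ x y z, proj x = proj y → proj y = proj z →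
    mul (mul x y) z = mul x (mul y z)
  one_mul' : ∀ x, mul (one (proj x)) x = x
  mul_one' : ∀ x, mul x (one (proj x)) = x
  inv_mul_cancel' : ∀ x, mul (inv x) x = one (proj x)

namespace CGBAux

variable {H M : Type*} [TopologicalSpace H] [TopologicalSpace M]

/-- The fiber of the bundle over `m`, as a subtype. -/
abbrev Fib (B : CompactGroupBundle H M) (m : M) : Type _ := {x : H // B.proj x = m}

variable {B : CompactGroupBundle H M}

instance (m : M) : Mul (Fib B m) :=
  ⟨fun a b => ⟨B.mul a.1 b.1, by
    rw [B.proj_mul a.1 b.1 (a.2.trans b.2.symm)]; exact a.2⟩⟩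

instance (m : M) : One (Fib B m) := ⟨⟨B.one m, B.proj_one m⟩⟩

instance (m : M) : Inv (Fib B m) :=
  ⟨fun a => ⟨B.inv a.1, by rw [B.proj_inv]; exact a.2⟩⟩

noncomputable instance (m : M) : Group (Fib B m) :=
  Group.ofLeftAxioms
    (fun a b c => Subtype.ext
      (B.mul_assoc' a.1 b.1 c.1 (a.2.trans b.2.symm) (b.2.trans c.2.symm)))
    (fun a => Subtype.ext (by
      obtain ⟨x, hx⟩ := a
      show B.mul (B.one m) x = x
      subst hx
      exact B.one_mul' x))
    (fun a => Subtype.ext (by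
      show B.mul (B.inv a.1) a.1 = B.one m
      rw [B.inv_mul_cancel' a.1, a.2]))

theorem inv_inv_eq (B : CompactGroupBundle H M) (x : H) : B.inv (B.inv x) = x := by
  have := inv_inv (⟨x, rfl⟩ : Fib B (B.proj x))
  exact congrArg Subtype.val this

theorem key_i4 (B : CompactGroupBundle H M) {z y : H} (h : B.proj y = B.proj z) :
    B.mul (B.inv (B.mul z y)) z = B.inv y := by
  have : ((⟨z, rfl⟩ : Fib B (B.proj z)) * ⟨y, h⟩)⁻¹ * ⟨z, rfl⟩ = (⟨y, h⟩ : Fib B (B.proj z))⁻¹ := by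
    rw [mul_inv_rev, mul_assoc, inv_mul_cancel, mul_one]
  exact congrArg Subtype.val this

theorem key_i5 (B : CompactGroupBundle H M) {x v : H} (h : B.proj x = B.proj v) :
    B.mul (B.mul x (B.inv v)) v = x := by
  have : (⟨x, rfl⟩ : Fib B (B.proj x)) * (⟨v, h.symm⟩ : Fib B (B.proj x))⁻¹ * ⟨v, h.symm⟩
      = (⟨x, rfl⟩ : Fib B (B.proj x)) := by
    rw [mul_assoc, inv_mul_cancel, mul_one]
  exact congrArg Subtype.val this

set_option linter.unusedSectionVars false

section Meas

variable [CompactSpace H] [T2Space H] [MeasurableSpace H] [BorelSpace H]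
  [CompactSpace M] [T2Space M] [MeasurableSpace M] [BorelSpace M]

/-- Guarded left translation by `x`. -/
noncomputable def Tl (B : CompactGroupBundle H M) (x : H) : H → H :=
  fun y => if B.proj y = B.proj x then B.mul x y else y

/-- Guarded right translation by `z`. -/
noncomputable def Tr (B : CompactGroupBundle H M) (z : H) : H → H :=
  fun x => if B.proj x = B.proj z then B.mul x z else x

theorem isClosed_same_fiber (B : CompactGroupBundle H M) (x : H) :
    IsClosed {y : H | B.proj y = B.proj x} :=
  isClosed_eq B.continuous_proj continuous_const

theorem isClosed_fiber (B : CompactGroupBundle H M) (m : M) :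
    IsClosed (B.proj ⁻¹' {m}) :=
  (isClosed_singleton).preimage B.continuous_proj

theorem isCompact_fiber (B : CompactGroupBundle H M) (m : M) :
    IsCompact (B.proj ⁻¹' {m}) :=
  (isClosed_fiber B m).isCompact

theorem continuousOn_mul_left (B : CompactGroupBundle H M) (x : H) :
    ContinuousOn (fun y => B.mul x y) {y : H | B.proj y = B.proj x} := by
  have h : ContinuousOn ((fun xy : H × H => B.mul xy.1 xy.2) ∘ (fun y => (x, y)))
      {y : H | B.proj y = B.proj x} := by
    apply B.continuousOn_mul.comp (Continuous.continuousOn (by fun_prop))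
    intro y hy
    exact (hy : B.proj y = B.proj x).symm
  exact h

theorem continuousOn_mul_right (B : CompactGroupBundle H M) (z : H) :
    ContinuousOn (fun x => B.mul x z) {x : H | B.proj x = B.proj z} := by
  have h : ContinuousOn ((fun xy : H × H => B.mul xy.1 xy.2) ∘ (fun x => (x, z)))
      {x : H | B.proj x = B.proj z} := by
    apply B.continuousOn_mul.comp (Continuous.continuousOn (by fun_prop))
    intro x hx
    exact (hx : B.proj x = B.proj z)
  exact h

theorem measurable_Tl (B : CompactGroupBundle H M) (x : H) : Measurable (Tl B x) := by
  have h := ContinuousOn.measurable_piecewise (s := {y : H | B.proj y = B.proj x})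
    (continuousOn_mul_left B x) continuous_id.continuousOn
    (isClosed_same_fiber B x).measurableSet
  convert h using 1
  ext y
  by_cases hy : B.proj y = B.proj x <;> simp [Tl, Set.piecewise, hy]

theorem measurable_Tr (B : CompactGroupBundle H M) (z : H) : Measurable (Tr B z) := by
  have h := ContinuousOn.measurable_piecewise (s := {x : H | B.proj x = B.proj z})
    (continuousOn_mul_right B z) continuous_id.continuousOn
    (isClosed_same_fiber B z).measurableSet
  convert h using 1
  ext y
  by_cases hy : B.proj y = B.proj z <;> simp [Tr, Set.piecewise, hy]

theorem integrable_comp (f : H →ᵇ ℝ) {T : H → H} (hT : Measurable T)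
    (mu : Measure H) [IsFiniteMeasure mu] :
    Integrable (fun y => f (T y)) mu := by
  refine ⟨(f.continuous.measurable.comp hT).aestronglyMeasurable, ?_⟩
  apply MeasureTheory.HasFiniteIntegral.of_bounded (C := ‖f‖)
  exact Filter.Eventually.of_forall fun y => f.norm_coe_le_norm (T y)

variable {lam : M → ProbabilityMeasure H}

theorem lam_fiber_one (B : CompactGroupBundle H M)
    (hlam_fiber : ∀ m : M, ((lam m : Measure H)).map B.proj = Measure.dirac m) (m : M) :
    (lam m : Measure H) (B.proj ⁻¹' {m}) = 1 := by
  have h := hlam_fiber m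
  have := Measure.map_apply (μ := (lam m : Measure H)) B.continuous_proj.measurable
    (measurableSet_singleton m)
  rw [h] at this
  rw [← this, Measure.dirac_apply_of_mem (Set.mem_singleton m)]

theorem lam_compl_zero (B : CompactGroupBundle H M)
    (hlam_fiber : ∀ m : M, ((lam m : Measure H)).map B.proj = Measure.dirac m) (m : M) :
    (lam m : Measure H) ((B.proj ⁻¹' {m})ᶜ) = 0 := by
  have h1 := lam_fiber_one B hlam_fiber m
  have := measure_compl (μ := (lam m : Measure H))
    ((isClosed_fiber B m).measurableSet) (measure_ne_top _ _)
  rw [h1, measure_univ] at this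
  simp at this
  exact this

theorem lam_ae_mem (B : CompactGroupBundle H M)
    (hlam_fiber : ∀ m : M, ((lam m : Measure H)).map B.proj = Measure.dirac m) (m : M) :
    ∀ᵐ y ∂(lam m : Measure H), B.proj y = m := by
  rw [MeasureTheory.ae_iff]
  exact lam_compl_zero B hlam_fiber m

theorem integral_Tl (B : CompactGroupBundle H M)
    (hlam_inv : ∀ x : H,
      ((lam (B.proj x) : Measure H)).map
          (fun y => if B.proj y = B.proj x then B.mul x y else y) =
        (lam (B.proj x) : Measure H))
    {x : H} {m : M} (hx : B.proj x = m) {g : H → ℝ} (hg : Measurable g) :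
    ∫ y, g (Tl B x y) ∂(lam m : Measure H) = ∫ y, g y ∂(lam m : Measure H) := by
  subst hx
  conv_rhs => rw [← hlam_inv x]
  rw [show (fun y => if B.proj y = B.proj x then B.mul x y else y) = Tl B x from rfl]
  rw [integral_map (measurable_Tl B x).aemeasurable hg.aestronglyMeasurable]

theorem exists_partition (B : CompactGroupBundle H M) (m : M) (f : H →ᵇ ℝ) {ε : ℝ}
    (hε : 0 < ε) :
    ∃ (n : ℕ) (y : ℕ → H) (P : ℕ → Set H),
      (∀ i, B.proj (y i) = m) ∧ (∀ i, MeasurableSet (P i)) ∧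
      (∀ i, P i ⊆ B.proj ⁻¹' {m}) ∧ Pairwise (Function.onFun Disjoint P) ∧
      (B.proj ⁻¹' {m} = ⋃ i ∈ Finset.range n, P i) ∧
      (∀ i, ∀ w ∈ B.proj ⁻¹' {m}, ∀ v ∈ P i,
        |f (B.mul w v) - f (B.mul w (y i))| ≤ ε) := by
  set Γ := B.proj ⁻¹' {m} with hΓdef
  have hΓcl : IsClosed Γ := isClosed_fiber B m
  have hΓc : IsCompact Γ := isCompact_fiber B m
  have main : ∀ y₀ : H, ∃ V : Set H, IsOpen V ∧ (y₀ ∈ Γ → y₀ ∈ V ∧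
      ∀ v ∈ V ∩ Γ, ∀ w ∈ Γ, |f (B.mul w v) - f (B.mul w y₀)| ≤ ε) := by
    intro y₀
    by_cases hy₀ : y₀ ∈ Γ
    · have hsub : (Γ ×ˢ Γ : Set (H × H)) ⊆ {xy : H × H | B.proj xy.1 = B.proj xy.2} := by
        rintro ⟨w, v⟩ ⟨hw, hv⟩
        show B.proj w = B.proj v
        rw [show B.proj w = m from hw, show B.proj v = m from hv]
      have hc1 : ContinuousOn (fun q : H × H => f (B.mul q.1 q.2)) (Γ ×ˢ Γ) :=
        f.continuous.comp_continuousOn (B.continuousOn_mul.mono hsub)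
      have hc2 : ContinuousOn (fun q : H × H => f (B.mul q.1 y₀)) (Γ ×ˢ Γ) := by
        have h0 : ContinuousOn ((fun w => f (B.mul w y₀)) ∘ Prod.fst) (Γ ×ˢ Γ) := by
          apply ContinuousOn.comp
            (f.continuous.comp_continuousOn (continuousOn_mul_right B y₀))
            continuous_fst.continuousOn
          rintro ⟨w, v⟩ ⟨hw, hv⟩
          show B.proj w = B.proj y₀
          rw [show B.proj w = m from hw, show B.proj y₀ = m from hy₀]
        exact h0
      have hφ : ContinuousOn
          (fun q : H × H => |f (B.mul q.1 q.2) - f (B.mul q.1 y₀)|) (Γ ×ˢ Γ) :=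
        (hc1.sub hc2).abs
      set C := (Γ ×ˢ Γ) ∩
        (fun q : H × H => |f (B.mul q.1 q.2) - f (B.mul q.1 y₀)|) ⁻¹' (Set.Ici ε) with hC
      have hCcl : IsClosed C :=
        hφ.preimage_isClosed_of_isClosed (hΓcl.prod hΓcl) isClosed_Ici
      have hBadcl : IsClosed (Prod.snd '' C) :=
        (hCcl.isCompact.image continuous_snd).isClosed
      refine ⟨(Prod.snd '' C)ᶜ, hBadcl.isOpen_compl, fun _ => ⟨?_, ?_⟩⟩
      · intro hmem
        obtain ⟨q, hq, hq2⟩ := hmem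
        have hbad : ε ≤ |f (B.mul q.1 q.2) - f (B.mul q.1 y₀)| := hq.2
        rw [hq2] at hbad
        simp only [sub_self, abs_zero] at hbad
        exact absurd hbad (not_le.mpr hε)
      · intro v hv w hw
        by_contra hlt
        push_neg at hlt
        exact hv.1 ⟨(w, v), ⟨⟨hw, hv.2⟩, le_of_lt hlt⟩, rfl⟩
    · exact ⟨Set.univ, isOpen_univ, fun h => absurd h hy₀⟩
  choose V hVopen hVprop using main
  obtain ⟨t, htΓ, htcov⟩ := hΓc.elim_nhds_subcover V
    (fun y₀ hy₀ => (hVopen y₀).mem_nhds ((hVprop y₀ hy₀).1))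
  classical
  set l := t.toList with hl
  refine ⟨l.length,
    (fun i => if h : i < l.length then l.get ⟨i, h⟩ else B.one m),
    (fun i => Γ ∩ disjointed (fun j => if h : j < l.length then V (l.get ⟨j, h⟩) else ∅) i),
    ?_, ?_, ?_, ?_, ?_, ?_⟩
  · intro i
    by_cases h : i < l.length
    · simp only [dif_pos h]
      have : l.get ⟨i, h⟩ ∈ t := by
        have h2 := List.get_mem l ⟨i, h⟩
        exact Finset.mem_toList.mp h2
      exact htΓ _ this
    · simp only [dif_neg h]
      exact B.proj_one m
  · intro i
    refine hΓcl.measurableSet.inter (MeasurableSet.disjointed ?_ i)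
    intro j
    by_cases h : j < l.length
    · simp only [dif_pos h]; exact (hVopen _).measurableSet
    · simp only [dif_neg h]; exact MeasurableSet.empty
  · intro i
    exact Set.inter_subset_left
  · have hd := disjoint_disjointed
      (fun j => if h : j < l.length then V (l.get ⟨j, h⟩) else ∅)
    intro i j hij
    exact ((hd hij).mono Set.inter_subset_right Set.inter_subset_right)
  · apply Set.Subset.antisymm
    · intro v hv
      have hv' : v ∈ ⋃ y₀ ∈ t, V y₀ := htcov hv
      obtain ⟨y₀, hy₀t, hy₀v⟩ := Set.mem_iUnion₂.mp hv'
      obtain ⟨idx, hidx⟩ := List.mem_iff_get.mp (by simpa [hl] using hy₀t : y₀ ∈ l)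
      have hvW : v ∈ ⋃ j, (fun j => if h : j < l.length then V (l.get ⟨j, h⟩) else ∅) j := by
        refine Set.mem_iUnion.mpr ⟨idx.1, ?_⟩
        simp only [dif_pos idx.2]
        rw [show l.get ⟨idx.1, idx.2⟩ = l.get idx from rfl, hidx]
        exact hy₀v
      rw [← iUnion_disjointed] at hvW
      obtain ⟨j, hj⟩ := Set.mem_iUnion.mp hvW
      have hjlt : j < l.length := by
        by_contra hge
        have : disjointed (fun j => if h : j < l.length then V (l.get ⟨j, h⟩) else ∅) j ⊆ ∅ := by
          refine (disjointed_subset _ _).trans ?_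
          simp [dif_neg hge]
        exact this hj
      exact Set.mem_biUnion (Finset.mem_range.mpr hjlt) ⟨hv, hj⟩
    · intro v hv
      obtain ⟨i, _, hvi⟩ := Set.mem_iUnion₂.mp hv
      exact hvi.1
  · intro i w hw v hv
    obtain ⟨hvΓ, hvd⟩ := hv
    have hvW := disjointed_subset _ i hvd
    by_cases h : i < l.length
    · rw [dif_pos h] at hvW
      have hyΓ : l.get ⟨i, h⟩ ∈ Γ := htΓ _ (by
        have h2 := List.get_mem l ⟨i, h⟩
        exact Finset.mem_toList.mp h2)
      have := (hVprop _ hyΓ).2 v ⟨hvW, hvΓ⟩ w hw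
      simpa [dif_pos h] using this
    · rw [dif_neg h] at hvW
      exact absurd hvW (Set.notMem_empty v)

theorem integral_approx (B : CompactGroupBundle H M)
    (hlam_fiber : ∀ m : M, ((lam m : Measure H)).map B.proj = Measure.dirac m)
    (hlam_inv : ∀ x : H,
      ((lam (B.proj x) : Measure H)).map
          (fun y => if B.proj y = B.proj x then B.mul x y else y) =
        (lam (B.proj x) : Measure H))
    (m : M) (f : H →ᵇ ℝ) {ε : ℝ} (hε : 0 < ε) :
    ∃ (n : ℕ) (y : ℕ → H) (c : ℕ → ℝ),
      (∀ i, B.proj (y i) = m) ∧ (∀ i, 0 ≤ c i) ∧ (∑ i ∈ Finset.range n, c i = 1) ∧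
      ∀ x ∈ B.proj ⁻¹' {m},
        |(∫ v, f v ∂(lam m : Measure H)) -
          ∑ i ∈ Finset.range n, c i * f (B.mul x (y i))| ≤ ε := by
  obtain ⟨n, y, P, hyproj, hPmeas, hPsub, hPdisj, hPcover, hPprop⟩ :=
    exists_partition B m f hε
  set lm : Measure H := (lam m : Measure H) with hlm
  refine ⟨n, y, fun i => (lm (P i)).toReal, hyproj, fun i => ENNReal.toReal_nonneg, ?_, ?_⟩
  · have hsum : lm (⋃ i ∈ Finset.range n, P i) = ∑ i ∈ Finset.range n, lm (P i) :=
      measure_biUnion_finset ((hPdisj.set_pairwise _)) (fun i _ => hPmeas i)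
    rw [← hPcover, lam_fiber_one B hlam_fiber m] at hsum
    rw [← ENNReal.toReal_sum (fun i _ => measure_ne_top _ _), ← hsum]
    rfl
  · intro x hx
    have hpx : B.proj x = m := hx
    have hTl : (∫ v, f v ∂lm) = ∫ v, f (Tl B x v) ∂lm :=
      (integral_Tl B hlam_inv hpx f.continuous.measurable).symm
    have hres : lm.restrict (B.proj ⁻¹' {m}) = lm :=
      Measure.restrict_eq_self_of_ae_mem (lam_ae_mem B hlam_fiber m)
    have hint : ∀ (T : H → H), Measurable T → ∀ s : Set H,
        IntegrableOn (fun v => f (T v)) s lm := by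
      intro T hT s
      exact (integrable_comp f hT lm).integrableOn
    have hsplit : (∫ v, f (Tl B x v) ∂lm)
        = ∑ i ∈ Finset.range n, ∫ v in P i, f (Tl B x v) ∂lm := by
      rw [← integral_biUnion_finset (Finset.range n) (fun i _ => hPmeas i)
        (hPdisj.set_pairwise _) (fun i _ => hint _ (measurable_Tl B x) _)]
      rw [← hPcover]
      conv_lhs => rw [← hres]
    have hterm : ∀ i ∈ Finset.range n,
        |(∫ v in P i, f (Tl B x v) ∂lm) - (lm (P i)).toReal * f (B.mul x (y i))|
          ≤ ε * (lm (P i)).toReal := by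
      intro i _
      have hsub : (∫ v in P i, f (Tl B x v) ∂lm) - (lm (P i)).toReal * f (B.mul x (y i))
          = ∫ v in P i, (f (Tl B x v) - f (B.mul x (y i))) ∂lm := by
        rw [integral_sub (hint _ (measurable_Tl B x) _) ((integrableOn_const_iff enorm_ne_top).mpr
          (Or.inr (measure_lt_top _ _)))]
        rw [setIntegral_const, smul_eq_mul, measureReal_def, mul_comm]
      rw [hsub]
      have hbound : ∀ v ∈ P i, ‖f (Tl B x v) - f (B.mul x (y i))‖ ≤ ε := by
        intro v hv
        have hvΓ : v ∈ B.proj ⁻¹' {m} := hPsub i hv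
        have hguard : Tl B x v = B.mul x v := by
          have hpv : B.proj v = B.proj x := by
            rw [hpx]; exact hvΓ
          simp [Tl, hpv]
        rw [Real.norm_eq_abs, hguard]
        exact hPprop i x hx v hv
      rw [← Real.norm_eq_abs]
      exact norm_setIntegral_le_of_norm_le_const (measure_lt_top _ _) hbound
    show |(∫ v, f v ∂lm) -
        ∑ i ∈ Finset.range n, (lm (P i)).toReal * f (B.mul x (y i))| ≤ ε
    calc |(∫ v, f v ∂lm) - ∑ i ∈ Finset.range n, (lm (P i)).toReal * f (B.mul x (y i))|
        = |∑ i ∈ Finset.range n,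
            ((∫ v in P i, f (Tl B x v) ∂lm) - (lm (P i)).toReal * f (B.mul x (y i)))| := by
          rw [Finset.sum_sub_distrib, ← hsplit, ← hTl]
      _ ≤ ∑ i ∈ Finset.range n,
            |(∫ v in P i, f (Tl B x v) ∂lm) - (lm (P i)).toReal * f (B.mul x (y i))| :=
          Finset.abs_sum_le_sum_abs _ _
      _ ≤ ∑ i ∈ Finset.range n, ε * (lm (P i)).toReal := Finset.sum_le_sum hterm
      _ = ε * ∑ i ∈ Finset.range n, (lm (P i)).toReal := by rw [Finset.mul_sum]
      _ ≤ ε := by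
          have hsum : lm (⋃ i ∈ Finset.range n, P i) = ∑ i ∈ Finset.range n, lm (P i) :=
            measure_biUnion_finset ((hPdisj.set_pairwise _)) (fun i _ => hPmeas i)
          rw [← hPcover, lam_fiber_one B hlam_fiber m] at hsum
          have : ∑ i ∈ Finset.range n, (lm (P i)).toReal = 1 := by
            rw [← ENNReal.toReal_sum (fun i _ => measure_ne_top _ _), ← hsum]
            rfl
          rw [this, mul_one]

theorem compact_le_of_integral_eq {mu nu : Measure H} [IsFiniteMeasure mu]
    [IsFiniteMeasure nu] (hnu : nu.OuterRegular)
    (h : ∀ f : H →ᵇ ℝ, (∫ x, f x ∂mu) = ∫ x, f x ∂nu) {K : Set H} (hK : IsCompact K) :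
    mu K ≤ nu K := by
  have key : ∀ U : Set H, IsOpen U → K ⊆ U → mu K ≤ nu U := by
    intro U hU hKU
    obtain ⟨g, hg1, hg0, -, hg01⟩ := exists_continuous_one_zero_of_isCompact hK
      hU.isClosed_compl (disjoint_compl_right_iff_subset.mpr hKU)
    set f : H →ᵇ ℝ := BoundedContinuousFunction.mkOfCompact g with hf
    have hfx : ∀ x, f x = g x := fun x => rfl
    have hμint : Integrable (fun x => f x) mu := f.integrable mu
    have hνint : Integrable (fun x => f x) nu := f.integrable nu
    have h1 : (mu K).toReal ≤ ∫ x, f x ∂mu := by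
      have e1 : (∫ x in K, f x ∂mu) = (mu K).toReal := by
        rw [setIntegral_congr_fun hK.measurableSet (g := fun _ => (1 : ℝ))
          (fun x hx => by rw [hfx]; exact hg1 hx)]
        simp [setIntegral_const, measureReal_def]
      calc (mu K).toReal = ∫ x in K, f x ∂mu := e1.symm
        _ ≤ ∫ x, f x ∂mu := setIntegral_le_integral hμint
            (Filter.Eventually.of_forall fun x => (hg01 x).1)
    have h2 : (∫ x, f x ∂nu) ≤ (nu U).toReal := by
      have e0 : (∫ x in Uᶜ, f x ∂nu) = 0 := by
        rw [setIntegral_congr_fun hU.isClosed_compl.measurableSet (g := fun _ => (0 : ℝ))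
          (fun x hx => by rw [hfx]; exact hg0 hx)]
        simp
      have esplit : (∫ x, f x ∂nu) = ∫ x in U, f x ∂nu := by
        rw [← integral_add_compl hU.measurableSet hνint, e0, add_zero]
      rw [esplit]
      calc (∫ x in U, f x ∂nu) ≤ ∫ x in U, (1:ℝ) ∂nu := by
            apply setIntegral_mono_on hνint.integrableOn
              ((integrableOn_const_iff enorm_ne_top).mpr (Or.inr (measure_lt_top _ _))) hU.measurableSet
            intro x _
            exact (hg01 x).2
        _ = (nu U).toReal := by simp [setIntegral_const, measureReal_def]
    have := (h1.trans ((h f).le.trans h2))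
    exact (ENNReal.toReal_le_toReal (measure_ne_top _ _) (measure_ne_top _ _)).mp this
  rw [Set.measure_eq_iInf_isOpen K nu]
  exact le_iInf fun U => le_iInf fun hKU => le_iInf fun hU => key U hU hKU

theorem regular_ext {mu nu : Measure H} [IsFiniteMeasure mu] [IsFiniteMeasure nu]
    (hmu : mu.Regular) (hnu : nu.Regular)
    (h : ∀ f : H →ᵇ ℝ, (∫ x, f x ∂mu) = ∫ x, f x ∂nu) : mu = nu := by
  have hcompact : ∀ K : Set H, IsCompact K → mu K = nu K := by
    intro K hK
    exact le_antisymm (compact_le_of_integral_eq hnu.toOuterRegular h hK)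
      (compact_le_of_integral_eq hmu.toOuterRegular (fun f => (h f).symm) hK)
  have hopen : ∀ U : Set H, IsOpen U → mu U = nu U := by
    intro U hU
    rw [hmu.innerRegular.measure_eq_iSup hU, hnu.innerRegular.measure_eq_iSup hU]
    congr 1
    ext K
    congr 1
    ext hKU
    congr 1
    ext hKc
    exact hcompact K hKc
  ext s hs
  rw [Set.measure_eq_iInf_isOpen s mu, Set.measure_eq_iInf_isOpen s nu]
  congr 1
  ext U
  congr 1
  ext hsU
  congr 1
  ext hU
  exact hopen U hU

/-- Inversion as a homeomorphism of the total space. -/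
def invHomeo (B : CompactGroupBundle H M) : H ≃ₜ H where
  toFun := B.inv
  invFun := B.inv
  left_inv := inv_inv_eq B
  right_inv := inv_inv_eq B
  continuous_toFun := B.continuous_inv
  continuous_invFun := B.continuous_inv

theorem nu_compl_zero (B : CompactGroupBundle H M)
    (hlam_fiber : ∀ m : M, ((lam m : Measure H)).map B.proj = Measure.dirac m) (m : M) :
    ((lam m : Measure H).map B.inv) ((B.proj ⁻¹' {m})ᶜ) = 0 := by
  rw [Measure.map_apply B.continuous_inv.measurable
    (isClosed_fiber B m).measurableSet.compl]
  have : B.inv ⁻¹' (B.proj ⁻¹' {m})ᶜ = (B.proj ⁻¹' {m})ᶜ := by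
    ext u
    simp [Set.mem_preimage, B.proj_inv]
  rw [this]
  exact lam_compl_zero B hlam_fiber m

theorem nu_ae_mem (B : CompactGroupBundle H M)
    (hlam_fiber : ∀ m : M, ((lam m : Measure H)).map B.proj = Measure.dirac m) (m : M) :
    ∀ᵐ y ∂((lam m : Measure H).map B.inv), B.proj y = m := by
  rw [MeasureTheory.ae_iff]
  exact nu_compl_zero B hlam_fiber m

theorem nu_right_inv (B : CompactGroupBundle H M)
    (hlam_fiber : ∀ m : M, ((lam m : Measure H)).map B.proj = Measure.dirac m)
    (hlam_inv : ∀ x : H,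
      ((lam (B.proj x) : Measure H)).map
          (fun y => if B.proj y = B.proj x then B.mul x y else y) =
        (lam (B.proj x) : Measure H))
    {m : M} {z : H} (hz : B.proj z = m) (f : H →ᵇ ℝ) :
    (∫ x, f (Tr B z x) ∂((lam m : Measure H).map B.inv)) =
      ∫ x, f x ∂((lam m : Measure H).map B.inv) := by
  have hi : Measurable B.inv := B.continuous_inv.measurable
  have hTrm : Measurable (Tr B z) := measurable_Tr B z
  have hgm : Measurable fun x => f (Tr B z x) := f.continuous.measurable.comp hTrm
  have hfm : Measurable fun x : H => f x := f.continuous.measurable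
  rw [integral_map hi.aemeasurable hgm.aestronglyMeasurable]
  rw [integral_map hi.aemeasurable hfm.aestronglyMeasurable]
  set g : H → ℝ := fun y => f (Tr B z (B.inv y)) with hg
  have hgmeas : Measurable g := f.continuous.measurable.comp (hTrm.comp hi)
  rw [show (∫ y, f (Tr B z (B.inv y)) ∂(lam m : Measure H)) = ∫ y, g y ∂(lam m : Measure H)
    from rfl]
  rw [← integral_Tl B hlam_inv hz hgmeas]
  apply integral_congr_ae
  filter_upwards [lam_ae_mem B hlam_fiber m] with y hy
  have hyz : B.proj y = B.proj z := by rw [hy, hz]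
  have h1 : Tl B z y = B.mul z y := by simp [Tl, hyz]
  have hpzy : B.proj (B.mul z y) = B.proj z := B.proj_mul z y hyz.symm
  have h2 : B.proj (B.inv (B.mul z y)) = B.proj z := by rw [B.proj_inv]; exact hpzy
  have h3 : Tr B z (B.inv (B.mul z y)) = B.mul (B.inv (B.mul z y)) z := by
    simp [Tr, h2]
  show g (Tl B z y) = f (B.inv y)
  rw [hg]
  simp only []
  rw [h1, h3, key_i4 B hyz]

theorem lam_eq_nu (B : CompactGroupBundle H M)
    (hlam_fiber : ∀ m : M, ((lam m : Measure H)).map B.proj = Measure.dirac m)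
    (hlam_reg : ∀ m : M, (lam m : Measure H).Regular)
    (hlam_inv : ∀ x : H,
      ((lam (B.proj x) : Measure H)).map
          (fun y => if B.proj y = B.proj x then B.mul x y else y) =
        (lam (B.proj x) : Measure H))
    (m : M) :
    (lam m : Measure H) = (lam m : Measure H).map B.inv := by
  have hreg2 : ((lam m : Measure H).map B.inv).Regular := by
    haveI := hlam_reg m
    have := Measure.Regular.map (μ := (lam m : Measure H)) (invHomeo B)
    exact this
  haveI : IsProbabilityMeasure ((lam m : Measure H).map B.inv) :=
    Measure.isProbabilityMeasure_map (B.continuous_inv.measurable.aemeasurable)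
  apply regular_ext (hlam_reg m) hreg2
  intro f
  set lm : Measure H := (lam m : Measure H) with hlm
  set nu : Measure H := (lam m : Measure H).map B.inv with hnu
  have key : ∀ ε : ℝ, 0 < ε → |(∫ x, f x ∂lm) - ∫ x, f x ∂nu| ≤ ε := by
    intro ε hε
    obtain ⟨n, y, c, hyproj, hcnn, hcsum, happrox⟩ :=
      integral_approx B hlam_fiber hlam_inv m f hε
    set A : H → ℝ := fun x => ∑ i ∈ Finset.range n, c i * f (Tr B (y i) x) with hA
    have hAint : Integrable A nu := by
      apply integrable_finset_sum
      intro i _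
      exact ((integrable_comp f (measurable_Tr B (y i)) nu).const_mul (c i))
    have hAnu : (∫ x, A x ∂nu) = ∫ x, f x ∂nu := by
      rw [hA]
      rw [integral_finset_sum _ (fun i _ =>
        (integrable_comp f (measurable_Tr B (y i)) nu).const_mul (c i))]
      have : ∀ i ∈ Finset.range n,
          (∫ x, c i * f (Tr B (y i) x) ∂nu) = c i * ∫ x, f x ∂nu := by
        intro i _
        rw [integral_const_mul, nu_right_inv B hlam_fiber hlam_inv (hyproj i) f]
      rw [Finset.sum_congr rfl this, ← Finset.sum_mul, hcsum, one_mul]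
    have hphi : (∫ x, ((∫ v, f v ∂lm) - A x) ∂nu)
        = (∫ v, f v ∂lm) - ∫ x, f x ∂nu := by
      rw [integral_sub (integrable_const _) hAint, integral_const, hAnu]
      simp [measure_univ]
    have hbound : ∀ᵐ x ∂nu, ‖(∫ v, f v ∂lm) - A x‖ ≤ ε := by
      filter_upwards [nu_ae_mem B hlam_fiber m] with x hx
      have hxΓ : x ∈ B.proj ⁻¹' {m} := hx
      have hAeq : A x = ∑ i ∈ Finset.range n, c i * f (B.mul x (y i)) := by
        rw [hA]
        apply Finset.sum_congr rfl
        intro i _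
        have : Tr B (y i) x = B.mul x (y i) := by
          have hpxy : B.proj x = B.proj (y i) := by rw [hx, hyproj i]
          simp [Tr, hpxy]
        rw [this]
      rw [Real.norm_eq_abs, hAeq]
      exact happrox x hxΓ
    calc |(∫ x, f x ∂lm) - ∫ x, f x ∂nu|
        = ‖∫ x, ((∫ v, f v ∂lm) - A x) ∂nu‖ := by rw [hphi, Real.norm_eq_abs]
      _ ≤ ε * (nu Set.univ).toReal := norm_integral_le_of_norm_le_const hbound
      _ = ε := by simp [measure_univ]
  have : dist (∫ x, f x ∂lm) (∫ x, f x ∂nu) = 0 := by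
    by_contra hne
    have hpos : 0 < dist (∫ x, f x ∂lm) (∫ x, f x ∂nu) :=
      lt_of_le_of_ne dist_nonneg (Ne.symm hne)
    have := key (dist (∫ x, f x ∂lm) (∫ x, f x ∂nu) / 2) (by linarith)
    rw [Real.dist_eq] at hpos this
    linarith [abs_nonneg ((∫ x, f x ∂lm) - ∫ x, f x ∂nu)]
  rw [Real.dist_eq, abs_eq_zero, sub_eq_zero] at this
  exact this

theorem integral_Tr (B : CompactGroupBundle H M)
    (hlam_fiber : ∀ m : M, ((lam m : Measure H)).map B.proj = Measure.dirac m)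
    (hlam_reg : ∀ m : M, (lam m : Measure H).Regular)
    (hlam_inv : ∀ x : H,
      ((lam (B.proj x) : Measure H)).map
          (fun y => if B.proj y = B.proj x then B.mul x y else y) =
        (lam (B.proj x) : Measure H))
    {m : M} {z : H} (hz : B.proj z = m) (f : H →ᵇ ℝ) :
    (∫ x, f (Tr B z x) ∂(lam m : Measure H)) = ∫ x, f x ∂(lam m : Measure H) := by
  conv_lhs => rw [lam_eq_nu B hlam_fiber hlam_reg hlam_inv m]
  rw [nu_right_inv B hlam_fiber hlam_inv hz f]
  rw [← lam_eq_nu B hlam_fiber hlam_reg hlam_inv m]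

theorem haar_pos (B : CompactGroupBundle H M)
    (hlam_fiber : ∀ m : M, ((lam m : Measure H)).map B.proj = Measure.dirac m)
    (hlam_inv : ∀ x : H,
      ((lam (B.proj x) : Measure H)).map
          (fun y => if B.proj y = B.proj x then B.mul x y else y) =
        (lam (B.proj x) : Measure H))
    {m : M} {U : Set H} (hU : IsOpen U) {x : H} (hxU : x ∈ U) (hx : B.proj x = m) :
    0 < (lam m : Measure H) U := by
  set Γ := B.proj ⁻¹' {m} with hΓdef
  have main : ∀ v : H, ∃ O : Set H, IsOpen O ∧ (v ∈ Γ → v ∈ O ∧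
      ∀ u ∈ O ∩ Γ, Tl B (B.mul x (B.inv v)) u ∈ U) := by
    intro v
    by_cases hv : v ∈ Γ
    · have hpv : B.proj v = m := hv
      set w := B.mul x (B.inv v) with hw
      have hpw : B.proj w = m := by
        rw [hw, B.proj_mul x (B.inv v) (by rw [B.proj_inv, hpv, hx]), hx]
      obtain ⟨O, hOopen, hOeq⟩ := (continuousOn_iff').mp (continuousOn_mul_left B w) U hU
      refine ⟨O, hOopen, fun _ => ⟨?_, ?_⟩⟩
      · have hvC : B.proj v = B.proj w := by rw [hpv, hpw]
        have hvpre : B.mul w v ∈ U := by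
          rw [hw, key_i5 B (show B.proj x = B.proj v by rw [hx, hpv])]
          exact hxU
        have hmem : v ∈ (fun u => B.mul w u) ⁻¹' U ∩ {u : H | B.proj u = B.proj w} :=
          ⟨hvpre, hvC⟩
        rw [hOeq] at hmem
        exact hmem.1
      · intro u hu
        have huC : B.proj u = B.proj w := by
          rw [show B.proj u = m from hu.2, hpw]
        have hmem : u ∈ O ∩ {u' : H | B.proj u' = B.proj w} := ⟨hu.1, huC⟩
        rw [← hOeq] at hmem
        have hguard : Tl B w u = B.mul w u := by simp [Tl, huC]
        rw [hguard]
        exact hmem.1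
    · exact ⟨Set.univ, isOpen_univ, fun h => absurd h hv⟩
  choose O hOopen hOprop using main
  obtain ⟨t, htΓ, htcov⟩ := (isCompact_fiber B m).elim_nhds_subcover O
    (fun v hv => (hOopen v).mem_nhds ((hOprop v hv).1))
  rw [pos_iff_ne_zero]
  intro h0
  have hO0 : ∀ v ∈ t, (lam m : Measure H) (O v) = 0 := by
    intro v hvt
    have hvΓ : v ∈ Γ := htΓ v hvt
    set w := B.mul x (B.inv v) with hw
    have hpw : B.proj w = m := by
      rw [hw, B.proj_mul x (B.inv v) (by rw [B.proj_inv, show B.proj v = m from hvΓ, hx]), hx]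
    have hTU : (lam m : Measure H) (Tl B w ⁻¹' U) = (lam m : Measure H) U := by
      have hinv : Measure.map (Tl B w) (lam (B.proj w) : Measure H)
          = (lam (B.proj w) : Measure H) := hlam_inv w
      rw [hpw] at hinv
      rw [← Measure.map_apply (measurable_Tl B w) hU.measurableSet, hinv]
    have h1 : (lam m : Measure H) (O v) ≤ (lam m : Measure H) ((O v ∩ Γ) ∪ Γᶜ) := by
      apply measure_mono
      intro u hu
      by_cases h : u ∈ Γ
      · exact Or.inl ⟨hu, h⟩
      · exact Or.inr h
    have h2 : (lam m : Measure H) ((O v ∩ Γ) ∪ Γᶜ)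
        ≤ (lam m : Measure H) (O v ∩ Γ) + 0 := by
      refine le_trans (measure_union_le _ _) ?_
      rw [lam_compl_zero B hlam_fiber m]
    have h3 : (lam m : Measure H) (O v ∩ Γ) ≤ (lam m : Measure H) (Tl B w ⁻¹' U) := by
      apply measure_mono
      intro u hu
      exact (hOprop v hvΓ).2 u hu
    refine le_antisymm ?_ (zero_le)
    calc (lam m : Measure H) (O v) ≤ (lam m : Measure H) (O v ∩ Γ) + 0 := h1.trans h2
      _ = (lam m : Measure H) (O v ∩ Γ) := add_zero _
      _ ≤ (lam m : Measure H) (Tl B w ⁻¹' U) := h3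
      _ = (lam m : Measure H) U := hTU
      _ = 0 := h0
  have hcontr : (1 : ℝ≥0∞) ≤ 0 := by
    calc (1 : ℝ≥0∞) = (lam m : Measure H) Γ := (lam_fiber_one B hlam_fiber m).symm
      _ ≤ (lam m : Measure H) (⋃ v ∈ t, O v) := measure_mono htcov
      _ ≤ ∑ v ∈ t, (lam m : Measure H) (O v) := measure_biUnion_finset_le t O
      _ = 0 := by
          rw [Finset.sum_congr rfl hO0]
          simp
  simp at hcontr

theorem backward_dir (B : CompactGroupBundle H M)
    (hlam_fiber : ∀ m : M, ((lam m : Measure H)).map B.proj = Measure.dirac m)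
    (hlam_inv : ∀ x : H,
      ((lam (B.proj x) : Measure H)).map
          (fun y => if B.proj y = B.proj x then B.mul x y else y) =
        (lam (B.proj x) : Measure H))
    (hcont : Continuous lam) : IsOpenMap B.proj := by
  intro U hU
  rw [isOpen_iff_forall_mem_open]
  rintro m ⟨x, hxU, rfl⟩
  obtain ⟨g, hg0, hg1, hg01⟩ := exists_continuous_zero_one_of_isClosed
    hU.isClosed_compl isClosed_singleton
    (Set.disjoint_singleton_right.mpr (fun h => h hxU))
  set G : Set H := g ⁻¹' (Set.Ioi (1/2 : ℝ)) with hGdef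
  have hGopen : IsOpen G := g.continuous.isOpen_preimage _ isOpen_Ioi
  have hxG : x ∈ G := by
    have : g x = 1 := hg1 rfl
    show g x ∈ Set.Ioi (1/2 : ℝ)
    rw [this]
    norm_num
  have hGU : G ⊆ U := by
    intro u hu
    by_contra huU
    have : g u = 0 := hg0 huU
    have hu' : (1/2 : ℝ) < g u := hu
    rw [this] at hu'
    norm_num at hu'
  have hpos : 0 < (lam (B.proj x) : Measure H) G :=
    haar_pos B hlam_fiber hlam_inv hGopen hxG rfl
  set fb : H →ᵇ ℝ := BoundedContinuousFunction.mkOfCompact g with hfb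
  have hφcont : Continuous (fun m' => ∫ u, fb u ∂(lam m' : Measure H)) := by
    exact (MeasureTheory.ProbabilityMeasure.continuous_integral_boundedContinuousFunction
      fb).comp hcont
  have hφpos : 0 < ∫ u, fb u ∂(lam (B.proj x) : Measure H) := by
    have hGmeas : MeasurableSet G := hGopen.measurableSet
    have hint : Integrable (fun u => fb u) (lam (B.proj x) : Measure H) :=
      fb.integrable _
    have h1 : (1/2 : ℝ) * ((lam (B.proj x) : Measure H) G).toReal
        ≤ ∫ u in G, fb u ∂(lam (B.proj x) : Measure H) := by
      have := setIntegral_mono_on (f := fun _ => (1/2 : ℝ)) (g := fun u => fb u)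
        ((integrableOn_const_iff enorm_ne_top).mpr (Or.inr (measure_lt_top _ _))) hint.integrableOn hGmeas
        (fun u hu => le_of_lt (by exact hu))
      rwa [setIntegral_const, smul_eq_mul, mul_comm] at this
    have h2 : (∫ u in G, fb u ∂(lam (B.proj x) : Measure H))
        ≤ ∫ u, fb u ∂(lam (B.proj x) : Measure H) :=
      setIntegral_le_integral hint (Filter.Eventually.of_forall fun u => (hg01 u).1)
    have h3 : 0 < (1/2 : ℝ) * ((lam (B.proj x) : Measure H) G).toReal := by
      apply mul_pos (by norm_num)
      exact ENNReal.toReal_pos (pos_iff_ne_zero.mp hpos) (measure_ne_top _ _)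
    linarith
  refine ⟨(fun m' => ∫ u, fb u ∂(lam m' : Measure H)) ⁻¹' (Set.Ioi 0), ?_, ?_, hφpos⟩
  · intro m' hm'
    have hm'pos : 0 < ∫ u, fb u ∂(lam m' : Measure H) := hm'
    by_contra hm'U
    have hfiber : ∀ u : H, B.proj u = m' → u ∉ U := by
      intro u hu huU
      exact hm'U ⟨u, huU, hu⟩
    have : (∫ u, fb u ∂(lam m' : Measure H)) = 0 := by
      rw [show (0:ℝ) = ∫ (_ : H), (0:ℝ) ∂(lam m' : Measure H) by simp]
      apply integral_congr_ae
      filter_upwards [lam_ae_mem B hlam_fiber m'] with u hu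
      exact hg0 (hfiber u hu)
    rw [this] at hm'pos
    exact lt_irrefl 0 hm'pos
  · exact hφcont.isOpen_preimage _ isOpen_Ioi

theorem forward_dir (B : CompactGroupBundle H M)
    (hlam_fiber : ∀ m : M, ((lam m : Measure H)).map B.proj = Measure.dirac m)
    (hlam_reg : ∀ m : M, (lam m : Measure H).Regular)
    (hlam_inv : ∀ x : H,
      ((lam (B.proj x) : Measure H)).map
          (fun y => if B.proj y = B.proj x then B.mul x y else y) =
        (lam (B.proj x) : Measure H))
    (hopen : IsOpenMap B.proj) : Continuous lam := by
  rw [continuous_iff_continuousAt]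
  intro m₀
  show Filter.Tendsto lam (nhds m₀) (nhds (lam m₀))
  rw [MeasureTheory.ProbabilityMeasure.tendsto_iff_forall_integral_tendsto]
  intro f
  rw [Metric.tendsto_nhds]
  intro ε hε
  have hε3 : 0 < ε / 3 := by linarith
  obtain ⟨n, y, c, hyproj, hcnn, hcsum, happrox⟩ :=
    integral_approx B hlam_fiber hlam_inv m₀ f hε3
  set Γ : Set H := B.proj ⁻¹' {m₀} with hΓdef
  set I : ℝ := ∫ v, f v ∂(lam m₀ : Measure H) with hI
  set yv : Fin n → H := fun i => y i with hyv
  set g : H × (Fin n → H) → ℝ :=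
    fun q => ∑ i : Fin n, c i * f (B.mul q.1 (q.2 i)) with hg
  set E : Set (H × (Fin n → H)) := {q | ∀ i, B.proj (q.2 i) = B.proj q.1} with hE
  -- continuity of g on E
  have hgcont : ContinuousOn g E := by
    apply continuousOn_finset_sum
    intro i _
    have hφ : Continuous (fun q : H × (Fin n → H) => (q.1, q.2 i)) :=
      continuous_fst.prodMk ((continuous_apply i).comp continuous_snd)
    have hmaps : Set.MapsTo (fun q : H × (Fin n → H) => (q.1, q.2 i)) E
        {xy : H × H | B.proj xy.1 = B.proj xy.2} := fun q hq => (hq i).symm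
    have hterm : ContinuousOn (fun q : H × (Fin n → H) => f (B.mul q.1 (q.2 i))) E :=
      f.continuous.comp_continuousOn (B.continuousOn_mul.comp hφ.continuousOn hmaps)
    exact continuousOn_const.mul hterm
  -- relative openness of the good set
  obtain ⟨O, hOopen, hOeq⟩ := (continuousOn_iff').mp hgcont
    (Metric.ball I (2 * ε / 3)) Metric.isOpen_ball
  -- K ⊆ O
  have hKO : Γ ×ˢ ({yv} : Set (Fin n → H)) ⊆ O := by
    rintro ⟨w, v⟩ ⟨hw, hv⟩
    have hv' : v = yv := hv
    have hwΓ : B.proj w = m₀ := hw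
    have hqE : (w, v) ∈ E := by
      intro i
      rw [hv']
      show B.proj (y i) = B.proj w
      rw [hyproj i, hwΓ]
    have hgq : g (w, v) = ∑ i ∈ Finset.range n, c i * f (B.mul w (y i)) := by
      rw [hg, hv']
      exact Fin.sum_univ_eq_sum_range (fun i => c i * f (B.mul w (y i))) n
    have hball : g (w, v) ∈ Metric.ball I (2 * ε / 3) := by
      rw [Metric.mem_ball, Real.dist_eq, hgq]
      have := happrox w hw
      calc |(∑ i ∈ Finset.range n, c i * f (B.mul w (y i))) - I| ≤ ε / 3 := by
            rw [abs_sub_comm]; exact this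
        _ < 2 * ε / 3 := by linarith
    have hmem : (w, v) ∈ g ⁻¹' Metric.ball I (2 * ε / 3) ∩ E := ⟨hball, hqE⟩
    rw [hOeq] at hmem
    exact hmem.1
  -- tube lemma
  obtain ⟨Uo, Vo, hUoopen, hVoopen, hΓUo, hyvVo, hUV⟩ :=
    generalized_tube_lemma (isCompact_fiber B m₀) isCompact_singleton hOopen hKO
  -- box neighborhood inside Vo
  obtain ⟨u, hu, hpiu⟩ := (isOpen_pi_iff').mp hVoopen yv (hyvVo rfl)
  -- the neighborhood W of m₀
  set W : Set M := (B.proj '' Uoᶜ)ᶜ ∩ ⋂ i : Fin n, B.proj '' (u i) with hW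
  have hWopen : IsOpen W := by
    apply IsOpen.inter
    · rw [isOpen_compl_iff]
      exact ((IsClosed.isCompact (isClosed_compl_iff.mpr hUoopen)).image
        B.continuous_proj).isClosed
    · exact isOpen_iInter_of_finite fun i => hopen _ (hu i).1
  have hm₀W : m₀ ∈ W := by
    constructor
    · intro hmem
      obtain ⟨h, hhU, hh⟩ := hmem
      exact hhU (hΓUo (show h ∈ Γ from hh))
    · apply Set.mem_iInter.mpr
      intro i
      exact ⟨yv i, (hu i).2, by show B.proj (y i) = m₀; exact hyproj i⟩
  -- main estimate on W
  have hmain : ∀ m ∈ W, dist (∫ v, f v ∂(lam m : Measure H)) I < ε := by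
    intro m hm
    obtain ⟨hm1, hm2⟩ := hm
    have hv : ∀ i : Fin n, ∃ v : H, v ∈ u i ∧ B.proj v = m := by
      intro i
      obtain ⟨v, hvu, hvp⟩ := Set.mem_iInter.mp hm2 i
      exact ⟨v, hvu, hvp⟩
    choose v hvu hvp using hv
    -- fibers over m are inside Uo
    have hfibU : ∀ x : H, B.proj x = m → x ∈ Uo := by
      intro x hx
      by_contra hxU
      exact hm1 ⟨x, hxU, hx⟩
    -- right-invariance: ∫ f dλ_m = ∫ A dλ_m
    have hri : (∫ x, f x ∂(lam m : Measure H))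
        = ∫ x, (∑ i : Fin n, c i * f (Tr B (v i) x)) ∂(lam m : Measure H) := by
      rw [integral_finset_sum _ (fun i _ =>
        (integrable_comp f (measurable_Tr B (v i)) _).const_mul (c i))]
      calc (∫ x, f x ∂(lam m : Measure H))
          = (∑ i : Fin n, c i) * ∫ x, f x ∂(lam m : Measure H) := by
            rw [Fin.sum_univ_eq_sum_range (fun i => c i) n, hcsum, one_mul]
        _ = ∑ i : Fin n, c i * ∫ x, f x ∂(lam m : Measure H) := by
            rw [Finset.sum_mul]
        _ = ∑ i : Fin n, c i * ∫ x, f (Tr B (v i) x) ∂(lam m : Measure H) := by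
            refine Finset.sum_congr rfl fun i hi => ?_
            rw [integral_Tr B hlam_fiber hlam_reg hlam_inv (hvp i) f]
        _ = ∑ i ∈ Finset.univ, ∫ x, c i.1 * f (Tr B (v i) x) ∂(lam m : Measure H) := by
            refine Finset.sum_congr rfl fun i hi => ?_
            rw [integral_const_mul]
    -- pointwise bound a.e.
    have hbound : ∀ᵐ x ∂(lam m : Measure H),
        ‖(∑ i : Fin n, c i * f (Tr B (v i) x)) - I‖ ≤ 2 * ε / 3 := by
      filter_upwards [lam_ae_mem B hlam_fiber m] with x hx
      have hxUo : x ∈ Uo := hfibU x hx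
      have hqE : (x, v) ∈ E := by
        intro i
        show B.proj (v i) = B.proj x
        rw [hvp i, hx]
      have hqUV : (x, v) ∈ Uo ×ˢ Vo := by
        refine ⟨hxUo, ?_⟩
        apply hpiu
        intro i _
        exact hvu i
      have hmem : (x, v) ∈ g ⁻¹' Metric.ball I (2 * ε / 3) ∩ E := by
        rw [hOeq]
        exact ⟨hUV hqUV, hqE⟩
      have hball : |g (x, v) - I| < 2 * ε / 3 := by
        have h' := hmem.1
        rwa [Set.mem_preimage, Metric.mem_ball, Real.dist_eq] at h'
      have hgv : g (x, v) = ∑ i : Fin n, c i * f (Tr B (v i) x) := by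
        rw [hg]
        refine Finset.sum_congr rfl fun i _ => ?_
        have hTrv : Tr B (v i) x = B.mul x (v i) := by
          have hpxv : B.proj x = B.proj (v i) := by rw [hx, hvp i]
          simp [Tr, hpxv]
        rw [hTrv]
      rw [Real.norm_eq_abs]
      rw [hgv] at hball
      exact le_of_lt hball
    -- conclude
    have hAint : Integrable (fun x => ∑ i : Fin n, c i * f (Tr B (v i) x))
        (lam m : Measure H) :=
      integrable_finset_sum _ (fun i _ =>
        (integrable_comp f (measurable_Tr B (v i)) _).const_mul (c i))
    have hdiff : (∫ x, f x ∂(lam m : Measure H)) - I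
        = ∫ x, ((∑ i : Fin n, c i * f (Tr B (v i) x)) - I) ∂(lam m : Measure H) := by
      rw [integral_sub hAint (integrable_const I), integral_const]
      rw [← hri]
      simp [measure_univ]
    rw [Real.dist_eq, hdiff, ← Real.norm_eq_abs]
    calc ‖∫ x, ((∑ i : Fin n, c i * f (Tr B (v i) x)) - I) ∂(lam m : Measure H)‖
        ≤ (2 * ε / 3) * ((lam m : Measure H) Set.univ).toReal :=
          norm_integral_le_of_norm_le_const hbound
      _ = 2 * ε / 3 := by simp [measure_univ]
      _ < ε := by linarith
  exact Filter.eventually_of_mem (hWopen.mem_nhds hm₀W) hmain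

end Meas

end CGBAux

/-- Let `p : H → M` be a compact group bundle over a compact Hausdorff space and let
`m ↦ λ_{H_m}` be the family of (normalized) Haar measures of the compact fiber groups,
viewed as fiber measures on `H` (characterized as the regular probability measures
supported on the fibers which are invariant under all left fiber translations). Then
`p` is an open map if and only if this family is continuous (equivalently, a relative
measure for `p`). -/
theorem isOpenMap_iff_haarFamily_continuous
    {H M : Type*} [TopologicalSpace H] [CompactSpace H] [T2Space H]
    [MeasurableSpace H] [BorelSpace H]
    [TopologicalSpace M] [CompactSpace M] [T2Space M]
    [MeasurableSpace M] [BorelSpace M]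
    (B : CompactGroupBundle H M)
    (lam : M → ProbabilityMeasure H)
    (hlam_fiber : ∀ m : M, ((lam m : Measure H)).map B.proj = Measure.dirac m)
    (hlam_reg : ∀ m : M, (lam m : Measure H).Regular)
    (hlam_inv : ∀ x : H,
      ((lam (B.proj x) : Measure H)).map
          (fun y => if B.proj y = B.proj x then B.mul x y else y) =
        (lam (B.proj x) : Measure H)) :
    IsOpenMap B.proj ↔ Continuous lam := by
  constructor
  · intro h
    exact CGBAux.forward_dir B hlam_fiber hlam_reg hlam_inv h
  · intro h
    exact CGBAux.backward_dir B hlam_fiber hlam_inv h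
end

section
/- Let p : H → M be an open compact group bundle over a compact Hausdorff space M and f ∈ C(H). Then the map M → [0,∞), m ↦ ‖f|_{H_m}‖_{C*(H_m)}, assigning to m the norm of the restriction of f in the group C*-algebra of the compact fiber group H_m, is lower semicontinuous. -/
set_option linter.unusedSectionVars false
set_option linter.unusedVariables false
set_option maxHeartbeats 1000000


open scoped Classical

open MeasureTheory

namespace CompactGroupBundle

variable {H M : Type*} [TopologicalSpace H] [TopologicalSpace M]
  (B : CompactGroupBundle H M)

lemma mul_inv_cancel'' (x : H) : B.mul x (B.inv x) = B.one (B.proj x) := by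
  have hpi := B.proj_inv x
  have hpii := B.proj_inv (B.inv x)
  -- x * x⁻¹ = (x⁻¹⁻¹ * x⁻¹) * (x * x⁻¹) = x⁻¹⁻¹ * ((x⁻¹ * x) * x⁻¹) = x⁻¹⁻¹ * x⁻¹ = 1
  have h1 : B.mul (B.inv (B.inv x)) (B.inv x) = B.one (B.proj x) := by
    rw [B.inv_mul_cancel' (B.inv x), hpi]
  have hassoc : B.mul (B.mul (B.inv (B.inv x)) (B.inv x)) (B.mul x (B.inv x))
      = B.mul (B.inv (B.inv x)) (B.mul (B.inv x) (B.mul x (B.inv x))) := by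
    apply B.mul_assoc' <;> simp [hpi, hpii, B.proj_mul _ _ hpi.symm]
  have h2 : B.mul (B.inv x) (B.mul x (B.inv x))
      = B.mul (B.mul (B.inv x) x) (B.inv x) :=
    (B.mul_assoc' _ _ _ hpi hpi.symm).symm
  have h3 : B.mul (B.mul (B.inv x) x) (B.inv x) = B.inv x := by
    rw [B.inv_mul_cancel' x]
    have := B.one_mul' (B.inv x); rwa [hpi] at this
  calc B.mul x (B.inv x)
      = B.mul (B.one (B.proj x)) (B.mul x (B.inv x)) := by
        have := B.one_mul' (B.mul x (B.inv x))
        rw [B.proj_mul x (B.inv x) hpi.symm] at this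
        exact this.symm
    _ = B.mul (B.mul (B.inv (B.inv x)) (B.inv x)) (B.mul x (B.inv x)) := by rw [h1]
    _ = B.mul (B.inv (B.inv x)) (B.mul (B.inv x) (B.mul x (B.inv x))) := hassoc
    _ = B.mul (B.inv (B.inv x)) (B.inv x) := by rw [h2, h3]
    _ = B.one (B.proj x) := h1

lemma inv_inv' (x : H) : B.inv (B.inv x) = x := by
  have hpi := B.proj_inv x
  have hpii := B.proj_inv (B.inv x)
  calc B.inv (B.inv x) = B.mul (B.inv (B.inv x)) (B.one (B.proj x)) := by
        have := B.mul_one' (B.inv (B.inv x)); rw [hpii, hpi] at this; exact this.symm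
    _ = B.mul (B.inv (B.inv x)) (B.mul (B.inv x) x) := by rw [B.inv_mul_cancel' x]
    _ = B.mul (B.mul (B.inv (B.inv x)) (B.inv x)) x := by
        rw [B.mul_assoc' _ _ _ (by rw [hpii, hpi]) hpi]
    _ = B.mul (B.one (B.proj x)) x := by rw [B.inv_mul_cancel' (B.inv x), hpi]
    _ = x := B.one_mul' x

/-- uniqueness of left inverse -/
lemma eq_inv_of_mul_eq_one {w v : H} (hp : B.proj w = B.proj v)
    (h : B.mul w v = B.one (B.proj v)) : w = B.inv v := by
  have hpi := B.proj_inv v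
  calc w = B.mul w (B.one (B.proj v)) := by
        have := B.mul_one' w; rw [hp] at this; exact this.symm
    _ = B.mul w (B.mul v (B.inv v)) := by rw [B.mul_inv_cancel'' v]
    _ = B.mul (B.mul w v) (B.inv v) := by
        rw [B.mul_assoc' _ _ _ hp hpi.symm]
    _ = B.mul (B.one (B.proj v)) (B.inv v) := by rw [h]
    _ = B.inv v := by
        have := B.one_mul' (B.inv v); rw [hpi] at this; exact this

lemma mul_inv_rev' {a b : H} (hp : B.proj a = B.proj b) :
    B.inv (B.mul a b) = B.mul (B.inv b) (B.inv a) := by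
  have hpa := B.proj_inv a
  have hpb := B.proj_inv b
  have hpab : B.proj (B.mul a b) = B.proj a := B.proj_mul _ _ hp
  refine (B.eq_inv_of_mul_eq_one ?_ ?_).symm
  · rw [B.proj_mul _ _ (by rw [hpb, hpa, hp]), hpb, hpab, hp]
  · -- (b⁻¹ a⁻¹)(ab) = b⁻¹ (a⁻¹ (a b)) = b⁻¹ ((a⁻¹ a) b) = b⁻¹ b = 1
    have h4 : B.mul (B.inv a) (B.mul a b) = b := by
      rw [← B.mul_assoc' _ _ _ hpa hp, B.inv_mul_cancel' a, hp, B.one_mul' b]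
    rw [B.mul_assoc' _ _ _ (by rw [hpb, hpa, hp]) (by rw [hpa, hpab]), h4,
      B.inv_mul_cancel' b, hpab, hp]

lemma inv_mul_eq_inv {z y : H} (hp : B.proj z = B.proj y) :
    B.mul (B.inv z) y = B.inv (B.mul (B.inv y) z) := by
  rw [B.mul_inv_rev' (by rw [B.proj_inv, hp]), B.inv_inv']

end CompactGroupBundle

section MeasureFacts

variable {H M : Type*} [TopologicalSpace H] [CompactSpace H] [T2Space H]
    [MeasurableSpace H] [BorelSpace H]
    [TopologicalSpace M] [CompactSpace M] [T2Space M]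
    [MeasurableSpace M] [BorelSpace M]

/-- Integrability of continuous maps on a compact space wrt a finite measure. -/
lemma cmap_integrable (u : C(H, ℂ)) (μ : Measure H) [IsFiniteMeasure μ] :
    Integrable (fun x => u x) μ := by
  refine ⟨u.continuous.aestronglyMeasurable, ?_⟩
  exact MeasureTheory.HasFiniteIntegral.of_bounded
    (C := ‖u‖) (Filter.Eventually.of_forall fun x => u.norm_coe_le_norm x)

/-- The integral against a probability measure is 1-Lipschitz in the sup norm. -/
lemma integral_dist_le (μ : Measure H) [IsProbabilityMeasure μ] (u v : C(H, ℂ)) :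
    dist (∫ x, u x ∂μ) (∫ x, v x ∂μ) ≤ dist u v := by
  rw [dist_eq_norm, ← integral_sub (cmap_integrable u μ) (cmap_integrable v μ)]
  calc ‖∫ x, (u x - v x) ∂μ‖ ≤ ∫ x, ‖u x - v x‖ ∂μ := norm_integral_le_integral_norm _
    _ ≤ ∫ _, dist u v ∂μ := by
        refine integral_mono_of_nonneg (Filter.Eventually.of_forall fun x => norm_nonneg _)
          (integrable_const _) (Filter.Eventually.of_forall fun x => ?_)
        show ‖u x - v x‖ ≤ dist u v
        rw [← dist_eq_norm]
        exact ContinuousMap.dist_apply_le_dist x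
    _ = dist u v := by simp

/-- Continuity of a parametric integral of a two-variable continuous map. -/
lemma continuous_param_integral (G : C(H × H, ℂ)) (μ : Measure H) [IsProbabilityMeasure μ] :
    Continuous (fun x => ∫ y, G (x, y) ∂μ) := by
  have : (fun x => ∫ y, G (x, y) ∂μ) = (fun u : C(H, ℂ) => ∫ y, u y ∂μ) ∘ (G.curry) := by
    funext x; simp [ContinuousMap.curry_apply]
  rw [this]
  have hlip : LipschitzWith 1 (fun u : C(H, ℂ) => ∫ y, u y ∂μ) := by
    refine LipschitzWith.of_dist_le_mul fun u v => ?_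
    simpa using integral_dist_le μ u v
  exact hlip.continuous.comp G.curry.continuous

variable (B : CompactGroupBundle H M)

lemma isClosed_fiberSet : IsClosed {p : H × H | B.proj p.1 = B.proj p.2} :=
  isClosed_eq ((B.continuous_proj).comp continuous_fst) ((B.continuous_proj).comp continuous_snd)

/-- Tietze extension of a function continuous on the fiber product set. -/
lemma exists_ext (φ : H × H → ℂ) (hφ : ContinuousOn φ {p : H × H | B.proj p.1 = B.proj p.2}) :
    ∃ G : C(H × H, ℂ), ∀ p : H × H, B.proj p.1 = B.proj p.2 → G p = φ p := by
  obtain ⟨G, hG⟩ := ContinuousMap.exists_restrict_eq (Y := ℂ)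
    (isClosed_fiberSet B) ⟨_, hφ.restrict⟩
  refine ⟨G, fun p hp => ?_⟩
  have := DFunLike.congr_fun hG (⟨p, hp⟩ : {p : H × H | B.proj p.1 = B.proj p.2})
  exact this

/-- Existence of a continuous extension of `g ∘ mul`. -/
lemma exists_mul_ext (g : C(H, ℂ)) :
    ∃ G : C(H × H, ℂ), ∀ p : H × H, B.proj p.1 = B.proj p.2 → G p = g (B.mul p.1 p.2) := by
  exact exists_ext B _ (g.continuous.comp_continuousOn B.continuousOn_mul)

variable (lam : M → ProbabilityMeasure H)

/-- Almost every point lies in the fiber. -/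
lemma ae_proj (hfib : ∀ m : M, ((lam m : Measure H)).map B.proj = Measure.dirac m) (m : M) :
    ∀ᵐ y ∂(lam m : Measure H), B.proj y = m := by
  have h2 : ((lam m : Measure H).map B.proj) ({m}ᶜ) = 0 := by
    rw [hfib m, Measure.dirac_apply' _ (measurableSet_singleton m).compl]
    simp
  rw [Measure.map_apply (B.continuous_proj.measurable) (measurableSet_singleton m).compl] at h2
  rw [ae_iff]
  convert h2 using 2
  ext y; simp

/-- Left translation invariance of the integrals, via a continuous extension. -/
lemma translate_integral
    (hinv : ∀ x : H,
      ((lam (B.proj x) : Measure H)).map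
          (fun y => if B.proj y = B.proj x then B.mul x y else y) =
        (lam (B.proj x) : Measure H))
    (hfib : ∀ m : M, ((lam m : Measure H)).map B.proj = Measure.dirac m)
    (g : C(H, ℂ)) (G : C(H × H, ℂ))
    (hG : ∀ p : H × H, B.proj p.1 = B.proj p.2 → G p = g (B.mul p.1 p.2)) (x : H) :
    ∫ y, G (x, y) ∂(lam (B.proj x) : Measure H) = ∫ y, g y ∂(lam (B.proj x) : Measure H) := by
  set μ := (lam (B.proj x) : Measure H)
  set τ := fun y => if B.proj y = B.proj x then B.mul x y else y with hτ
  have hmap : μ.map τ = μ := hinv x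
  have hae : AEMeasurable τ μ := by
    by_contra hc
    rw [Measure.map_of_not_aemeasurable hc] at hmap
    exact (IsProbabilityMeasure.ne_zero μ) hmap.symm
  calc ∫ y, G (x, y) ∂μ
      = ∫ y, g (τ y) ∂μ := by
        refine integral_congr_ae ?_
        filter_upwards [ae_proj B lam hfib (B.proj x)] with y hy
        rw [hτ]; simp only [hy, if_true]
        exact hG (x, y) hy.symm
    _ = ∫ y, g y ∂(μ.map τ) :=
        (integral_map hae (g.continuous.aestronglyMeasurable)).symm
    _ = ∫ y, g y ∂μ := by rw [hmap]

end MeasureFacts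

section Swap

variable {H : Type*} [TopologicalSpace H] [CompactSpace H] [T2Space H]
    [MeasurableSpace H] [BorelSpace H]

/-- Integral bound for continuous maps with pointwise a.e. norm bound. -/
lemma norm_integral_ae_le (μ : Measure H) [IsProbabilityMeasure μ] (u : H → ℂ)
    (hu : Integrable u μ) (c : ℝ)
    (h : ∀ᵐ x ∂μ, ‖u x‖ ≤ c) : ‖∫ x, u x ∂μ‖ ≤ c := by
  calc ‖∫ x, u x ∂μ‖ ≤ ∫ x, ‖u x‖ ∂μ := norm_integral_le_integral_norm _
    _ ≤ ∫ _, c ∂μ := integral_mono_of_nonneg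
        (Filter.Eventually.of_forall fun x => norm_nonneg _) (integrable_const _) h
    _ = c := by simp

/-- The set of "pure tensors" in `C(H × H, ℂ)`. -/
def tensorSet (H : Type*) [TopologicalSpace H] : Set C(H × H, ℂ) :=
  {F | ∃ a b : C(H, ℂ),
    F = (a.comp ⟨Prod.fst, continuous_fst⟩) * (b.comp ⟨Prod.snd, continuous_snd⟩)}

lemma slice_integrable (F : C(H × H, ℂ)) (x : H) (ν : Measure H) [IsProbabilityMeasure ν] :
    Integrable (fun y => F (x, y)) ν :=
  cmap_integrable (F.comp ⟨Prod.mk x, Continuous.prodMk_right x⟩) ν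

lemma slice_integrable' (F : C(H × H, ℂ)) (y : H) (μ : Measure H) [IsProbabilityMeasure μ] :
    Integrable (fun x => F (x, y)) μ :=
  cmap_integrable (F.comp ⟨fun x => (x, y), Continuous.prodMk_left y⟩) μ

lemma inner_integrable (F : C(H × H, ℂ)) (μ ν : Measure H)
    [IsProbabilityMeasure μ] [IsProbabilityMeasure ν] :
    Integrable (fun x => ∫ y, F (x, y) ∂ν) μ :=
  cmap_integrable ⟨fun x => ∫ y, F (x, y) ∂ν, continuous_param_integral F ν⟩ μ

lemma inner_integrable' (F : C(H × H, ℂ)) (μ ν : Measure H)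
    [IsProbabilityMeasure μ] [IsProbabilityMeasure ν] :
    Integrable (fun y => ∫ x, F (x, y) ∂μ) ν := by
  have : Continuous (fun y => ∫ x, F (x, y) ∂μ) := by
    have := continuous_param_integral (F.comp ⟨Prod.swap, continuous_swap⟩) μ
    simpa using this
  exact cmap_integrable ⟨_, this⟩ ν

lemma swap_of_mem_span (μ ν : Measure H) [IsProbabilityMeasure μ] [IsProbabilityMeasure ν]
    (F : C(H × H, ℂ)) (hF : F ∈ Submodule.span ℂ (tensorSet H)) :
    ∫ x, ∫ y, F (x, y) ∂ν ∂μ = ∫ y, ∫ x, F (x, y) ∂μ ∂ν := by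
  induction hF using Submodule.span_induction with
  | mem F hFt =>
      obtain ⟨a, b, rfl⟩ := hFt
      have h1 : ∀ x : H, ∫ y, a x * b y ∂ν = a x * ∫ y, b y ∂ν := fun x =>
        integral_const_mul _ _
      have h2 : ∀ y : H, ∫ x, a x * b y ∂μ = (∫ x, a x ∂μ) * b y := fun y =>
        integral_mul_const _ _
      simp only [ContinuousMap.mul_apply, ContinuousMap.comp_apply, ContinuousMap.coe_mk]
      calc ∫ x, ∫ y, a x * b y ∂ν ∂μ = ∫ x, a x * ∫ y, b y ∂ν ∂μ := by
            simp only [h1]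
        _ = (∫ x, a x ∂μ) * ∫ y, b y ∂ν := integral_mul_const _ _
        _ = ∫ y, (∫ x, a x ∂μ) * b y ∂ν := (integral_const_mul _ _).symm
        _ = ∫ y, ∫ x, a x * b y ∂μ ∂ν := by simp only [h2]
  | zero => simp
  | add F₁ F₂ h₁ h₂ ih₁ ih₂ =>
      have e1 : ∫ x, ∫ y, (F₁ + F₂) (x, y) ∂ν ∂μ =
          (∫ x, ∫ y, F₁ (x, y) ∂ν ∂μ) + ∫ x, ∫ y, F₂ (x, y) ∂ν ∂μ := by
        have : (fun x => ∫ y, (F₁ + F₂) (x, y) ∂ν) =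
            fun x => (∫ y, F₁ (x, y) ∂ν) + ∫ y, F₂ (x, y) ∂ν := by
          funext x
          simp only [ContinuousMap.add_apply]
          exact integral_add (slice_integrable F₁ x ν) (slice_integrable F₂ x ν)
        rw [this]
        exact integral_add (inner_integrable F₁ μ ν) (inner_integrable F₂ μ ν)
      have e2 : ∫ y, ∫ x, (F₁ + F₂) (x, y) ∂μ ∂ν =
          (∫ y, ∫ x, F₁ (x, y) ∂μ ∂ν) + ∫ y, ∫ x, F₂ (x, y) ∂μ ∂ν := by
        have : (fun y => ∫ x, (F₁ + F₂) (x, y) ∂μ) =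
            fun y => (∫ x, F₁ (x, y) ∂μ) + ∫ x, F₂ (x, y) ∂μ := by
          funext y
          simp only [ContinuousMap.add_apply]
          exact integral_add (slice_integrable' F₁ y μ) (slice_integrable' F₂ y μ)
        rw [this]
        exact integral_add (inner_integrable' F₁ μ ν) (inner_integrable' F₂ μ ν)
      rw [e1, e2, ih₁, ih₂]
  | smul c F₀ h₀ ih =>
      have e1 : ∫ x, ∫ y, (c • F₀) (x, y) ∂ν ∂μ = c • ∫ x, ∫ y, F₀ (x, y) ∂ν ∂μ := by
        have : (fun x => ∫ y, (c • F₀) (x, y) ∂ν) = fun x => c • ∫ y, F₀ (x, y) ∂ν := by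
          funext x
          simp only [ContinuousMap.smul_apply]
          exact integral_smul c _
        rw [this]
        exact integral_smul c _
      have e2 : ∫ y, ∫ x, (c • F₀) (x, y) ∂μ ∂ν = c • ∫ y, ∫ x, F₀ (x, y) ∂μ ∂ν := by
        have : (fun y => ∫ x, (c • F₀) (x, y) ∂μ) = fun y => c • ∫ x, F₀ (x, y) ∂μ := by
          funext y
          simp only [ContinuousMap.smul_apply]
          exact integral_smul c _
        rw [this]
        exact integral_smul c _
      rw [e1, e2, ih]

lemma one_mem_tensorSet : (1 : C(H × H, ℂ)) ∈ tensorSet H := by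
  refine ⟨1, 1, ?_⟩
  ext p
  simp

lemma iterated_swap (F : C(H × H, ℂ)) (μ ν : Measure H)
    [IsProbabilityMeasure μ] [IsProbabilityMeasure ν] :
    ∫ x, ∫ y, F (x, y) ∂ν ∂μ = ∫ y, ∫ x, F (x, y) ∂μ ∂ν := by
  -- first: every element of the star subalgebra adjoin of tensorSet is in the span
  have hspan : ∀ F' ∈ StarAlgebra.adjoin ℂ (tensorSet H),
      F' ∈ Submodule.span ℂ (tensorSet H) := by
    intro F' hF'
    induction hF' using StarAlgebra.adjoin_induction with
    | mem x hx => exact Submodule.subset_span hx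
    | algebraMap c =>
        rw [Algebra.algebraMap_eq_smul_one]
        exact Submodule.smul_mem _ _ (Submodule.subset_span one_mem_tensorSet)
    | add x y hx hy ihx ihy => exact Submodule.add_mem _ ihx ihy
    | mul x y hx hy ihx ihy =>
        have := Submodule.mul_mem_mul ihx ihy
        rw [Submodule.span_mul_span] at this
        refine Submodule.span_le.2 ?_ this
        rintro z ⟨z₁, hz₁, z₂, hz₂, rfl⟩
        obtain ⟨a₁, b₁, rfl⟩ := hz₁
        obtain ⟨a₂, b₂, rfl⟩ := hz₂
        refine Submodule.subset_span ⟨a₁ * a₂, b₁ * b₂, ?_⟩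
        ext p
        simp only [ContinuousMap.mul_apply, ContinuousMap.comp_apply, ContinuousMap.coe_mk]
        ring
    | star x hx ih =>
        clear hx
        induction ih using Submodule.span_induction with
        | mem z hz =>
            obtain ⟨a, b, rfl⟩ := hz
            refine Submodule.subset_span ⟨star a, star b, ?_⟩
            ext p
            simp only [ContinuousMap.star_apply, ContinuousMap.mul_apply,
              ContinuousMap.comp_apply, ContinuousMap.coe_mk]
            simp [star_mul']
        | zero => simp
        | add z w hz hw ihz ihw =>
            rw [star_add]
            exact Submodule.add_mem _ ihz ihw
        | smul c z hz ihz =>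
            rw [star_smul]
            exact Submodule.smul_mem _ _ ihz
  -- separates points
  have hsep : (StarAlgebra.adjoin ℂ (tensorSet H)).SeparatesPoints := by
    intro p q hpq
    have : p.1 ≠ q.1 ∨ p.2 ≠ q.2 := by
      by_contra hc
      push_neg at hc
      exact hpq (Prod.ext hc.1 hc.2)
    rcases this with hne | hne
    · obtain ⟨a, ha0, ha1, _⟩ := exists_continuous_zero_one_of_isClosed
        (isClosed_singleton (x := p.1)) (isClosed_singleton (x := q.1))
        (by simp [Set.disjoint_singleton, hne])
      set a' : C(H, ℂ) := ⟨fun x => ((a x : ℝ) : ℂ), Complex.continuous_ofReal.comp a.continuous⟩ with ha'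
      set F₀ : C(H × H, ℂ) := a'.comp ⟨Prod.fst, continuous_fst⟩ with hF₀
      have hmem : F₀ ∈ StarAlgebra.adjoin ℂ (tensorSet H) :=
        StarAlgebra.subset_adjoin ℂ _ ⟨a', 1, by ext r; simp [hF₀]⟩
      refine ⟨_, ⟨F₀, hmem, rfl⟩, ?_⟩
      have h0 : a p.1 = 0 := ha0 (Set.mem_singleton _)
      have h1 : a q.1 = 1 := ha1 (Set.mem_singleton _)
      simp [hF₀, ha', h0, h1]
    · obtain ⟨a, ha0, ha1, _⟩ := exists_continuous_zero_one_of_isClosed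
        (isClosed_singleton (x := p.2)) (isClosed_singleton (x := q.2))
        (by simp [Set.disjoint_singleton, hne])
      set a' : C(H, ℂ) := ⟨fun x => ((a x : ℝ) : ℂ), Complex.continuous_ofReal.comp a.continuous⟩ with ha'
      set F₀ : C(H × H, ℂ) := a'.comp ⟨Prod.snd, continuous_snd⟩ with hF₀
      have hmem : F₀ ∈ StarAlgebra.adjoin ℂ (tensorSet H) :=
        StarAlgebra.subset_adjoin ℂ _ ⟨1, a', by ext r; simp [hF₀]⟩
      refine ⟨_, ⟨F₀, hmem, rfl⟩, ?_⟩
      have h0 : a p.2 = 0 := ha0 (Set.mem_singleton _)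
      have h1 : a q.2 = 1 := ha1 (Set.mem_singleton _)
      simp [hF₀, ha', h0, h1]
  have hcl := ContinuousMap.starSubalgebra_topologicalClosure_eq_top_of_separatesPoints _ hsep
  have hFcl : F ∈ closure ((StarAlgebra.adjoin ℂ (tensorSet H) :
      StarSubalgebra ℂ C(H × H, ℂ)) : Set C(H × H, ℂ)) := by
    have : F ∈ (StarAlgebra.adjoin ℂ (tensorSet H)).topologicalClosure := by
      rw [hcl]; trivial
    exact this
  have key : ∀ W W' : C(H × H, ℂ),
      ‖(∫ x, ∫ y, W (x, y) ∂ν ∂μ) - ∫ x, ∫ y, W' (x, y) ∂ν ∂μ‖ ≤ dist W W' := by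
    intro W W'
    have h1 : (∫ x, ∫ y, W (x, y) ∂ν ∂μ) - ∫ x, ∫ y, W' (x, y) ∂ν ∂μ
        = ∫ x, ∫ y, (W - W') (x, y) ∂ν ∂μ := by
      rw [← integral_sub (inner_integrable W μ ν) (inner_integrable W' μ ν)]
      congr 1
      funext x
      rw [← integral_sub (slice_integrable W x ν) (slice_integrable W' x ν)]
      rfl
    rw [h1]
    have hb : ∀ x, ‖∫ y, (W - W') (x, y) ∂ν‖ ≤ dist W W' := fun x =>
      norm_integral_ae_le ν _ (slice_integrable _ x ν) _ (.of_forall fun y => by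
        simpa [ContinuousMap.sub_apply, dist_eq_norm] using
          ContinuousMap.dist_apply_le_dist (f := W) (g := W') (x, y))
    exact norm_integral_ae_le μ _ (inner_integrable _ μ ν) _ (.of_forall hb)
  have key' : ∀ W W' : C(H × H, ℂ),
      ‖(∫ y, ∫ x, W (x, y) ∂μ ∂ν) - ∫ y, ∫ x, W' (x, y) ∂μ ∂ν‖ ≤ dist W W' := by
    intro W W'
    have h1 : (∫ y, ∫ x, W (x, y) ∂μ ∂ν) - ∫ y, ∫ x, W' (x, y) ∂μ ∂ν
        = ∫ y, ∫ x, (W - W') (x, y) ∂μ ∂ν := by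
      rw [← integral_sub (inner_integrable' W μ ν) (inner_integrable' W' μ ν)]
      congr 1
      funext y
      rw [← integral_sub (slice_integrable' W y μ) (slice_integrable' W' y μ)]
      rfl
    rw [h1]
    have hb : ∀ y, ‖∫ x, (W - W') (x, y) ∂μ‖ ≤ dist W W' := fun y =>
      norm_integral_ae_le μ _ (slice_integrable' _ y μ) _ (.of_forall fun x => by
        simpa [ContinuousMap.sub_apply, dist_eq_norm] using
          ContinuousMap.dist_apply_le_dist (f := W) (g := W') (x, y))
    exact norm_integral_ae_le ν _ (inner_integrable' _ μ ν) _ (.of_forall hb)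
  refine eq_of_forall_dist_le fun ε hε => ?_
  obtain ⟨F', hF'A, hdist⟩ := Metric.mem_closure_iff.1 hFcl (ε/2) (by positivity)
  have hsw := swap_of_mem_span μ ν F' (hspan F' hF'A)
  have h1 := key F F'
  have h2 := key' F F'
  rw [hsw] at h1
  calc dist (∫ x, ∫ y, F (x, y) ∂ν ∂μ) (∫ y, ∫ x, F (x, y) ∂μ ∂ν)
      ≤ dist (∫ x, ∫ y, F (x, y) ∂ν ∂μ) (∫ y, ∫ x, F' (x, y) ∂μ ∂ν) +
        dist (∫ y, ∫ x, F' (x, y) ∂μ ∂ν) (∫ y, ∫ x, F (x, y) ∂μ ∂ν) := dist_triangle _ _ _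
    _ ≤ dist F F' + dist F F' := by
        rw [dist_eq_norm, dist_eq_norm]
        exact add_le_add h1 (by simpa [norm_sub_rev] using h2)
    _ ≤ ε/2 + ε/2 := add_le_add hdist.le hdist.le
    _ = ε := by ring

end Swap

section Inversion

variable {H M : Type*} [TopologicalSpace H] [CompactSpace H] [T2Space H]
    [MeasurableSpace H] [BorelSpace H]
    [TopologicalSpace M] [CompactSpace M] [T2Space M]
    [MeasurableSpace M] [BorelSpace M]
    (B : CompactGroupBundle H M) (lam : M → ProbabilityMeasure H)

lemma key_C1
    (hinv : ∀ x : H,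
      ((lam (B.proj x) : Measure H)).map
          (fun y => if B.proj y = B.proj x then B.mul x y else y) =
        (lam (B.proj x) : Measure H))
    (hfib : ∀ m : M, ((lam m : Measure H)).map B.proj = Measure.dirac m)
    (m : M) (g : C(H, ℂ)) (G : C(H × H, ℂ))
    (hG : ∀ p : H × H, B.proj p.1 = B.proj p.2 → G p = g (B.mul p.1 p.2))
    (y : H) (hy : B.proj y = m) :
    ∫ x, G (x, y) ∂((lam m : Measure H).map B.inv) =
      ∫ z, g (B.inv z) ∂(lam m : Measure H) := by
  set μ := (lam m : Measure H)
  set g' : C(H, ℂ) := g.comp ⟨B.inv, B.continuous_inv⟩ with hg'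
  obtain ⟨G', hG'⟩ := exists_mul_ext B g'
  have hmeas : Measurable B.inv := B.continuous_inv.measurable
  have step1 : ∫ x, G (x, y) ∂(μ.map B.inv) = ∫ z, G (B.inv z, y) ∂μ := by
    refine integral_map hmeas.aemeasurable ?_
    exact (G.continuous.comp (Continuous.prodMk_left y)).aestronglyMeasurable
  have step2 : ∫ z, G (B.inv z, y) ∂μ = ∫ z, G' (B.inv y, z) ∂μ := by
    refine integral_congr_ae ?_
    filter_upwards [ae_proj B lam hfib m] with z hz
    have h1 : B.proj (B.inv z) = B.proj y := by rw [B.proj_inv, hz, hy]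
    have h2 : B.proj (B.inv y) = B.proj z := by rw [B.proj_inv, hz, hy]
    rw [hG (B.inv z, y) h1, hG' (B.inv y, z) h2]
    show g (B.mul (B.inv z) y) = g' (B.mul (B.inv y) z)
    rw [B.inv_mul_eq_inv (hz.trans hy.symm)]
    rfl
  have step3 : ∫ z, G' (B.inv y, z) ∂μ = ∫ z, g' z ∂μ := by
    have := translate_integral B lam hinv hfib g' G' hG' (B.inv y)
    rw [B.proj_inv y, hy] at this
    exact this
  rw [step1, step2, step3]
  rfl

lemma inv_integral
    (hinv : ∀ x : H,
      ((lam (B.proj x) : Measure H)).map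
          (fun y => if B.proj y = B.proj x then B.mul x y else y) =
        (lam (B.proj x) : Measure H))
    (hfib : ∀ m : M, ((lam m : Measure H)).map B.proj = Measure.dirac m)
    (m : M) (g : C(H, ℂ)) :
    ∫ z, g (B.inv z) ∂(lam m : Measure H) = ∫ z, g z ∂(lam m : Measure H) := by
  set μ := (lam m : Measure H)
  obtain ⟨G, hG⟩ := exists_mul_ext B g
  have hmeas : Measurable B.inv := B.continuous_inv.measurable
  set ν := μ.map B.inv with hν
  haveI : IsProbabilityMeasure ν := Measure.isProbabilityMeasure_map hmeas.aemeasurable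
  have hνae : ∀ᵐ x ∂ν, B.proj x = m := by
    rw [hν]
    refine (MeasureTheory.ae_map_iff hmeas.aemeasurable
      (B.continuous_proj.measurable (measurableSet_singleton m))).2 ?_
    filter_upwards [ae_proj B lam hfib m] with z hz
    show B.proj (B.inv z) = m
    rw [B.proj_inv, hz]
  set A := ∫ y, ∫ x, G (x, y) ∂ν ∂μ with hA
  have hA1 : A = ∫ z, g (B.inv z) ∂μ := by
    have : A = ∫ _, (∫ z, g (B.inv z) ∂μ) ∂μ := by
      refine integral_congr_ae ?_
      filter_upwards [ae_proj B lam hfib m] with y hy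
      exact key_C1 B lam hinv hfib m g G hG y hy
    rw [this]
    simp
  have hswap : A = ∫ x, ∫ y, G (x, y) ∂μ ∂ν := by
    rw [hA]
    exact (iterated_swap G ν μ).symm
  have hA2 : A = ∫ z, g z ∂μ := by
    rw [hswap]
    have : ∫ x, ∫ y, G (x, y) ∂μ ∂ν = ∫ _, (∫ z, g z ∂μ) ∂ν := by
      refine integral_congr_ae ?_
      filter_upwards [hνae] with x hx
      have := translate_integral B lam hinv hfib g G hG x
      rw [hx] at this
      exact this
    rw [this]
    simp
  rw [← hA1, hA2]

/-- Right translation invariance. -/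
lemma right_translate
    (hinv : ∀ x : H,
      ((lam (B.proj x) : Measure H)).map
          (fun y => if B.proj y = B.proj x then B.mul x y else y) =
        (lam (B.proj x) : Measure H))
    (hfib : ∀ m : M, ((lam m : Measure H)).map B.proj = Measure.dirac m)
    (m : M) (g : C(H, ℂ)) (G : C(H × H, ℂ))
    (hG : ∀ p : H × H, B.proj p.1 = B.proj p.2 → G p = g (B.mul p.1 p.2))
    (y : H) (hy : B.proj y = m) :
    ∫ x, G (x, y) ∂(lam m : Measure H) = ∫ z, g z ∂(lam m : Measure H) := by
  set μ := (lam m : Measure H)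
  have hmeas : Measurable B.inv := B.continuous_inv.measurable
  set u : C(H, ℂ) := G.comp ⟨fun x => (x, y), (Continuous.prodMk_left y)⟩ with hu
  have h1 : ∫ x, G (x, y) ∂(μ.map B.inv) = ∫ z, u (B.inv z) ∂μ := by
    refine integral_map hmeas.aemeasurable ?_
    exact (G.continuous.comp (Continuous.prodMk_left y)).aestronglyMeasurable
  have h2 : ∫ z, u (B.inv z) ∂μ = ∫ z, u z ∂μ := inv_integral B lam hinv hfib m u
  have h3 : ∫ x, G (x, y) ∂(μ.map B.inv) = ∫ z, g (B.inv z) ∂μ :=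
    key_C1 B lam hinv hfib m g G hG y hy
  have h4 : ∫ z, g (B.inv z) ∂μ = ∫ z, g z ∂μ := inv_integral B lam hinv hfib m g
  calc ∫ x, G (x, y) ∂μ = ∫ z, u z ∂μ := rfl
    _ = ∫ z, u (B.inv z) ∂μ := h2.symm
    _ = ∫ x, G (x, y) ∂(μ.map B.inv) := h1.symm
    _ = ∫ z, g (B.inv z) ∂μ := h3
    _ = ∫ z, g z ∂μ := h4

end Inversion

section ContinuityLemma

variable {H M : Type*} [TopologicalSpace H] [CompactSpace H] [T2Space H]
    [MeasurableSpace H] [BorelSpace H]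
    [TopologicalSpace M] [CompactSpace M] [T2Space M]
    [MeasurableSpace M] [BorelSpace M]
    (B : CompactGroupBundle H M) (lam : M → ProbabilityMeasure H)

lemma tube_nhds (m₀ : M) (W : Set H) (hW : IsOpen W) (hfib : B.proj ⁻¹' {m₀} ⊆ W) :
    ∀ᶠ m in nhds m₀, B.proj ⁻¹' {m} ⊆ W := by
  have hclosed : IsClosed (B.proj '' Wᶜ) := (B.continuous_proj.isClosedMap) _ hW.isClosed_compl
  have hmem : m₀ ∈ (B.proj '' Wᶜ)ᶜ := by
    rintro ⟨x, hxW, hx⟩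
    exact hxW (hfib (by simp [Set.mem_preimage, hx]))
  filter_upwards [hclosed.isOpen_compl.eventually_mem hmem] with m hm x hx
  by_contra hxW
  exact hm ⟨x, hxW, hx⟩

lemma continuous_lam_integral (hopen : IsOpenMap B.proj)
    (hinv : ∀ x : H,
      ((lam (B.proj x) : Measure H)).map
          (fun y => if B.proj y = B.proj x then B.mul x y else y) =
        (lam (B.proj x) : Measure H))
    (hfib : ∀ m : M, ((lam m : Measure H)).map B.proj = Measure.dirac m)
    (g : C(H, ℂ)) :
    Continuous fun m => ∫ y, g y ∂(lam m : Measure H) := by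
  rw [continuous_iff_continuousAt]
  intro m₀
  rw [ContinuousAt, Metric.tendsto_nhds]
  intro ε hε
  set μ₀ := (lam m₀ : Measure H) with hμ₀
  obtain ⟨G, hG⟩ := exists_mul_ext B g
  set c := ∫ z, g z ∂μ₀ with hc
  set Ψ : C(H, C(H, ℂ)) := G.curry with hΨ
  set E : H → ℂ := fun y => ∫ x, G (x, y) ∂μ₀ with hE
  have hEcont : Continuous E := by
    have := continuous_param_integral (G.comp ⟨Prod.swap, continuous_swap⟩) μ₀
    simpa [hE] using this
  have hEfiber : ∀ y, B.proj y = m₀ → E y = c := fun y hy =>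
    right_translate B lam hinv hfib m₀ g G hG y hy
  set ε' := ε/4 with hε'
  have hε'pos : 0 < ε' := by positivity
  -- neighborhood 1: tube above W
  set W : Set H := {y | ‖E y - c‖ < ε'} with hWdef
  have hWopen : IsOpen W :=
    isOpen_lt ((hEcont.sub continuous_const).norm) continuous_const
  have hWfib : B.proj ⁻¹' {m₀} ⊆ W := fun y hy => by
    have : B.proj y = m₀ := hy
    simp [hWdef, hEfiber y this, hε'pos]
  have hV₁ := tube_nhds B m₀ W hWopen hWfib
  -- neighborhood 2: covering of the fiber
  set U : H → Set H := fun x => Ψ ⁻¹' Metric.ball (Ψ x) ε' with hUdef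
  have hUopen : ∀ x, IsOpen (U x) := fun x => Metric.isOpen_ball.preimage Ψ.continuous
  have hcompact : IsCompact (B.proj ⁻¹' {m₀}) :=
    (isClosed_singleton.preimage B.continuous_proj).isCompact
  have hcover : B.proj ⁻¹' {m₀} ⊆ ⋃ i : {x : H // B.proj x = m₀}, U i.1 := by
    intro x hx
    exact Set.mem_iUnion.2 ⟨⟨x, hx⟩, by simp [hUdef, hε'pos]⟩
  obtain ⟨t, ht⟩ := hcompact.elim_finite_subcover
    (fun i : {x : H // B.proj x = m₀} => U i.1) (fun i => hUopen i.1) hcover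
  have hV₂ : ∀ᶠ m in nhds m₀, ∀ i ∈ t, m ∈ B.proj '' (U i.1) := by
    rw [Filter.eventually_all_finset]
    intro i hi
    exact (hopen _ (hUopen i.1)).eventually_mem ⟨i.1, by simp [hUdef, hε'pos], i.2⟩
  filter_upwards [hV₁, hV₂] with m hm₁ hm₂
  set μ := (lam m : Measure H) with hμ
  set Q : C(H, ℂ) := ⟨fun x => ∫ y, G (x, y) ∂μ, continuous_param_integral G μ⟩ with hQ
  have key1 : ∀ x', B.proj x' = m₀ → ‖(∫ z, g z ∂μ) - Q x'‖ ≤ 2 * ε' := by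
    intro x' hx'
    obtain ⟨i, hit, hxU⟩ : ∃ i ∈ t, x' ∈ U i.1 := by
      have := ht (show x' ∈ B.proj ⁻¹' {m₀} from hx')
      simpa using this
    obtain ⟨x'', hx''U, hx''m⟩ := hm₂ i hit
    have htr : ∫ y, G (x'', y) ∂μ = ∫ z, g z ∂μ := by
      have := translate_integral B lam hinv hfib g G hG x''
      rw [hx''m] at this
      exact this
    have hdist : dist (Ψ x'') (Ψ x') ≤ 2 * ε' := by
      calc dist (Ψ x'') (Ψ x')
          ≤ dist (Ψ x'') (Ψ i.1) + dist (Ψ x') (Ψ i.1) := dist_triangle_right _ _ _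
        _ ≤ ε' + ε' := add_le_add (le_of_lt hx''U) (le_of_lt hxU)
        _ = 2 * ε' := by ring
    have heq1 : ∫ y, (Ψ x'') y ∂μ = ∫ z, g z ∂μ := by
      simpa [hΨ, ContinuousMap.curry_apply] using htr
    have heq2 : ∫ y, (Ψ x') y ∂μ = Q x' := by
      simp [hΨ, hQ, ContinuousMap.curry_apply]
    calc ‖(∫ z, g z ∂μ) - Q x'‖
        = dist (∫ y, (Ψ x'') y ∂μ) (∫ y, (Ψ x') y ∂μ) := by
          rw [heq1, heq2, dist_eq_norm]
      _ ≤ dist (Ψ x'') (Ψ x') := integral_dist_le μ _ _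
      _ ≤ 2 * ε' := hdist
  have key2 : ‖(∫ z, g z ∂μ) - ∫ x, Q x ∂μ₀‖ ≤ 2 * ε' := by
    have hrw : (∫ z, g z ∂μ) - ∫ x, Q x ∂μ₀ = ∫ x, ((∫ z, g z ∂μ) - Q x) ∂μ₀ := by
      rw [integral_sub (integrable_const _) (cmap_integrable Q μ₀)]
      simp
    rw [hrw]
    refine norm_integral_ae_le μ₀ _ ((integrable_const _).sub (cmap_integrable Q μ₀)) _ ?_
    filter_upwards [ae_proj B lam hfib m₀] with x hx
    exact key1 x hx
  have hswap : ∫ x, Q x ∂μ₀ = ∫ y, E y ∂μ := by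
    have := iterated_swap G μ₀ μ
    simpa [hQ, hE] using this
  have key3 : ‖(∫ y, E y ∂μ) - c‖ ≤ ε' := by
    have hEint : Integrable (fun y => E y) μ := cmap_integrable ⟨E, hEcont⟩ μ
    have hrw : (∫ y, E y ∂μ) - c = ∫ y, (E y - c) ∂μ := by
      rw [integral_sub hEint (integrable_const _)]
      simp
    rw [hrw]
    refine norm_integral_ae_le μ _ (hEint.sub (integrable_const _)) _ ?_
    filter_upwards [ae_proj B lam hfib m] with y hy
    have : y ∈ W := hm₁ (show y ∈ B.proj ⁻¹' {m} from hy)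
    exact le_of_lt this
  have htotal : dist (∫ z, g z ∂μ) c ≤ 3 * ε' := by
    calc dist (∫ z, g z ∂μ) c
        ≤ dist (∫ z, g z ∂μ) (∫ x, Q x ∂μ₀) + dist (∫ x, Q x ∂μ₀) c := dist_triangle _ _ _
      _ ≤ 2 * ε' + ε' := by
          refine add_le_add ?_ ?_
          · rw [dist_eq_norm]; exact key2
          · rw [dist_eq_norm, hswap]; exact key3
      _ = 3 * ε' := by ring
  calc dist (∫ z, g z ∂μ) c ≤ 3 * ε' := htotal
    _ < ε := by rw [hε']; linarith

end ContinuityLemma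

section DoubleContinuity

variable {H M : Type*} [TopologicalSpace H] [CompactSpace H] [T2Space H]
    [MeasurableSpace H] [BorelSpace H]
    [TopologicalSpace M] [CompactSpace M] [T2Space M]
    [MeasurableSpace M] [BorelSpace M]
    (B : CompactGroupBundle H M) (lam : M → ProbabilityMeasure H)

lemma continuous_lam_double (hopen : IsOpenMap B.proj)
    (hinv : ∀ x : H,
      ((lam (B.proj x) : Measure H)).map
          (fun y => if B.proj y = B.proj x then B.mul x y else y) =
        (lam (B.proj x) : Measure H))
    (hfib : ∀ m : M, ((lam m : Measure H)).map B.proj = Measure.dirac m)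
    (K : C(H × H, ℂ)) :
    Continuous fun m =>
      ∫ x, ∫ y, K (x, y) ∂(lam m : Measure H) ∂(lam m : Measure H) := by
  rw [continuous_iff_continuousAt]
  intro m₀
  rw [ContinuousAt, Metric.tendsto_nhds]
  intro ε hε
  set μ₀ := (lam m₀ : Measure H) with hμ₀
  set Ψ : C(H, C(H, ℂ)) := K.curry with hΨ
  set ε' := ε / 8 with hε'
  have hε'pos : 0 < ε' := by positivity
  obtain ⟨t, ht⟩ := isCompact_univ.elim_finite_subcover
    (fun x : H => Ψ ⁻¹' Metric.ball (Ψ x) ε')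
    (fun x => Metric.isOpen_ball.preimage Ψ.continuous)
    (fun x _ => Set.mem_iUnion.2 ⟨x, by simp [hε'pos]⟩)
  have hev : ∀ᶠ m in nhds m₀, ∀ c ∈ t,
      dist (∫ y, (Ψ c) y ∂(lam m : Measure H)) (∫ y, (Ψ c) y ∂μ₀) < ε' := by
    rw [Filter.eventually_all_finset]
    intro c _
    have hcont := continuous_lam_integral B lam hopen hinv hfib (Ψ c)
    have h2 := hcont.continuousAt (x := m₀)
    rw [ContinuousAt, Metric.tendsto_nhds] at h2
    exact h2 ε' hε'pos
  set q₀ : C(H, ℂ) := ⟨fun x => ∫ y, K (x, y) ∂μ₀, continuous_param_integral K μ₀⟩ with hq₀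
  have hev2 : ∀ᶠ m in nhds m₀,
      dist (∫ x, q₀ x ∂(lam m : Measure H)) (∫ x, q₀ x ∂μ₀) < ε' := by
    have hcont := continuous_lam_integral B lam hopen hinv hfib q₀
    have h2 := hcont.continuousAt (x := m₀)
    rw [ContinuousAt, Metric.tendsto_nhds] at h2
    exact h2 ε' hε'pos
  filter_upwards [hev, hev2] with m hm hm2
  set μ := (lam m : Measure H) with hμ
  set q : C(H, ℂ) := ⟨fun x => ∫ y, K (x, y) ∂μ, continuous_param_integral K μ⟩ with hq
  have hpt : ∀ x, ‖q x - q₀ x‖ ≤ 3 * ε' := by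
    intro x
    obtain ⟨cc, hcct, hxU⟩ : ∃ cc ∈ t, x ∈ Ψ ⁻¹' Metric.ball (Ψ cc) ε' := by
      have := ht (Set.mem_univ x)
      simpa using this
    have hxc : dist (Ψ x) (Ψ cc) < ε' := hxU
    have h1 : dist (q x) (∫ y, (Ψ cc) y ∂μ) ≤ ε' := by
      have := integral_dist_le μ (Ψ x) (Ψ cc)
      have heq : ∫ y, (Ψ x) y ∂μ = q x := by simp [hΨ, hq, ContinuousMap.curry_apply]
      rw [heq] at this
      exact this.trans (le_of_lt hxc)
    have h3 : dist (∫ y, (Ψ cc) y ∂μ₀) (q₀ x) ≤ ε' := by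
      have := integral_dist_le μ₀ (Ψ cc) (Ψ x)
      have heq : ∫ y, (Ψ x) y ∂μ₀ = q₀ x := by simp [hΨ, hq₀, ContinuousMap.curry_apply]
      rw [heq] at this
      exact this.trans (by rw [dist_comm] at hxc; exact le_of_lt hxc)
    have h2 : dist (∫ y, (Ψ cc) y ∂μ) (∫ y, (Ψ cc) y ∂μ₀) ≤ ε' := le_of_lt (hm cc hcct)
    calc ‖q x - q₀ x‖ = dist (q x) (q₀ x) := (dist_eq_norm _ _).symm
      _ ≤ dist (q x) (∫ y, (Ψ cc) y ∂μ) + dist (∫ y, (Ψ cc) y ∂μ) (∫ y, (Ψ cc) y ∂μ₀)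
          + dist (∫ y, (Ψ cc) y ∂μ₀) (q₀ x) := dist_triangle4 _ _ _ _
      _ ≤ ε' + ε' + ε' := by gcongr
      _ = 3 * ε' := by ring
  have hbd1 : ‖(∫ x, q x ∂μ) - ∫ x, q₀ x ∂μ‖ ≤ 3 * ε' := by
    have hrw : (∫ x, q x ∂μ) - ∫ x, q₀ x ∂μ = ∫ x, (q x - q₀ x) ∂μ := by
      rw [integral_sub (cmap_integrable q μ) (cmap_integrable q₀ μ)]
    rw [hrw]
    exact norm_integral_ae_le μ _ ((cmap_integrable q μ).sub (cmap_integrable q₀ μ)) _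
      (Filter.Eventually.of_forall hpt)
  have htotal : dist (∫ x, q x ∂μ) (∫ x, q₀ x ∂μ₀) < ε := by
    calc dist (∫ x, q x ∂μ) (∫ x, q₀ x ∂μ₀)
        ≤ dist (∫ x, q x ∂μ) (∫ x, q₀ x ∂μ) + dist (∫ x, q₀ x ∂μ) (∫ x, q₀ x ∂μ₀) :=
          dist_triangle _ _ _
      _ ≤ 3 * ε' + dist (∫ x, q₀ x ∂μ) (∫ x, q₀ x ∂μ₀) := by
          rw [dist_eq_norm]; gcongr
      _ < 3 * ε' + ε' := by gcongr
      _ < ε := by rw [hε']; linarith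
  exact htotal

end DoubleContinuity

section MainAssembly

variable {H M : Type*} [TopologicalSpace H] [CompactSpace H] [T2Space H]
    [MeasurableSpace H] [BorelSpace H]
    [TopologicalSpace M] [CompactSpace M] [T2Space M]
    [MeasurableSpace M] [BorelSpace M]

lemma cmap_integrable_real (u : C(H, ℝ)) (μ : Measure H) [IsFiniteMeasure μ] :
    Integrable (fun x => u x) μ := by
  refine ⟨u.continuous.aestronglyMeasurable, ?_⟩
  exact MeasureTheory.HasFiniteIntegral.of_bounded
    (C := ‖u‖) (Filter.Eventually.of_forall fun x => u.norm_coe_le_norm x)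

lemma l1_le_one (u : C(H, ℂ)) (μ : Measure H) [IsProbabilityMeasure μ]
    (hu : ∫ x, ‖u x‖ ^ 2 ∂μ ≤ 1) : ∫ x, ‖u x‖ ∂μ ≤ 1 := by
  have hsq : Integrable (fun x => ‖u x‖ ^ 2) μ :=
    cmap_integrable_real ⟨fun x => ‖u x‖ ^ 2, (u.continuous.norm).pow 2⟩ μ
  have hmono : ∫ x, ‖u x‖ ∂μ ≤ ∫ x, (1 + ‖u x‖ ^ 2) / 2 ∂μ := by
    refine integral_mono_of_nonneg (Filter.Eventually.of_forall fun x => norm_nonneg _)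
      ?_ (Filter.Eventually.of_forall fun x => ?_)
    · exact cmap_integrable_real
        ⟨fun x => (1 + ‖u x‖ ^ 2) / 2, by fun_prop⟩ μ
    · nlinarith [sq_nonneg (‖u x‖ - 1)]
  have hcalc : ∫ x, (1 + ‖u x‖ ^ 2) / 2 ∂μ = (1 + ∫ x, ‖u x‖ ^ 2 ∂μ) / 2 := by
    rw [integral_div, integral_add (integrable_const _) hsq]
    simp
  rw [hcalc] at hmono
  linarith

variable (B : CompactGroupBundle H M) (lam : M → ProbabilityMeasure H) (f : C(H, ℂ))

/-- The inner kernel is continuous on the fiber product set. -/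
lemma kernel_continuousOn (h k : C(H, ℂ)) :
    ContinuousOn (fun p : H × H => h p.1 * f (B.mul (B.inv p.1) p.2) * k p.2)
      {p : H × H | B.proj p.1 = B.proj p.2} := by
  set S := {p : H × H | B.proj p.1 = B.proj p.2}
  have hmap : ∀ p ∈ S, ((B.inv p.1, p.2) : H × H) ∈ S := fun p hp => by
    simpa [S, Set.mem_setOf_eq, B.proj_inv] using hp
  have hcontmk : Continuous (fun p : H × H => ((B.inv p.1, p.2) : H × H)) :=
    (B.continuous_inv.comp continuous_fst).prodMk continuous_snd
  have c1 : ContinuousOn (fun p : H × H => f (B.mul (B.inv p.1) p.2)) S :=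
    f.continuous.comp_continuousOn
      ((B.continuousOn_mul.comp hcontmk.continuousOn) hmap)
  exact (((h.continuous.comp continuous_fst).continuousOn.mul c1).mul
    (k.continuous.comp continuous_snd).continuousOn)

/-- Rewriting of the double integral in the statement via a continuous extension of
the kernel. -/
lemma stmt_eq
    (hfib : ∀ m : M, ((lam m : Measure H)).map B.proj = Measure.dirac m)
    (m : M) (h k : C(H, ℂ)) (K : C(H × H, ℂ))
    (hK : ∀ p : H × H, B.proj p.1 = B.proj p.2 →
      K p = h p.1 * f (B.mul (B.inv p.1) p.2) * k p.2) :
    ∫ x, (∫ y,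
        (if B.proj x = B.proj y then h x * f (B.mul (B.inv x) y) * k y else 0)
      ∂(lam m : Measure H)) ∂(lam m : Measure H) =
      ∫ x, ∫ y, K (x, y) ∂(lam m : Measure H) ∂(lam m : Measure H) := by
  set μ := (lam m : Measure H)
  have hinner : ∀ x : H,
      (∫ y, (if B.proj x = B.proj y then h x * f (B.mul (B.inv x) y) * k y else 0) ∂μ) =
        if B.proj x = m then ∫ y, K (x, y) ∂μ else 0 := by
    intro x
    by_cases hx : B.proj x = m
    · rw [if_pos hx]
      refine integral_congr_ae ?_
      filter_upwards [ae_proj B lam hfib m] with y hy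
      have hxy : B.proj x = B.proj y := by rw [hx, hy]
      rw [if_pos hxy, hK (x, y) hxy]
    · rw [if_neg hx]
      have : (∫ y, (if B.proj x = B.proj y then h x * f (B.mul (B.inv x) y) * k y else 0) ∂μ)
          = ∫ _, (0 : ℂ) ∂μ := by
        refine integral_congr_ae ?_
        filter_upwards [ae_proj B lam hfib m] with y hy
        rw [if_neg (by rw [hy]; exact hx)]
      rw [this]
      simp
  calc ∫ x, (∫ y,
        (if B.proj x = B.proj y then h x * f (B.mul (B.inv x) y) * k y else 0) ∂μ) ∂μ
      = ∫ x, (if B.proj x = m then ∫ y, K (x, y) ∂μ else 0) ∂μ := by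
        refine integral_congr_ae (Filter.Eventually.of_forall fun x => hinner x)
    _ = ∫ x, ∫ y, K (x, y) ∂μ ∂μ := by
        refine integral_congr_ae ?_
        filter_upwards [ae_proj B lam hfib m] with x hx
        rw [if_pos hx]

/-- The norm bound for feasible pairs. -/
lemma stmt_bound
    (hfib : ∀ m : M, ((lam m : Measure H)).map B.proj = Measure.dirac m)
    (m : M) (h k : C(H, ℂ)) (K : C(H × H, ℂ))
    (hK : ∀ p : H × H, B.proj p.1 = B.proj p.2 →
      K p = h p.1 * f (B.mul (B.inv p.1) p.2) * k p.2)
    (hh : ∫ x, ‖h x‖ ^ 2 ∂(lam m : Measure H) ≤ 1)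
    (hk : ∫ x, ‖k x‖ ^ 2 ∂(lam m : Measure H) ≤ 1) :
    ‖∫ x, ∫ y, K (x, y) ∂(lam m : Measure H) ∂(lam m : Measure H)‖ ≤ ‖f‖ := by
  set μ := (lam m : Measure H) with hμ
  set Ik := ∫ y, ‖k y‖ ∂μ with hIk
  set Ih := ∫ x, ‖h x‖ ∂μ with hIh
  have hIk1 : Ik ≤ 1 := l1_le_one k μ hk
  have hIh1 : Ih ≤ 1 := l1_le_one h μ hh
  have hIknn : 0 ≤ Ik := integral_nonneg fun y => norm_nonneg _
  have hIhnn : 0 ≤ Ih := integral_nonneg fun x => norm_nonneg _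
  have hinner : ∀ x : H, B.proj x = m → ‖∫ y, K (x, y) ∂μ‖ ≤ ‖h x‖ * (‖f‖ * Ik) := by
    intro x hx
    calc ‖∫ y, K (x, y) ∂μ‖ ≤ ∫ y, ‖K (x, y)‖ ∂μ := norm_integral_le_integral_norm _
      _ ≤ ∫ y, ‖h x‖ * (‖f‖ * ‖k y‖) ∂μ := by
          refine integral_mono_of_nonneg (Filter.Eventually.of_forall fun y => norm_nonneg _)
            ?_ ?_
          · exact (((cmap_integrable k μ).norm.const_mul ‖f‖).const_mul ‖h x‖)
          · filter_upwards [ae_proj B lam hfib m] with y hy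
            have hxy : B.proj x = B.proj y := by rw [hx, hy]
            rw [hK (x, y) hxy]
            calc ‖h x * f (B.mul (B.inv x) y) * k y‖
                = ‖h x‖ * ‖f (B.mul (B.inv x) y)‖ * ‖k y‖ := by
                  rw [norm_mul, norm_mul]
              _ ≤ ‖h x‖ * ‖f‖ * ‖k y‖ := by
                  gcongr
                  exact f.norm_coe_le_norm _
              _ = ‖h x‖ * (‖f‖ * ‖k y‖) := by ring
      _ = ‖h x‖ * (‖f‖ * Ik) := by
          rw [integral_const_mul, integral_const_mul]
  calc ‖∫ x, ∫ y, K (x, y) ∂μ ∂μ‖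
      ≤ ∫ x, ‖∫ y, K (x, y) ∂μ‖ ∂μ := norm_integral_le_integral_norm _
    _ ≤ ∫ x, ‖h x‖ * (‖f‖ * Ik) ∂μ := by
        refine integral_mono_of_nonneg (Filter.Eventually.of_forall fun x => norm_nonneg _)
          ?_ ?_
        · exact ((cmap_integrable h μ).norm.mul_const _)
        · filter_upwards [ae_proj B lam hfib m] with x hx
          exact hinner x hx
    _ = Ih * (‖f‖ * Ik) := integral_mul_const _ _
    _ ≤ 1 * (‖f‖ * 1) := by
        have h2 : ‖f‖ * Ik ≤ ‖f‖ * 1 := mul_le_mul_of_nonneg_left hIk1 (norm_nonneg f)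
        have h3 : 0 ≤ ‖f‖ * Ik := mul_nonneg (norm_nonneg f) hIknn
        have h1 : Ih * (‖f‖ * Ik) ≤ 1 * (‖f‖ * Ik) :=
          mul_le_mul_of_nonneg_right hIh1 h3
        nlinarith
    _ = ‖f‖ := by ring

end MainAssembly


/-- Let `p : H → M` be an *open* compact group bundle over a compact Hausdorff space,
with (normalized) fiber Haar measures `m ↦ λ_{H_m}`, and let `f ∈ C(H)`. Then the map
`m ↦ ‖f|_{H_m}‖_{C*(H_m)}` is lower semicontinuous, where (compact groups being
amenable) the group C*-algebra norm of `f|_{H_m}` is given by the reduced formula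
`sup { |∬_{H_m × H_m} h(x) f(x⁻¹y) k(y) dλ_{H_m}(x) dλ_{H_m}(y)| :
h, k continuous, ‖h‖_{L²(H_m)} ≤ 1, ‖k‖_{L²(H_m)} ≤ 1 }`. -/
theorem lowerSemicontinuous_fiberwise_CStar_norm
    {H M : Type*} [TopologicalSpace H] [CompactSpace H] [T2Space H]
    [MeasurableSpace H] [BorelSpace H]
    [TopologicalSpace M] [CompactSpace M] [T2Space M]
    [MeasurableSpace M] [BorelSpace M]
    (B : CompactGroupBundle H M) (hopen : IsOpenMap B.proj)
    (lam : M → ProbabilityMeasure H)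
    (hlam_fiber : ∀ m : M, ((lam m : Measure H)).map B.proj = Measure.dirac m)
    (hlam_reg : ∀ m : M, (lam m : Measure H).Regular)
    (hlam_inv : ∀ x : H,
      ((lam (B.proj x) : Measure H)).map
          (fun y => if B.proj y = B.proj x then B.mul x y else y) =
        (lam (B.proj x) : Measure H))
    (f : C(H, ℂ)) :
    LowerSemicontinuous fun m : M =>
      sSup {r : ℝ | ∃ h k : C(H, ℂ),
        (∫ x, ‖h x‖ ^ 2 ∂(lam m : MeasureTheory.Measure H)) ≤ 1 ∧
        (∫ x, ‖k x‖ ^ 2 ∂(lam m : MeasureTheory.Measure H)) ≤ 1 ∧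
        r = ‖∫ x, (∫ y,
            (if B.proj x = B.proj y then h x * f (B.mul (B.inv x) y) * k y else 0)
          ∂(lam m : MeasureTheory.Measure H)) ∂(lam m : MeasureTheory.Measure H)‖} := by
  set S : M → Set ℝ := fun m => {r : ℝ | ∃ h k : C(H, ℂ),
        (∫ x, ‖h x‖ ^ 2 ∂(lam m : MeasureTheory.Measure H)) ≤ 1 ∧
        (∫ x, ‖k x‖ ^ 2 ∂(lam m : MeasureTheory.Measure H)) ≤ 1 ∧
        r = ‖∫ x, (∫ y,
            (if B.proj x = B.proj y then h x * f (B.mul (B.inv x) y) * k y else 0)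
          ∂(lam m : MeasureTheory.Measure H)) ∂(lam m : MeasureTheory.Measure H)‖} with hS
  have h0mem : ∀ m, (0 : ℝ) ∈ S m := by
    intro m
    refine ⟨0, 0, by simp, by simp, ?_⟩
    simp
  have hbdd : ∀ m, BddAbove (S m) := by
    intro m
    refine ⟨‖f‖, ?_⟩
    rintro r ⟨h, k, hh, hk, rfl⟩
    obtain ⟨K, hK⟩ := exists_ext B _ (kernel_continuousOn B f h k)
    rw [stmt_eq B lam f hlam_fiber m h k K hK]
    exact stmt_bound B lam f hlam_fiber m h k K hK hh hk
  intro m₀ r hr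
  by_cases hneg : r < 0
  · exact Filter.Eventually.of_forall fun m =>
      lt_of_lt_of_le hneg (le_csSup (hbdd m) (h0mem m))
  · push_neg at hneg
    obtain ⟨r', hr'S, hrr'⟩ := exists_lt_of_lt_csSup ⟨0, h0mem m₀⟩ hr
    obtain ⟨h, k, hh, hk, hval⟩ := hr'S
    obtain ⟨K, hK⟩ := exists_ext B _ (kernel_continuousOn B f h k)
    set V : M → ℝ := fun m =>
      ‖∫ x, ∫ y, K (x, y) ∂(lam m : Measure H) ∂(lam m : Measure H)‖ with hV
    have hVcont : Continuous V :=
      (continuous_lam_double B lam hopen hlam_inv hlam_fiber K).norm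
    have hVm₀ : V m₀ = r' := by
      rw [hval, hV]
      rw [stmt_eq B lam f hlam_fiber m₀ h k K hK]
    have hv₀pos : 0 < r' := lt_of_le_of_lt hneg hrr'
    set cst := (r + r') / (2 * r') with hcst
    have hcstpos : 0 < cst := div_pos (by linarith) (by linarith)
    have hcstlt : cst < 1 := by
      rw [hcst, div_lt_one (by linarith)]
      linarith
    have hcstmul : cst * r' = (r + r') / 2 := by
      rw [hcst, div_mul_eq_mul_div, div_eq_div_iff (ne_of_gt (by linarith)) (by norm_num)]
      ring
    have hcstval : r < cst * r' := by rw [hcstmul]; linarith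
    set τ := Real.sqrt cst with hτ
    have hτnn : (0 : ℝ) ≤ τ := Real.sqrt_nonneg _
    have hτsq : τ ^ 2 = cst := Real.sq_sqrt hcstpos.le
    set c' : ℂ := (τ : ℂ) with hc'
    have hc'norm : ‖c'‖ = τ := by
      rw [hc', Complex.norm_real, Real.norm_eq_abs, abs_of_nonneg hτnn]
    -- continuity of the constraint integrals
    have hconstraint_cont : ∀ u : C(H, ℂ),
        Continuous fun m => ∫ x, ‖u x‖ ^ 2 ∂(lam m : Measure H) := by
      intro u
      set gu : C(H, ℂ) := ⟨fun x => ((‖u x‖ ^ 2 : ℝ) : ℂ),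
        Complex.continuous_ofReal.comp ((u.continuous.norm).pow 2)⟩ with hgu
      have h1 := continuous_lam_integral B lam hopen hlam_inv hlam_fiber gu
      have h2 : (fun m => ∫ x, ‖u x‖ ^ 2 ∂(lam m : Measure H)) =
          fun m => (∫ x, gu x ∂(lam m : Measure H)).re := by
        funext m
        have : ∫ x, gu x ∂(lam m : Measure H) =
            ((∫ x, ‖u x‖ ^ 2 ∂(lam m : Measure H) : ℝ) : ℂ) := integral_ofReal
        rw [this, Complex.ofReal_re]
      rw [h2]
      exact Complex.continuous_re.comp h1
    have hev1 : ∀ᶠ m in nhds m₀, (∫ x, ‖h x‖ ^ 2 ∂(lam m : Measure H)) < 1 / cst := by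
      refine ((hconstraint_cont h).tendsto m₀).eventually (eventually_lt_nhds ?_)
      exact lt_of_le_of_lt hh (one_lt_one_div hcstpos hcstlt)
    have hev2 : ∀ᶠ m in nhds m₀, (∫ x, ‖k x‖ ^ 2 ∂(lam m : Measure H)) < 1 / cst := by
      refine ((hconstraint_cont k).tendsto m₀).eventually (eventually_lt_nhds ?_)
      exact lt_of_le_of_lt hk (one_lt_one_div hcstpos hcstlt)
    have hev3 : ∀ᶠ m in nhds m₀, r < cst * V m := by
      have hlt : r < cst * V m₀ := by rw [hVm₀]; exact hcstval
      exact ((continuous_const.mul hVcont).tendsto m₀).eventually (eventually_gt_nhds hlt)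
    filter_upwards [hev1, hev2, hev3] with m h1 h2 h3
    set μ := (lam m : Measure H) with hμ
    set h' : C(H, ℂ) := c' • h with hh'
    set k' : C(H, ℂ) := c' • k with hk'
    have hKext' : ∀ p : H × H, B.proj p.1 = B.proj p.2 →
        ((c' * c') • K) p = h' p.1 * f (B.mul (B.inv p.1) p.2) * k' p.2 := by
      intro p hp
      simp only [ContinuousMap.smul_apply, hK p hp, hh', hk', smul_eq_mul]
      ring
    have hscale : ∀ u : C(H, ℂ), ∀ x : H, ‖(c' • u) x‖ ^ 2 = cst * ‖u x‖ ^ 2 := by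
      intro u x
      simp only [ContinuousMap.smul_apply, smul_eq_mul, norm_mul, hc'norm]
      rw [mul_pow, hτsq]
    have hconstr : ∀ u : C(H, ℂ),
        (∫ x, ‖u x‖ ^ 2 ∂μ) < 1 / cst → (∫ x, ‖(c' • u) x‖ ^ 2 ∂μ) ≤ 1 := by
      intro u hu
      have e1 : (∫ x, ‖(c' • u) x‖ ^ 2 ∂μ) = cst * ∫ x, ‖u x‖ ^ 2 ∂μ := by
        rw [integral_congr_ae (Filter.Eventually.of_forall fun x => hscale u x)]
        exact integral_const_mul _ _
      rw [e1]
      have := (lt_div_iff₀ hcstpos).1 hu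
      nlinarith
    have hvalm : ‖∫ x, (∫ y,
        (if B.proj x = B.proj y then h' x * f (B.mul (B.inv x) y) * k' y else 0)
          ∂μ) ∂μ‖ = cst * V m := by
      rw [stmt_eq B lam f hlam_fiber m h' k' ((c' * c') • K) hKext']
      have hpull : ∫ x, ∫ y, ((c' * c') • K) (x, y) ∂μ ∂μ =
          (c' * c') • ∫ x, ∫ y, K (x, y) ∂μ ∂μ := by
        have e : ∀ x, ∫ y, ((c' * c') • K) (x, y) ∂μ = (c' * c') • ∫ y, K (x, y) ∂μ := by
          intro x
          simp only [ContinuousMap.smul_apply]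
          exact integral_smul _ _
        rw [integral_congr_ae (Filter.Eventually.of_forall e)]
        exact integral_smul _ _
      rw [hpull, norm_smul]
      have hnc : ‖c' * c'‖ = cst := by
        rw [norm_mul, hc'norm, ← sq]
        exact hτsq
      rw [hnc]
    have hmem : cst * V m ∈ S m := ⟨h', k', hconstr h h1, hconstr k h2, hvalm.symm⟩
    exact lt_of_lt_of_le h3 (le_csSup (hbdd m) hmem)
end

section
/- Let H be a compact group and f a normalized positive definite function on H associated with an irreducible unitary representation π (i.e., f(x) = (π(x)v|v) for a unit vector v). If (f_α) is a net of normalized positive definite functions on H such that ∫_H f_α g dλ_H → ∫_H f g dλ_H for every g ∈ C(H), then f_α → f uniformly on H. -/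
open MeasureTheory Filter Topology
open scoped InnerProductSpace

variable {H : Type*} [Group H] [TopologicalSpace H] [IsTopologicalGroup H]
  [CompactSpace H] [T2Space H]

/-- A normalized positive definite function on a compact group `H`: a function of the
form `x ↦ ⟪π(x)v, v⟫` for a (strongly continuous) unitary representation `π` of `H` on a
nonzero Hilbert space and a unit vector `v`. If `irred` is `true`, the representation is
moreover required to be irreducible. -/
def IsNormalizedPosDefFn (irred : Bool) (f : H → ℂ) : Prop :=
  ∃ (E : Type) (_ : NormedAddCommGroup E) (_ : InnerProductSpace ℂ E)
    (_ : CompleteSpace E) (π : H → (E →L[ℂ] E)) (v : E),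
      (∀ x y : H, π (x * y) = (π x).comp (π y)) ∧
      π 1 = ContinuousLinearMap.id ℂ E ∧
      (∀ (x : H) (w w' : E), ⟪π x w, π x w'⟫_ℂ = ⟪w, w'⟫_ℂ) ∧
      (∀ w : E, Continuous fun x => π x w) ∧
      ‖v‖ = 1 ∧
      (irred = true →
        Nontrivial E ∧ ∀ W : Submodule ℂ E, IsClosed (W : Set E) →
          (∀ (x : H), ∀ w ∈ W, π x w ∈ W) → W = ⊥ ∨ W = ⊤) ∧
      f = fun x => ⟪π x v, v⟫_ℂ

set_option linter.unusedSectionVars false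

lemma sqrt_aux {t η : ℝ} (ht : 0 ≤ t) (hη : 0 < η) :
    Real.sqrt t ≤ Real.sqrt η + t / Real.sqrt η := by
  have hs : 0 < Real.sqrt η := Real.sqrt_pos.2 hη
  have h1 : Real.sqrt t * Real.sqrt t = t := Real.mul_self_sqrt ht
  have h2 : Real.sqrt η * Real.sqrt η = η := Real.mul_self_sqrt hη.le
  rw [← sub_le_iff_le_add', le_div_iff₀ hs]
  nlinarith [sq_nonneg (Real.sqrt t - Real.sqrt η), Real.sqrt_nonneg t, Real.sqrt_nonneg η]

-- key integral estimate
lemma est [MeasurableSpace H] [BorelSpace H]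
    (μ : Measure H) [IsProbabilityMeasure μ]
    (u : H → ℝ) (huc : Continuous u)
    (ψ : H → ℂ) (hψc : Continuous ψ)
    (hψd : ∀ x y, ‖ψ x - ψ (x * y)‖ ≤ Real.sqrt (2 - 2 * (ψ y).re))
    (hu0 : ∀ y, 0 ≤ u y)
    (hu1 : ∫ y, u y ∂μ = 1) (x : H) :
    ‖ψ x - ∫ y, ψ (x * y) * (u y : ℂ) ∂μ‖ ≤
      ∫ y, Real.sqrt (2 - 2 * (ψ y).re) * u y ∂μ := by
  have cint : ∀ {g : H → ℂ}, Continuous g → Integrable g μ := fun hg =>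
    hg.integrable_of_hasCompactSupport (HasCompactSupport.of_compactSpace _)
  have i1 : Integrable (fun y => ψ (x * y) * (u y : ℂ)) μ :=
    cint ((hψc.comp (continuous_mul_left x)).mul (Complex.continuous_ofReal.comp huc))
  have i2 : Integrable (fun y => ψ x * (u y : ℂ)) μ :=
    cint (continuous_const.mul (Complex.continuous_ofReal.comp huc))
  have h1 : ψ x = ∫ y, ψ x * (u y : ℂ) ∂μ := by
    rw [integral_const_mul]
    have : ∫ y, ((u y : ℝ) : ℂ) ∂μ = ((∫ y, u y ∂μ : ℝ) : ℂ) := integral_ofReal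
    rw [this, hu1]
    norm_num
  calc ‖ψ x - ∫ y, ψ (x * y) * (u y : ℂ) ∂μ‖
      = ‖∫ y, (ψ x - ψ (x * y)) * (u y : ℂ) ∂μ‖ := by
        rw [show (fun y => (ψ x - ψ (x * y)) * (u y : ℂ)) =
            (fun y => ψ x * (u y : ℂ) - ψ (x * y) * (u y : ℂ)) by ext y; ring,
          integral_sub i2 i1, ← h1]
    _ ≤ ∫ y, ‖(ψ x - ψ (x * y)) * (u y : ℂ)‖ ∂μ := norm_integral_le_integral_norm _
    _ ≤ ∫ y, Real.sqrt (2 - 2 * (ψ y).re) * u y ∂μ := by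
        apply integral_mono
        · exact (cint ((continuous_const.sub (hψc.comp (continuous_mul_left x))).mul
            (Complex.continuous_ofReal.comp huc))).norm
        · apply Continuous.integrable_of_hasCompactSupport
          · exact ((Real.continuous_sqrt.comp (continuous_const.sub
              (continuous_const.mul (Complex.continuous_re.comp hψc)))).mul huc)
          · exact HasCompactSupport.of_compactSpace _
        · intro y
          show ‖(ψ x - ψ (x * y)) * (u y : ℂ)‖ ≤ Real.sqrt (2 - 2 * (ψ y).re) * u y
          rw [norm_mul, Complex.norm_real, Real.norm_eq_abs, abs_of_nonneg (hu0 y)]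
          exact mul_le_mul_of_nonneg_right (hψd x y) (hu0 y)

theorem posdef_props {b : Bool} {φ : H → ℂ} (h : IsNormalizedPosDefFn b φ) :
    φ 1 = 1 ∧ (∀ x, ‖φ x‖ ≤ 1) ∧ Continuous φ ∧
    (∀ x y, ‖φ x - φ (x * y)‖ ≤ Real.sqrt (2 - 2 * (φ y).re)) := by
  obtain ⟨E, i1, i2, i3, π, v, hmul, hone, hinner, hcont, hv, -, hφ⟩ := h
  have hnorm : ∀ (x : H) (w : E), ‖π x w‖ = ‖w‖ := by
    intro x w
    have := hinner x w w
    rw [inner_self_eq_norm_sq_to_K, inner_self_eq_norm_sq_to_K] at this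
    have h2 : (‖π x w‖ : ℝ) ^ 2 = (‖w‖ : ℝ) ^ 2 := by exact_mod_cast this
    nlinarith [norm_nonneg (π x w), norm_nonneg w]
  subst hφ
  refine ⟨?_, ?_, ?_, ?_⟩
  · simp only [hone, ContinuousLinearMap.id_apply, inner_self_eq_norm_sq_to_K, hv]
    norm_num
  · intro x
    calc ‖⟪π x v, v⟫_ℂ‖ ≤ ‖π x v‖ * ‖v‖ := norm_inner_le_norm _ _
      _ = 1 := by rw [hnorm, hv]; ring
  · exact (hcont v).inner continuous_const
  · intro x y
    have key : ⟪π x v, v⟫_ℂ - ⟪π (x * y) v, v⟫_ℂ = ⟪π x (v - π y v), v⟫_ℂ := by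
      rw [hmul x y, ContinuousLinearMap.comp_apply, map_sub, inner_sub_left]
    rw [key]
    calc ‖⟪π x (v - π y v), v⟫_ℂ‖ ≤ ‖π x (v - π y v)‖ * ‖v‖ := norm_inner_le_norm _ _
      _ = ‖v - π y v‖ := by rw [hnorm, hv, mul_one]
      _ ≤ Real.sqrt (2 - 2 * (⟪π y v, v⟫_ℂ).re) := by
          rw [← Real.sqrt_sq (norm_nonneg (v - π y v))]
          apply Real.sqrt_le_sqrt
          have := @norm_sub_sq ℂ E _ _ _ v (π y v)
          rw [this, hnorm, hv]
          have hre : RCLike.re ⟪v, π y v⟫_ℂ = (⟪π y v, v⟫_ℂ).re := by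
            have h3 : ⟪v, π y v⟫_ℂ = starRingEnd ℂ ⟪π y v, v⟫_ℂ := (inner_conj_symm _ _).symm
            rw [RCLike.re_to_complex, h3, Complex.conj_re]
          rw [hre]; ring_nf; rfl


/-- Let `H` be a compact group with normalized Haar measure `λ_H` and let `f` be a
normalized positive definite function associated with an *irreducible* unitary
representation. If `(f_α)` is a net of normalized positive definite functions on `H`
such that `∫ f_α g dλ_H → ∫ f g dλ_H` for every continuous `g`, then `f_α → f`
uniformly on `H`. -/
theorem tendstoUniformly_of_weak_tendsto_posdef
    [MeasurableSpace H] [BorelSpace H]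
    (μ : Measure H) [IsProbabilityMeasure μ] [μ.IsHaarMeasure]
    {f : H → ℂ} (hf : IsNormalizedPosDefFn true f)
    {ι : Type*} (l : Filter ι) [l.NeBot] (F : ι → H → ℂ)
    (hF : ∀ α, IsNormalizedPosDefFn false (F α))
    (hweak : ∀ g : C(H, ℂ),
      Tendsto (fun α => ∫ x, F α x * g x ∂μ) l (𝓝 (∫ x, f x * g x ∂μ))) :
    TendstoUniformly F f l := by
  obtain ⟨hf1, hfb, hfc, hfd⟩ := posdef_props hf
  have hFp := fun α => posdef_props (hF α)
  have cint : ∀ {g : H → ℂ}, Continuous g → Integrable g μ := fun hg =>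
    hg.integrable_of_hasCompactSupport (HasCompactSupport.of_compactSpace _)
  have cintR : ∀ {g : H → ℝ}, Continuous g → Integrable g μ := fun hg =>
    hg.integrable_of_hasCompactSupport (HasCompactSupport.of_compactSpace _)
  rw [Metric.tendstoUniformly_iff]
  intro ε hε
  set η : ℝ := (ε / 6) ^ 2 with hη_def
  have hη : 0 < η := by positivity
  have hsη : Real.sqrt η = ε / 6 := by
    rw [hη_def, Real.sqrt_sq (by linarith)]
  -- the open set V near 1 where f is close to 1
  set V : Set H := {y | 2 - 2 * (f y).re < η} with hV_def
  have hV_open : IsOpen V :=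
    isOpen_lt (by fun_prop) continuous_const
  have hV_one : (1 : H) ∈ V := by
    simp only [hV_def, Set.mem_setOf_eq, hf1]
    norm_num [hη.le]
    exact hη
  -- Urysohn bump u₀
  obtain ⟨u₀, hu₀0, hu₀1, hu₀01⟩ := exists_continuous_zero_one_of_isClosed
    (hV_open.isClosed_compl) (isClosed_singleton (x := (1:H)))
    (by simp only [Set.disjoint_left]; intro a ha h; rw [Set.mem_singleton_iff] at h
        exact ha (h ▸ hV_one))
  -- normalize to u with ∫ u = 1
  have hu₀nn : ∀ y, 0 ≤ u₀ y := fun y => (hu₀01 y).1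
  have hc₀ : 0 < ∫ y, u₀ y ∂μ := by
    rw [integral_pos_iff_support_of_nonneg hu₀nn (cintR u₀.continuous)]
    have hop : IsOpen (Function.support u₀) :=
      isOpen_compl_singleton.preimage u₀.continuous
    refine hop.measure_pos μ ⟨1, ?_⟩
    simp [Function.mem_support, hu₀1 rfl]
  set c₀ : ℝ := ∫ y, u₀ y ∂μ with hc₀_def
  set u : H → ℝ := fun y => c₀⁻¹ * u₀ y with hu_def
  have huc : Continuous u := continuous_const.mul u₀.continuous
  have hu0 : ∀ y, 0 ≤ u y := fun y => mul_nonneg (inv_nonneg.2 hc₀.le) (hu₀nn y)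
  have hu1 : ∫ y, u y ∂μ = 1 := by
    rw [hu_def]; simp only []
    rw [integral_const_mul, ← hc₀_def, inv_mul_cancel₀ hc₀.ne']
  have huV : ∀ y, u y ≠ 0 → y ∈ V := by
    intro y hy
    by_contra h
    exact hy (by simp [hu_def, hu₀0 h])
  -- the translated test functions
  set T : C(H, C(H, H)) := ContinuousMap.curry
    ⟨fun p : H × H => p.1⁻¹ * p.2, by fun_prop⟩ with hT_def
  set Φ : H → C(H, ℝ) := fun x => (⟨u, huc⟩ : C(H, ℝ)).comp (T x) with hΦ_def
  have hΦ_cont : Continuous Φ :=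
    (ContinuousMap.continuous_postcomp _).comp T.continuous
  have hΦ_apply : ∀ x z, Φ x z = u (x⁻¹ * z) := fun x z => rfl
  set G : H → C(H, ℂ) := fun x =>
    (⟨Complex.ofReal, Complex.continuous_ofReal⟩ : C(ℝ, ℂ)).comp (Φ x) with hG_def
  have hG_apply : ∀ x z, G x z = ((u (x⁻¹ * z) : ℝ) : ℂ) := fun x z => rfl
  -- the smoothed functions
  set C : ι → H → ℂ := fun α x => ∫ z, F α z * G x z ∂μ with hC_def
  set c : H → ℂ := fun x => ∫ z, f z * G x z ∂μ with hc_def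
  -- pointwise convergence
  have hpt : Tendsto C l (𝓝 c) := by
    rw [tendsto_pi_nhds]
    intro x
    exact hweak (G x)
  -- equicontinuity
  have heq : Equicontinuous C := by
    intro x₀
    rw [Metric.equicontinuousAt_iff_right]
    intro δ hδ
    have : ∀ᶠ x in 𝓝 x₀, dist (Φ x) (Φ x₀) < δ :=
      (hΦ_cont.tendsto x₀).eventually (Metric.ball_mem_nhds _ hδ)
    filter_upwards [this] with x hx α
    have key : ∀ z : H, ‖F α z * G x₀ z - F α z * G x z‖ ≤ dist (Φ x) (Φ x₀) := by
      intro z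
      rw [← mul_sub, norm_mul]
      calc ‖F α z‖ * ‖G x₀ z - G x z‖ ≤ 1 * ‖Φ x₀ z - Φ x z‖ := by
            apply mul_le_mul ((hFp α).2.1 z) (le_of_eq ?_) (norm_nonneg _) zero_le_one
            rw [hG_apply, hG_apply, hΦ_apply, hΦ_apply, ← Complex.ofReal_sub,
              Complex.norm_real]
        _ = ‖(Φ x₀ - Φ x) z‖ := by rw [one_mul]; rfl
        _ ≤ ‖Φ x₀ - Φ x‖ := ContinuousMap.norm_coe_le_norm _ _
        _ = dist (Φ x) (Φ x₀) := by rw [dist_eq_norm, ← norm_neg]; congr 1; abel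
    calc dist (C α x₀) (C α x) = ‖(∫ z, F α z * G x₀ z ∂μ) - ∫ z, F α z * G x z ∂μ‖ :=
          dist_eq_norm _ _
      _ = ‖∫ z, (F α z * G x₀ z - F α z * G x z) ∂μ‖ := by
          rw [integral_sub (f := fun z => F α z * G x₀ z) (g := fun z => F α z * G x z)
            (cint (((hFp α).2.2.1).mul (G x₀).continuous))
            (cint (((hFp α).2.2.1).mul (G x).continuous))]
      _ ≤ dist (Φ x) (Φ x₀) * (μ Set.univ).toReal :=
          norm_integral_le_of_norm_le_const (Eventually.of_forall key)
      _ < δ := by simpa using hx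
  -- uniform convergence of the smoothed functions
  have hCu : TendstoUniformly C c l := by
    have := (heq.tendsto_uniformFun_iff_pi l c).mpr hpt
    exact UniformFun.tendsto_iff_tendstoUniformly.mp this
  -- translation identity
  have htrans : ∀ (ψ : H → ℂ), ∀ x : H,
      (∫ z, ψ z * G x z ∂μ) = ∫ y, ψ (x * y) * ((u y : ℝ) : ℂ) ∂μ := by
    intro ψ x
    calc (∫ z, ψ z * G x z ∂μ)
        = ∫ y, ψ (x * y) * ((u (x⁻¹ * (x * y)) : ℝ) : ℂ) ∂μ :=
          (integral_mul_left_eq_self (fun z => ψ z * ((u (x⁻¹ * z) : ℝ) : ℂ)) x).symm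
      _ = ∫ y, ψ (x * y) * ((u y : ℝ) : ℂ) ∂μ := by simp only [inv_mul_cancel_left]
  have hG1 : ∀ y, G 1 y = ((u y : ℝ) : ℂ) := by
    intro y; rw [hG_apply]; norm_num
  -- the J formula
  have hJformula : ∀ (ψ : H → ℂ), Continuous ψ →
      ∫ y, (2 - 2 * (ψ y).re) * u y ∂μ = 2 - 2 * (∫ y, ψ y * G 1 y ∂μ).re := by
    intro ψ hψ
    have h1 : (∫ y, ψ y * G 1 y ∂μ) = ∫ y, ψ y * ((u y : ℝ) : ℂ) ∂μ := by
      congr 1; ext y; rw [hG1]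
    have h3 : ∫ y, (ψ y).re * u y ∂μ = (∫ y, ψ y * ((u y : ℝ) : ℂ) ∂μ).re := by
      have := integral_re (μ := μ) (f := fun y => ψ y * ((u y : ℝ) : ℂ))
        (cint (hψ.mul (Complex.continuous_ofReal.comp huc)))
      simp only [RCLike.re_to_complex] at this
      rw [← this]
      congr 1; ext y; simp [Complex.mul_re]
    have iA : Integrable (fun y => 2 * u y) μ := cintR (continuous_const.mul huc)
    have iB : Integrable (fun y => 2 * ((ψ y).re * u y)) μ :=
      cintR (continuous_const.mul ((Complex.continuous_re.comp hψ).mul huc))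
    rw [h1, ← h3,
      show (fun y => (2 - 2 * (ψ y).re) * u y) =
        fun y => 2 * u y - 2 * ((ψ y).re * u y) by ext y; ring,
      integral_sub iA iB]
    have e2 : ∫ y, 2 * u y ∂μ = 2 := by rw [integral_const_mul, hu1, mul_one]
    have e3 : ∫ y, 2 * ((ψ y).re * u y) ∂μ = 2 * ∫ y, (ψ y).re * u y ∂μ :=
      integral_const_mul _ _
    rw [e2, e3]
  -- J for f is small
  have hJf : ∫ y, (2 - 2 * (f y).re) * u y ∂μ ≤ η := by
    calc ∫ y, (2 - 2 * (f y).re) * u y ∂μ ≤ ∫ y, η * u y ∂μ := by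
          apply integral_mono
          · exact cintR ((continuous_const.sub
              (continuous_const.mul (Complex.continuous_re.comp hfc))).mul huc)
          · exact cintR (continuous_const.mul huc)
          · intro y
            rcases eq_or_ne (u y) 0 with h | h
            · simp [h]
            · exact mul_le_mul_of_nonneg_right (le_of_lt (huV y h)) (hu0 y)
      _ = η := by rw [integral_const_mul, hu1, mul_one]
  -- J for F α converges to J for f
  have hJconv : Tendsto (fun α => ∫ y, (2 - 2 * (F α y).re) * u y ∂μ) l
      (𝓝 (∫ y, (2 - 2 * (f y).re) * u y ∂μ)) := by
    have e1 : (fun α => ∫ y, (2 - 2 * (F α y).re) * u y ∂μ) =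
        fun α => 2 - 2 * (∫ y, F α y * G 1 y ∂μ).re :=
      funext fun α => hJformula (F α) (hFp α).2.2.1
    rw [e1, hJformula f hfc]
    exact tendsto_const_nhds.sub
      (((Complex.continuous_re.tendsto _).comp (hweak (G 1))).const_mul 2)
  have hJev : ∀ᶠ α in l, ∫ y, (2 - 2 * (F α y).re) * u y ∂μ < 2 * η :=
    hJconv.eventually_lt_const (by linarith)
  -- est bound for F α
  have hestF : ∀ α x, ‖F α x - C α x‖ ≤
      Real.sqrt η + (∫ y, (2 - 2 * (F α y).re) * u y ∂μ) / Real.sqrt η := by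
    intro α x
    have h1 : C α x = ∫ y, F α (x * y) * ((u y : ℝ) : ℂ) ∂μ := htrans (F α) x
    rw [h1]
    calc ‖F α x - ∫ y, F α (x * y) * ((u y : ℝ) : ℂ) ∂μ‖
        ≤ ∫ y, Real.sqrt (2 - 2 * (F α y).re) * u y ∂μ :=
          est μ u huc (F α) (hFp α).2.2.1 (hFp α).2.2.2 hu0 hu1 x
      _ ≤ ∫ y, (Real.sqrt η * u y + (Real.sqrt η)⁻¹ * ((2 - 2 * (F α y).re) * u y)) ∂μ := by
          apply integral_mono
          · exact cintR ((Real.continuous_sqrt.comp (continuous_const.sub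
              (continuous_const.mul (Complex.continuous_re.comp (hFp α).2.2.1)))).mul huc)
          · exact cintR ((continuous_const.mul huc).add (continuous_const.mul
              ((continuous_const.sub (continuous_const.mul
                (Complex.continuous_re.comp (hFp α).2.2.1))).mul huc)))
          · intro y
            have ht : 0 ≤ 2 - 2 * (F α y).re := by
              have h2 : |(F α y).re| ≤ 1 := by
                refine (Complex.abs_re_le_norm (F α y)).trans ?_
                exact (hFp α).2.1 y
              have h4 := (abs_le.mp h2).2
              linarith
            calc Real.sqrt (2 - 2 * (F α y).re) * u y
                ≤ (Real.sqrt η + (2 - 2 * (F α y).re) / Real.sqrt η) * u y :=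
                  mul_le_mul_of_nonneg_right (sqrt_aux ht hη) (hu0 y)
              _ = Real.sqrt η * u y + (Real.sqrt η)⁻¹ * ((2 - 2 * (F α y).re) * u y) := by
                  ring
      _ = Real.sqrt η + (∫ y, (2 - 2 * (F α y).re) * u y ∂μ) / Real.sqrt η := by
          have iA : Integrable (fun y => Real.sqrt η * u y) μ :=
            cintR (continuous_const.mul huc)
          have iB : Integrable
              (fun y => (Real.sqrt η)⁻¹ * ((2 - 2 * (F α y).re) * u y)) μ :=
            cintR (continuous_const.mul ((continuous_const.sub (continuous_const.mul
              (Complex.continuous_re.comp (hFp α).2.2.1))).mul huc))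
          have e2 : ∫ y, Real.sqrt η * u y ∂μ = Real.sqrt η := by
            rw [integral_const_mul, hu1, mul_one]
          have e3 : ∫ y, (Real.sqrt η)⁻¹ * ((2 - 2 * (F α y).re) * u y) ∂μ =
              (Real.sqrt η)⁻¹ * ∫ y, (2 - 2 * (F α y).re) * u y ∂μ :=
            integral_const_mul _ _
          rw [integral_add iA iB, e2, e3, inv_mul_eq_div]
  -- est bound for f
  have hestf : ∀ x, ‖f x - c x‖ ≤ Real.sqrt η := by
    intro x
    have h1 : c x = ∫ y, f (x * y) * ((u y : ℝ) : ℂ) ∂μ := htrans f x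
    rw [h1]
    calc ‖f x - ∫ y, f (x * y) * ((u y : ℝ) : ℂ) ∂μ‖
        ≤ ∫ y, Real.sqrt (2 - 2 * (f y).re) * u y ∂μ := est μ u huc f hfc hfd hu0 hu1 x
      _ ≤ ∫ y, Real.sqrt η * u y ∂μ := by
          apply integral_mono
          · exact cintR ((Real.continuous_sqrt.comp (continuous_const.sub
              (continuous_const.mul (Complex.continuous_re.comp hfc)))).mul huc)
          · exact cintR (continuous_const.mul huc)
          · intro y
            rcases eq_or_ne (u y) 0 with h | h
            · simp [h]
            · exact mul_le_mul_of_nonneg_right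
                (Real.sqrt_le_sqrt (le_of_lt (huV y h))) (hu0 y)
      _ = Real.sqrt η := by rw [integral_const_mul, hu1, mul_one]
  -- conclusion
  have hCev : ∀ᶠ α in l, ∀ x, dist (c x) (C α x) < Real.sqrt η := by
    rw [Metric.tendstoUniformly_iff] at hCu
    exact hCu _ (Real.sqrt_pos.2 hη)
  filter_upwards [hJev, hCev] with α hJα hCα x
  have htri : dist (f x) (F α x) ≤
      ‖f x - c x‖ + dist (c x) (C α x) + ‖F α x - C α x‖ := by
    rw [dist_eq_norm, dist_eq_norm]
    calc ‖f x - F α x‖ = ‖(f x - c x) + ((c x - C α x) + (C α x - F α x))‖ := by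
          congr 1; ring
      _ ≤ ‖f x - c x‖ + (‖c x - C α x‖ + ‖C α x - F α x‖) :=
          (norm_add_le _ _).trans (add_le_add_right (norm_add_le _ _) _)
      _ = ‖f x - c x‖ + ‖c x - C α x‖ + ‖F α x - C α x‖ := by
          rw [norm_sub_rev (C α x)]; ring
  have hdiv : (∫ y, (2 - 2 * (F α y).re) * u y ∂μ) / Real.sqrt η < (ε / 3) := by
    rw [div_lt_iff₀ (Real.sqrt_pos.2 hη), hsη]
    calc (∫ y, (2 - 2 * (F α y).re) * u y ∂μ) < 2 * η := hJα
      _ = ε / 3 * (ε / 6) := by rw [hη_def]; ring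
  have h1 := hestf x
  have h2 := hCα x
  have h3 := (hestF α x).trans_lt
    (add_lt_add_right hdiv (Real.sqrt η))
  rw [hsη] at h1 h2 h3
  linarith [htri]
end

section
/- Let (L;ψ) be a topological dynamical system with L a Stonean (extremally disconnected compact Hausdorff) space. Then the fixed factor L_fix (the Gelfand space of the fixed-point subalgebra fix(T_ψ) ⊂ C(L)) is also Stonean, and the canonical factor map q_fix : L → L_fix is open. -/
/-- Let `(L;ψ)` be a topological dynamical system (an action of a discrete group `G` by
homeomorphisms) on a Stonean (extremally disconnected compact Hausdorff) space `L`, and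
let `q : L → L_fix` be the canonical factor map onto the fixed factor, i.e. a continuous
surjection onto a compact Hausdorff space such that the pullbacks `f ∘ q` of continuous
functions on `L_fix` are exactly the `ψ`-invariant continuous functions on `L` (so that
`L_fix` is the Gelfand space of the fixed algebra `fix(T_ψ) ⊆ C(L)`). Then `L_fix` is
also Stonean, and `q` is an open map. -/
theorem fixedFactor_stonean_and_open
    {L : Type*} [TopologicalSpace L] [CompactSpace L] [T2Space L]
    [ExtremallyDisconnected L]
    {G : Type*} [Group G] (ψ : G → L ≃ₜ L)
    (hψ : ∀ s t : G, ψ (s * t) = (ψ t).trans (ψ s))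
    {Lfix : Type*} [TopologicalSpace Lfix] [CompactSpace Lfix] [T2Space Lfix]
    (q : L → Lfix) (hq_cont : Continuous q) (hq_surj : Function.Surjective q)
    (hfix : Set.range (fun f : C(Lfix, ℂ) => (f : Lfix → ℂ) ∘ q) =
      {g : L → ℂ | Continuous g ∧ ∀ t : G, g ∘ ⇑(ψ t) = g}) :
    ExtremallyDisconnected Lfix ∧ IsOpenMap q := by
  -- composition law pointwise
  have hcomp : ∀ (s t : G) (x : L), ψ (s * t) x = ψ s (ψ t x) := by
    intro s t x; rw [hψ s t]; rfl
  have hone : ∀ x : L, ψ 1 x = x := by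
    intro x
    have h := hcomp 1 1 x
    rw [one_mul] at h
    exact ((ψ 1).injective h.symm)
  -- every pullback is invariant
  have hinv_fun : ∀ (f : C(Lfix, ℂ)) (t : G), ((f : Lfix → ℂ) ∘ q) ∘ ⇑(ψ t) = (f : Lfix → ℂ) ∘ q := by
    intro f t
    have : ((f : Lfix → ℂ) ∘ q) ∈ {g : L → ℂ | Continuous g ∧ ∀ t : G, g ∘ ⇑(ψ t) = g} := by
      rw [← hfix]; exact ⟨f, rfl⟩
    exact this.2 t
  -- q is invariant: q (ψ t x) = q x
  have hinv : ∀ (t : G) (x : L), q (ψ t x) = q x := by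
    intro t x
    by_contra hne
    obtain ⟨f, hf0, hf1, -⟩ := exists_continuous_zero_one_of_isClosed
      (isClosed_singleton (x := q (ψ t x))) (isClosed_singleton (x := q x))
      (by simpa [Set.disjoint_singleton] using hne)
    set F : C(Lfix, ℂ) := ⟨fun y => (f y : ℂ), by continuity⟩ with hF
    have := congrFun (hinv_fun F t) x
    simp only [Function.comp_apply] at this
    have h0 : F (q (ψ t x)) = 0 := by simp [hF, hf0 rfl]
    have h1 : F (q x) = 1 := by simp [hF, hf1 rfl]
    rw [h0, h1] at this
    exact zero_ne_one this
  -- key: image of a clopen set is open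
  have key : ∀ U : Set L, IsClopen U → IsOpen (q '' U) := by
    intro U hU
    set V : Set L := ⋃ t : G, ⇑(ψ t) '' U with hV
    have hVopen : IsOpen V := isOpen_iUnion fun t => (ψ t).isOpenMap U hU.2
    have hUV : U ⊆ V := by
      intro x hx
      exact Set.mem_iUnion.2 ⟨1, ⟨x, hx, hone x⟩⟩
    -- V is invariant
    have hVinv : ∀ t : G, ⇑(ψ t) ⁻¹' V = V := by
      intro t
      ext x
      simp only [Set.mem_preimage, hV, Set.mem_iUnion]
      constructor
      · rintro ⟨s, u, hu, hux⟩
        refine ⟨t⁻¹ * s, u, hu, ?_⟩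
        rw [hcomp t⁻¹ s u, hux, ← hcomp, inv_mul_cancel, hone]
      · rintro ⟨s, u, hu, hux⟩
        exact ⟨t * s, u, hu, by rw [hcomp t s u, hux]⟩
    set W : Set L := closure V with hW
    have hWclopen : IsClopen W := ⟨isClosed_closure, ExtremallyDisconnected.open_closure V hVopen⟩
    have hWinv : ∀ t : G, ⇑(ψ t) ⁻¹' W = W := by
      intro t
      rw [hW, (ψ t).preimage_closure, hVinv t]
    -- indicator of W
    set g : L → ℂ := W.indicator (fun _ => (1 : ℂ)) with hg
    have hgcont : Continuous g :=
      continuous_indicator (by simp [hWclopen.frontier_eq]) continuous_const.continuousOn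
    have hginv : ∀ t : G, g ∘ ⇑(ψ t) = g := by
      intro t
      funext x
      simp only [Function.comp_apply, hg]
      by_cases hx : x ∈ W
      · have h1 : (ψ t) x ∈ W := by rw [← hWinv t] at hx; exact hx
        rw [Set.indicator_of_mem h1, Set.indicator_of_mem hx]
      · have h1 : (ψ t) x ∉ W := by rw [← hWinv t] at hx; exact hx
        rw [Set.indicator_of_notMem h1, Set.indicator_of_notMem hx]
    obtain ⟨f, hf⟩ : ∃ f : C(Lfix, ℂ), (f : Lfix → ℂ) ∘ q = g := by
      have : g ∈ Set.range (fun f : C(Lfix, ℂ) => (f : Lfix → ℂ) ∘ q) := by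
        rw [hfix]; exact ⟨hgcont, hginv⟩
      exact this
    -- q '' U = f ⁻¹' (ball 1 1)
    have hqUV : q '' V = q '' U := by
      apply Set.Subset.antisymm
      · rintro _ ⟨x, hx, rfl⟩
        obtain ⟨t, u, hu, rfl⟩ := Set.mem_iUnion.1 hx
        exact ⟨u, hu, (hinv t u).symm⟩
      · exact Set.image_mono (f := q) hUV
    have hclosed : IsClosed (q '' U) := (hU.1.isCompact.image hq_cont).isClosed
    have himg : q '' U = (f : Lfix → ℂ) ⁻¹' (Metric.ball 1 1) := by
      apply Set.Subset.antisymm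
      · rintro _ ⟨x, hx, rfl⟩
        have hxW : x ∈ W := subset_closure (hUV hx)
        have : f (q x) = 1 := by
          have h := congrFun hf x
          simp only [Function.comp_apply, hg] at h
          rw [h, Set.indicator_of_mem hxW]
        simp [this]
      · intro y hy
        obtain ⟨x, rfl⟩ := hq_surj y
        have hgx : g x = f (q x) := (congrFun hf x).symm
        have hxW : x ∈ W := by
          by_contra hxW
          have : f (q x) = 0 := by rw [← hgx, hg, Set.indicator_of_notMem hxW]
          rw [Set.mem_preimage, this] at hy
          simp at hy
        -- q x ∈ q '' closure V ⊆ closure (q '' V) = closure (q '' U) = q '' U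
        have : q x ∈ closure (q '' V) :=
          (image_closure_subset_closure_image hq_cont) ⟨x, hxW, rfl⟩
        rw [hqUV, hclosed.closure_eq] at this
        exact this
    rw [himg]
    exact Metric.isOpen_ball.preimage f.continuous
  -- q is an open map
  have hopen : IsOpenMap q := by
    intro O hO
    have : q '' O = ⋃ U : {U : Set L // IsClopen U ∧ U ⊆ O}, q '' U.1 := by
      apply Set.Subset.antisymm
      · rintro _ ⟨x, hx, rfl⟩
        obtain ⟨U, hU, hxU, hUO⟩ := isTopologicalBasis_isClopen.mem_nhds_iff.1
          (hO.mem_nhds hx)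
        exact Set.mem_iUnion.2 ⟨⟨U, hU, hUO⟩, ⟨x, hxU, rfl⟩⟩
      · exact Set.iUnion_subset fun U => Set.image_mono (f := q) U.2.2
    rw [this]
    exact isOpen_iUnion fun U => key U.1 U.2.1
  refine ⟨⟨fun O hO => ?_⟩, hopen⟩
  -- extremal disconnectedness of Lfix
  have hP : IsOpen (q ⁻¹' O) := hO.preimage hq_cont
  have hclP : IsOpen (closure (q ⁻¹' O)) := ExtremallyDisconnected.open_closure _ hP
  have : closure O = q '' closure (q ⁻¹' O) := by
    apply Set.Subset.antisymm
    · intro y hy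
      obtain ⟨x, rfl⟩ := hq_surj y
      refine ⟨x, ?_, rfl⟩
      rw [mem_closure_iff]
      intro N hN hxN
      rcases mem_closure_iff.1 hy (q '' N) (hopen N hN) ⟨x, hxN, rfl⟩ with ⟨z, hz1, hz2⟩
      obtain ⟨w, hwN, rfl⟩ := hz1
      exact ⟨w, hwN, hz2⟩
    · calc q '' closure (q ⁻¹' O) ⊆ closure (q '' (q ⁻¹' O)) :=
            image_closure_subset_closure_image hq_cont
        _ ⊆ closure O := closure_mono (Set.image_preimage_subset q O)
  rw [this]
  exact hopen _ hclP
end
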